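/- arXiv:0807.4700 — 8 statements merged into one kernel-verified Lean document; each statement's English description precedes it below -/
import Mathlib

section
/- Let d ≥ 1 be an integer, 1 < α ≤ 2 and β ≥ d. Then every measure μ ∈ M_{α,β} is diffuse, i.e. μ({x}) = 0 for every x ∈ ℝ^d. -/
open MeasureTheory Filter Set
open scoped ENNReal Topology

noncomputable section

/-- The space `M_{α,β}` of finite signed measures `μ` on `ℝ^d` such that
`∫_{ℝ^d} |μ(B(x,r))|^α dx ≤ C (r^p ∧ r^q)` for all `r > 0`, for some finite constant `C`
and exponents `0 < p < β < q`. -/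
def MemM (d : ℕ) (α β : ℝ)
    (μ : MeasureTheory.SignedMeasure (EuclideanSpace ℝ (Fin d))) : Prop :=
  ∃ C p q : ℝ, 0 < p ∧ p < β ∧ β < q ∧
    ∀ r : ℝ, 0 < r →
      (∫ x : EuclideanSpace ℝ (Fin d), |μ (Metric.ball x r)| ^ α) ≤ C * min (r ^ p) (r ^ q)

namespace Statement4Aux

variable {X : Type*} [MeasurableSpace X]

lemma signed_apply_eq (μ : MeasureTheory.SignedMeasure X) {s : Set X} (hs : MeasurableSet s) :
    μ s = (μ.toJordanDecomposition.posPart s).toReal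
        - (μ.toJordanDecomposition.negPart s).toReal := by
  conv_lhs => rw [← μ.toSignedMeasure_toJordanDecomposition]
  rw [JordanDecomposition.toSignedMeasure, VectorMeasure.sub_apply,
    Measure.toSignedMeasure_apply_measurable hs, Measure.toSignedMeasure_apply_measurable hs]
  rfl

lemma abs_apply_le_tv (μ : MeasureTheory.SignedMeasure X) {s : Set X} (hs : MeasurableSet s) :
    |μ s| ≤ (μ.totalVariation s).toReal := by
  rw [signed_apply_eq μ hs, SignedMeasure.totalVariation, Measure.add_apply,
    ENNReal.toReal_add (measure_ne_top _ _) (measure_ne_top _ _)]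
  have h1 : (0:ℝ) ≤ (μ.toJordanDecomposition.posPart s).toReal := ENNReal.toReal_nonneg
  have h2 : (0:ℝ) ≤ (μ.toJordanDecomposition.negPart s).toReal := ENNReal.toReal_nonneg
  rw [abs_le]; constructor <;> linarith

lemma measurable_meas_ball {d : ℕ} (ρ : Measure (EuclideanSpace ℝ (Fin d))) [SFinite ρ]
    (r : ℝ) : Measurable fun x : EuclideanSpace ℝ (Fin d) => ρ (Metric.ball x r) := by
  have hS : MeasurableSet {p : EuclideanSpace ℝ (Fin d) × EuclideanSpace ℝ (Fin d) |
      dist p.2 p.1 < r} :=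
    (isOpen_lt (continuous_snd.dist continuous_fst) continuous_const).measurableSet
  have h := measurable_measure_prodMk_left (ν := ρ) hS
  have heq : ∀ x : EuclideanSpace ℝ (Fin d), Metric.ball x r
      = Prod.mk x ⁻¹' {p : EuclideanSpace ℝ (Fin d) × EuclideanSpace ℝ (Fin d) |
          dist p.2 p.1 < r} := by
    intro x; ext y; simp [Metric.mem_ball]
  simp_rw [heq]
  exact h

lemma lintegral_meas_ball_ne_top {d : ℕ} (ρ : Measure (EuclideanSpace ℝ (Fin d)))
    [IsFiniteMeasure ρ] (r : ℝ) :
    ∫⁻ x, ρ (Metric.ball x r) ≠ ∞ := by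
  have hS : MeasurableSet {p : EuclideanSpace ℝ (Fin d) × EuclideanSpace ℝ (Fin d) |
      dist p.2 p.1 < r} :=
    (isOpen_lt (continuous_snd.dist continuous_fst) continuous_const).measurableSet
  have key : ∫⁻ x, ρ (Metric.ball x r)
      = ∫⁻ y, volume (Metric.ball y r) ∂ρ := by
    calc ∫⁻ x, ρ (Metric.ball x r)
        = ∫⁻ x, ∫⁻ y, ({p : EuclideanSpace ℝ (Fin d) × EuclideanSpace ℝ (Fin d) |
            dist p.2 p.1 < r}).indicator 1 (x, y) ∂ρ := by
          refine lintegral_congr fun x => ?_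
          have : (fun y => ({p : EuclideanSpace ℝ (Fin d) × EuclideanSpace ℝ (Fin d) |
              dist p.2 p.1 < r}).indicator (1 : (EuclideanSpace ℝ (Fin d) × EuclideanSpace ℝ (Fin d)) → ℝ≥0∞) (x, y))
              = fun y => (Metric.ball x r).indicator (1 : EuclideanSpace ℝ (Fin d) → ℝ≥0∞) y := by
            funext y
            by_cases hxy : dist y x < r <;>
              simp [Set.indicator_apply, Metric.mem_ball, hxy]
          rw [this, lintegral_indicator_one measurableSet_ball]
      _ = ∫⁻ y, ∫⁻ x, ({p : EuclideanSpace ℝ (Fin d) × EuclideanSpace ℝ (Fin d) |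
            dist p.2 p.1 < r}).indicator 1 (x, y) ∂volume ∂ρ :=
          lintegral_lintegral_swap ((measurable_const.indicator hS).aemeasurable)
      _ = ∫⁻ y, volume (Metric.ball y r) ∂ρ := by
          refine lintegral_congr fun y => ?_
          have : (fun x => ({p : EuclideanSpace ℝ (Fin d) × EuclideanSpace ℝ (Fin d) |
              dist p.2 p.1 < r}).indicator (1 : (EuclideanSpace ℝ (Fin d) × EuclideanSpace ℝ (Fin d)) → ℝ≥0∞) (x, y))
              = fun x => (Metric.ball y r).indicator (1 : EuclideanSpace ℝ (Fin d) → ℝ≥0∞) x := by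
            funext x
            by_cases hxy : dist y x < r <;>
              simp [Set.indicator_apply, Metric.mem_ball, dist_comm, hxy]
          rw [this, lintegral_indicator_one measurableSet_ball]
  rw [key]
  have : ∫⁻ y, volume (Metric.ball y r) ∂ρ
      = ∫⁻ _, volume (Metric.ball (0 : EuclideanSpace ℝ (Fin d)) r) ∂ρ :=
    lintegral_congr fun y => by rw [Measure.addHaar_ball_center]
  rw [this, lintegral_const]
  exact ENNReal.mul_ne_top (measure_ball_lt_top).ne (measure_ne_top _ _)

end Statement4Aux

open Statement4Aux

/-- if `β ≥ d`, every `μ ∈ M_{α,β}` is diffuse: `μ({x}) = 0` for all `x`. -/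
theorem statement4 (d : ℕ) (hd : 1 ≤ d) (α β : ℝ) (hα1 : 1 < α) (hα2 : α ≤ 2)
    (hβ : (d : ℝ) ≤ β)
    (μ : MeasureTheory.SignedMeasure (EuclideanSpace ℝ (Fin d))) (hμ : MemM d α β μ) :
    ∀ x : EuclideanSpace ℝ (Fin d), μ {x} = 0 := by
  intro x₀
  by_contra hc0
  obtain ⟨C, p, q, hp0, hpβ, hβq, hC⟩ := hμ
  have hα0 : (0:ℝ) < α := by linarith
  have hqd : (d:ℝ) < q := lt_of_le_of_lt hβ hβq
  haveI : Nonempty (Fin d) := ⟨⟨0, hd⟩⟩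
  haveI hnt : Nontrivial (EuclideanSpace ℝ (Fin d)) := by
    refine ⟨0, EuclideanSpace.single ⟨0, hd⟩ 1, fun h => ?_⟩
    have := congrArg (fun v : EuclideanSpace ℝ (Fin d) => v ⟨0, hd⟩) h
    simp [EuclideanSpace.single_apply] at this
  set ν := μ.totalVariation with hν
  haveI hνfin : IsFiniteMeasure ν := by
    rw [hν, SignedMeasure.totalVariation]; infer_instance
  set c := |μ {x₀}| with hc
  have hcpos : 0 < c := abs_pos.2 hc0
  -- choice of r₀ making the tail small
  obtain ⟨r₀, hr₀pos, hr₀⟩ : ∃ r₀ : ℝ, 0 < r₀ ∧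
      ν (Metric.ball x₀ (2*r₀) \ {x₀}) < ENNReal.ofReal (c/2) := by
    set s : ℕ → Set (EuclideanSpace ℝ (Fin d)) :=
      fun n => Metric.ball x₀ (1/((n:ℝ)+1)) \ {x₀} with hs
    have hmono : Antitone s := by
      intro m n hmn
      refine diff_subset_diff_left (Metric.ball_subset_ball ?_)
      have : ((m:ℝ)+1) ≤ ((n:ℝ)+1) := by exact_mod_cast Nat.succ_le_succ hmn
      exact one_div_le_one_div_of_le (by positivity) this
    have hiInter : ⋂ n, s n = ∅ := by
      ext y
      simp only [mem_iInter, hs, mem_diff, Metric.mem_ball, mem_singleton_iff,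
        mem_empty_iff_false, iff_false, not_forall]
      by_contra hcon
      push_neg at hcon
      have hyne : y ≠ x₀ := (hcon 0).2
      have hdist : 0 < dist y x₀ := dist_pos.2 hyne
      obtain ⟨n, hn⟩ := exists_nat_one_div_lt hdist
      exact absurd (hcon n).1 (not_lt.2 hn.le)
    have htend := tendsto_measure_iInter_atTop (μ := ν)
      (fun n => (measurableSet_ball.diff
        (measurableSet_singleton _)).nullMeasurableSet)
      hmono ⟨0, measure_ne_top _ _⟩
    rw [hiInter, measure_empty] at htend
    have hpos : (0:ℝ≥0∞) < ENNReal.ofReal (c/2) := ENNReal.ofReal_pos.2 (by linarith)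
    obtain ⟨n, hn⟩ := (htend.eventually_lt_const hpos).exists
    refine ⟨1/(2*((n:ℝ)+1)), by positivity, ?_⟩
    have h2r : (2:ℝ) * (1/(2*((n:ℝ)+1))) = 1/((n:ℝ)+1) := by
      field_simp
    rw [h2r]
    exact hn
  set V := (volume (Metric.ball (0 : EuclideanSpace ℝ (Fin d)) 1)).toReal with hV
  have hVpos : 0 < V := ENNReal.toReal_pos
    (Metric.measure_ball_pos volume _ one_pos).ne' measure_ball_lt_top.ne
  set K := (c/2)^α * V with hK
  have hKpos : 0 < K := mul_pos (Real.rpow_pos_of_pos (by linarith) α) hVpos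
  -- the key estimate
  have hkey : ∀ r : ℝ, 0 < r → r ≤ r₀ →
      K * r ^ (d:ℕ) ≤ C * min (r ^ p) (r ^ q) := by
    intro r hr hrr₀
    set P := μ.toJordanDecomposition.posPart with hP
    set N := μ.toJordanDecomposition.negPart with hN
    set f : EuclideanSpace ℝ (Fin d) → ℝ := fun x => |μ (Metric.ball x r)| ^ α with hf
    have hfeq : f = fun x => |(P (Metric.ball x r)).toReal
        - (N (Metric.ball x r)).toReal| ^ α := by
      funext x
      show |μ (Metric.ball x r)| ^ α = _
      rw [signed_apply_eq μ measurableSet_ball]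
    have hmf : Measurable f := by
      rw [hfeq]
      exact (Real.continuous_rpow_const hα0.le).measurable.comp
        (((measurable_meas_ball P r).ennreal_toReal.sub
          (measurable_meas_ball N r).ennreal_toReal).abs)
    have hfnonneg : ∀ x, 0 ≤ f x := fun x => Real.rpow_nonneg (abs_nonneg _) α
    -- pointwise lower bound on the ball
    have hlow_pt : ∀ x ∈ Metric.ball x₀ r, (c/2)^α ≤ f x := by
      intro x hx
      have hx' : dist x x₀ < r := Metric.mem_ball.1 hx
      have hx₀mem : x₀ ∈ Metric.ball x r := by
        rw [Metric.mem_ball, dist_comm]; exact hx'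
      have hsub : Metric.ball x r ⊆ Metric.ball x₀ (2*r) :=
        Metric.ball_subset_ball' (by linarith)
      have hsplit : μ (Metric.ball x r)
          = μ {x₀} + μ (Metric.ball x r \ {x₀}) :=
        (VectorMeasure.of_add_of_diff (v := μ) (measurableSet_singleton x₀)
          measurableSet_ball (singleton_subset_iff.2 hx₀mem)).symm
      have htail_le : |μ (Metric.ball x r \ {x₀})| ≤ c/2 := by
        have h1 := abs_apply_le_tv μ (s := Metric.ball x r \ {x₀})
          (measurableSet_ball.diff (measurableSet_singleton x₀))
        have h2 : ν (Metric.ball x r \ {x₀}) ≤ ν (Metric.ball x₀ (2*r₀) \ {x₀}) := by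
          refine measure_mono (diff_subset_diff_left (hsub.trans ?_))
          exact Metric.ball_subset_ball (by linarith)
        have h3 : (ν (Metric.ball x r \ {x₀})).toReal
            < (ENNReal.ofReal (c/2)).toReal := by
          refine (ENNReal.toReal_lt_toReal (measure_ne_top _ _) ENNReal.ofReal_ne_top).2 ?_
          exact lt_of_le_of_lt h2 hr₀
        rw [ENNReal.toReal_ofReal (by linarith)] at h3
        exact (h1.trans h3.le)
      have habs : c/2 ≤ |μ (Metric.ball x r)| := by
        have heq : μ (Metric.ball x r) - μ (Metric.ball x r \ {x₀}) = μ {x₀} := by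
          rw [hsplit]; ring
        have h4 : c ≤ |μ (Metric.ball x r)| + |μ (Metric.ball x r \ {x₀})| := by
          rw [hc, ← heq]
          exact abs_sub _ _
        linarith [htail_le]
      show (c / 2) ^ α ≤ |μ (Metric.ball x r)| ^ α
      exact Real.rpow_le_rpow (by linarith) habs hα0.le
    -- finiteness of the lintegral
    set M := (ν Set.univ).toReal with hM
    have hub : ∀ x, ENNReal.ofReal (f x)
        ≤ ENNReal.ofReal (M ^ (α - 1)) * ν (Metric.ball x r) := by
      intro x
      have h1 : |μ (Metric.ball x r)| ≤ (ν (Metric.ball x r)).toReal :=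
        abs_apply_le_tv μ measurableSet_ball
      have h2 : (ν (Metric.ball x r)).toReal ≤ M :=
        ENNReal.toReal_mono (measure_ne_top _ _) (measure_mono (subset_univ _))
      have hfle : f x ≤ M ^ (α - 1) * (ν (Metric.ball x r)).toReal := by
        show |μ (Metric.ball x r)| ^ α ≤ M ^ (α - 1) * (ν (Metric.ball x r)).toReal
        rcases eq_or_lt_of_le (abs_nonneg (μ (Metric.ball x r))) with h0 | h0
        · rw [← h0, Real.zero_rpow hα0.ne']
          exact mul_nonneg (Real.rpow_nonneg ENNReal.toReal_nonneg _) ENNReal.toReal_nonneg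
        · have hMpos : 0 ≤ M := le_trans (le_trans h0.le h1) h2
          have hsplit : |μ (Metric.ball x r)| ^ α
              = |μ (Metric.ball x r)| ^ (α - 1) * |μ (Metric.ball x r)| := by
            rw [show α = (α - 1) + 1 by ring, Real.rpow_add h0, Real.rpow_one]
            ring_nf
          rw [hsplit]
          refine mul_le_mul ?_ h1 h0.le (Real.rpow_nonneg hMpos _)
          exact Real.rpow_le_rpow (abs_nonneg _) (h1.trans h2) (by linarith)
      calc ENNReal.ofReal (f x)
          ≤ ENNReal.ofReal (M ^ (α - 1) * (ν (Metric.ball x r)).toReal) :=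
            ENNReal.ofReal_le_ofReal hfle
        _ = ENNReal.ofReal (M ^ (α - 1)) * ENNReal.ofReal ((ν (Metric.ball x r)).toReal) :=
            ENNReal.ofReal_mul (Real.rpow_nonneg
              (le_trans ENNReal.toReal_nonneg le_rfl : (0:ℝ) ≤ M) _)
        _ = ENNReal.ofReal (M ^ (α - 1)) * ν (Metric.ball x r) := by
            rw [ENNReal.ofReal_toReal (measure_ne_top _ _)]
    set L := ∫⁻ x, ENNReal.ofReal (f x) with hL
    have hLne : L ≠ ∞ := by
      have h1 : L ≤ ENNReal.ofReal (M ^ (α - 1)) * ∫⁻ x, ν (Metric.ball x r) := by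
        rw [hL, ← lintegral_const_mul _ (measurable_meas_ball ν r)]
        exact lintegral_mono hub
      exact ne_top_of_le_ne_top
        (ENNReal.mul_ne_top ENNReal.ofReal_ne_top (lintegral_meas_ball_ne_top ν r)) h1
    have hint : (∫ x, f x) = L.toReal := by
      rw [hL]
      exact integral_eq_lintegral_of_nonneg_ae (Filter.Eventually.of_forall hfnonneg)
        hmf.aestronglyMeasurable
    -- lower bound for L
    have hlowL : ENNReal.ofReal ((c/2)^α) * volume (Metric.ball x₀ r) ≤ L := by
      calc ENNReal.ofReal ((c/2)^α) * volume (Metric.ball x₀ r)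
          = ∫⁻ _ in Metric.ball x₀ r, ENNReal.ofReal ((c/2)^α) :=
            (setLIntegral_const _ _).symm
        _ ≤ ∫⁻ x in Metric.ball x₀ r, ENNReal.ofReal (f x) :=
            setLIntegral_mono' measurableSet_ball
              (fun x hx => ENNReal.ofReal_le_ofReal (hlow_pt x hx))
        _ ≤ L := setLIntegral_le_lintegral _ _
    have hvol : volume (Metric.ball x₀ r)
        = ENNReal.ofReal (r ^ (d:ℕ)) * volume (Metric.ball (0:EuclideanSpace ℝ (Fin d)) 1) := by
      rw [Measure.addHaar_ball volume x₀ hr.le, finrank_euclideanSpace_fin]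
    have hlowreal : (c/2)^α * (r ^ (d:ℕ) * V) ≤ L.toReal := by
      have := ENNReal.toReal_mono hLne hlowL
      rw [ENNReal.toReal_mul, ENNReal.toReal_ofReal
        (Real.rpow_nonneg (by linarith) _), hvol, ENNReal.toReal_mul,
        ENNReal.toReal_ofReal (by positivity)] at this
      rw [← hV] at this
      linarith [this]
    have hfinal := hC r hr
    rw [hint] at hfinal
    calc K * r ^ (d:ℕ) = (c/2)^α * (r ^ (d:ℕ) * V) := by rw [hK]; ring
      _ ≤ L.toReal := hlowreal
      _ ≤ C * min (r ^ p) (r ^ q) := hfinal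
  -- derive the contradiction
  have hminpos : ∀ r : ℝ, 0 < r → 0 < min (r ^ p) (r ^ q) := fun r hr =>
    lt_min (Real.rpow_pos_of_pos hr p) (Real.rpow_pos_of_pos hr q)
  rcases le_or_gt C 0 with hCle | hCpos
  · have h := hkey r₀ hr₀pos le_rfl
    have hRHS : C * min (r₀ ^ p) (r₀ ^ q) ≤ 0 :=
      mul_nonpos_iff.2 (Or.inr ⟨hCle, (hminpos r₀ hr₀pos).le⟩)
    have hLHS : 0 < K * r₀ ^ (d:ℕ) := mul_pos hKpos (by positivity)
    linarith
  · -- C > 0 : get K ≤ C * r^(q-d) for all small r, contradiction as r → 0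
    have hstep : ∀ r : ℝ, 0 < r → r ≤ r₀ → K ≤ C * r ^ (q - (d:ℝ)) := by
      intro r hr hrr₀
      have h := hkey r hr hrr₀
      have hmin : C * min (r ^ p) (r ^ q) ≤ C * r ^ q :=
        mul_le_mul_of_nonneg_left (min_le_right _ _) hCpos.le
      have hq : r ^ q = r ^ ((d:ℝ)) * r ^ (q - (d:ℝ)) := by
        rw [← Real.rpow_add hr]; ring_nf
      have hpow : r ^ (d:ℕ) = r ^ ((d:ℝ)) := (Real.rpow_natCast r d).symm
      rw [hpow] at h
      have h2 : K * r ^ ((d:ℝ)) ≤ C * r ^ (q - (d:ℝ)) * r ^ ((d:ℝ)) := by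
        calc K * r ^ ((d:ℝ)) ≤ C * min (r ^ p) (r ^ q) := h
          _ ≤ C * r ^ q := hmin
          _ = C * r ^ (q - (d:ℝ)) * r ^ ((d:ℝ)) := by rw [hq]; ring
      exact le_of_mul_le_mul_right h2 (Real.rpow_pos_of_pos hr _)
    have htend : Tendsto (fun r : ℝ => C * r ^ (q - (d:ℝ))) (𝓝[>] (0:ℝ)) (𝓝 0) := by
      have hcont : ContinuousAt (fun r : ℝ => r ^ (q - (d:ℝ))) 0 :=
        Real.continuousAt_rpow_const 0 _ (Or.inr (by linarith))
      have hqd' : (0:ℝ) < q - (d:ℝ) := by linarith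
      have h0 : (0:ℝ) ^ (q - (d:ℝ)) = 0 := Real.zero_rpow hqd'.ne'
      have h1 : Tendsto (fun r : ℝ => r ^ (q - (d:ℝ))) (𝓝[>] (0:ℝ)) (𝓝 0) := by
        have h := hcont.tendsto
        simp only [h0] at h
        exact h.mono_left nhdsWithin_le_nhds
      have h2 := h1.const_mul C
      simpa using h2
    have hev1 : ∀ᶠ r in 𝓝[>] (0:ℝ), C * r ^ (q - (d:ℝ)) < K :=
      htend.eventually_lt_const hKpos
    have hev2 : ∀ᶠ r in 𝓝[>] (0:ℝ), r ∈ Ioc (0:ℝ) r₀ :=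
      Filter.eventually_of_mem (Ioc_mem_nhdsGT hr₀pos)
        (fun x hx => hx)
    obtain ⟨r, h1, h2⟩ := (hev1.and hev2).exists
    exact absurd (hstep r h2.1 h2.2) (not_le.2 h1)
end
end

section
/- Let d ≥ 1 be an integer, 1 < α ≤ 2 and 0 < β ≤ d. Then every measure μ ∈ M_{α,β} is centered, i.e. μ(ℝ^d) = 0. -/
open MeasureTheory Filter Set
open scoped ENNReal Topology

noncomputable section

namespace Statement5Aux

variable {d : ℕ}

lemma aux_measurableSet {r : ℝ} :
    MeasurableSet {p : EuclideanSpace ℝ (Fin d) × EuclideanSpace ℝ (Fin d) | dist p.2 p.1 < r} :=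
  measurableSet_lt (measurable_dist.comp measurable_swap) measurable_const

lemma aux_key (ν : Measure (EuclideanSpace ℝ (Fin d))) (r : ℝ) (x : EuclideanSpace ℝ (Fin d)) :
    ν (Metric.ball x r)
      = ∫⁻ y, ({p : EuclideanSpace ℝ (Fin d) × EuclideanSpace ℝ (Fin d) |
          dist p.2 p.1 < r}).indicator (fun _ => (1 : ℝ≥0∞)) (x, y) ∂ν := by
  have h : (fun y => ({p : EuclideanSpace ℝ (Fin d) × EuclideanSpace ℝ (Fin d) |
        dist p.2 p.1 < r}).indicator (fun _ => (1 : ℝ≥0∞)) (x, y))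
      = (Metric.ball x r).indicator (fun _ => (1 : ℝ≥0∞)) := by
    ext y
    by_cases h : dist y x < r
    · simp [Set.indicator, h, Metric.mem_ball]
    · simp [Set.indicator, h, Metric.mem_ball]
  rw [h, lintegral_indicator measurableSet_ball, setLIntegral_one]

lemma measurable_meas_ball (ν : Measure (EuclideanSpace ℝ (Fin d))) [SFinite ν] (r : ℝ) :
    Measurable fun x => ν (Metric.ball x r) := by
  simp_rw [aux_key ν r]
  exact Measurable.lintegral_prod_right (measurable_one.indicator aux_measurableSet)

lemma lintegral_meas_ball (ν : Measure (EuclideanSpace ℝ (Fin d))) [IsFiniteMeasure ν] (r : ℝ) :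
    ∫⁻ x, ν (Metric.ball x r)
      = ν Set.univ * volume (Metric.ball (0 : EuclideanSpace ℝ (Fin d)) r) := by
  simp_rw [aux_key ν r]
  rw [lintegral_lintegral_swap
    (f := fun x y => ({p : EuclideanSpace ℝ (Fin d) × EuclideanSpace ℝ (Fin d) |
      dist p.2 p.1 < r}).indicator (fun _ => (1 : ℝ≥0∞)) (x, y))
    ((measurable_one.indicator aux_measurableSet).aemeasurable)]
  have inner : ∀ y : EuclideanSpace ℝ (Fin d),
      (∫⁻ x, ({p : EuclideanSpace ℝ (Fin d) × EuclideanSpace ℝ (Fin d) |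
        dist p.2 p.1 < r}).indicator (fun _ => (1 : ℝ≥0∞)) (x, y))
      = volume (Metric.ball (0 : EuclideanSpace ℝ (Fin d)) r) := by
    intro y
    have h : (fun x => ({p : EuclideanSpace ℝ (Fin d) × EuclideanSpace ℝ (Fin d) |
        dist p.2 p.1 < r}).indicator (fun _ => (1 : ℝ≥0∞)) (x, y))
        = (Metric.ball y r).indicator (fun _ => (1 : ℝ≥0∞)) := by
      ext x
      by_cases h : dist y x < r
      · simp [Set.indicator, h, Metric.mem_ball, dist_comm]
      · simp [Set.indicator, h, Metric.mem_ball, dist_comm]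
    rw [h, lintegral_indicator measurableSet_ball, setLIntegral_one,
      Measure.addHaar_ball_center]
  simp_rw [inner]
  rw [lintegral_const, mul_comm]

lemma signed_apply {X : Type*} [MeasurableSpace X] (μ : SignedMeasure X) {s : Set X}
    (hs : MeasurableSet s) :
    μ s = (μ.toJordanDecomposition.posPart s).toReal
      - (μ.toJordanDecomposition.negPart s).toReal := by
  conv_lhs => rw [← μ.toSignedMeasure_toJordanDecomposition]
  rw [JordanDecomposition.toSignedMeasure, VectorMeasure.sub_apply,
    Measure.toSignedMeasure_apply_measurable hs, Measure.toSignedMeasure_apply_measurable hs]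
  rfl

instance tv_finite' {X : Type*} [MeasurableSpace X] (μ : SignedMeasure X) :
    IsFiniteMeasure μ.totalVariation := by
  rw [SignedMeasure.totalVariation]
  infer_instance

lemma abs_le_tv {X : Type*} [MeasurableSpace X] (μ : SignedMeasure X) {s : Set X}
    (hs : MeasurableSet s) :
    |μ s| ≤ (μ.totalVariation s).toReal := by
  rw [signed_apply μ hs, SignedMeasure.totalVariation, Measure.add_apply,
    ENNReal.toReal_add (measure_ne_top _ _) (measure_ne_top _ _)]
  have h1 : 0 ≤ (μ.toJordanDecomposition.posPart s).toReal := ENNReal.toReal_nonneg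
  have h2 : 0 ≤ (μ.toJordanDecomposition.negPart s).toReal := ENNReal.toReal_nonneg
  rw [abs_sub_le_iff]
  constructor <;> linarith

lemma measurable_signed_ball (μ : SignedMeasure (EuclideanSpace ℝ (Fin d))) (r : ℝ) :
    Measurable fun x => μ (Metric.ball x r) := by
  have h : (fun x => μ (Metric.ball x r))
      = fun x => (μ.toJordanDecomposition.posPart (Metric.ball x r)).toReal
        - (μ.toJordanDecomposition.negPart (Metric.ball x r)).toReal := by
    ext x; exact signed_apply μ measurableSet_ball
  rw [h]
  exact (ENNReal.measurable_toReal.comp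
      (measurable_meas_ball μ.toJordanDecomposition.posPart r)).sub
    (ENNReal.measurable_toReal.comp (measurable_meas_ball μ.toJordanDecomposition.negPart r))

lemma integrable_aux (μ : SignedMeasure (EuclideanSpace ℝ (Fin d))) (r : ℝ) (α : ℝ)
    (hα : 1 ≤ α) :
    Integrable (fun x => |μ (Metric.ball x r)| ^ α) := by
  set ν := μ.totalVariation with hν
  set M := (ν Set.univ).toReal with hM
  have hMnn : 0 ≤ M := ENNReal.toReal_nonneg
  have hint : Integrable (fun x => (M + 1) ^ (α - 1) * (ν (Metric.ball x r)).toReal) := by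
    refine Integrable.const_mul ?_ _
    refine integrable_toReal_of_lintegral_ne_top (measurable_meas_ball ν r).aemeasurable ?_
    rw [lintegral_meas_ball ν r]
    exact ENNReal.mul_ne_top (measure_ne_top _ _) measure_ball_lt_top.ne
  refine hint.mono' ?_ (ae_of_all _ fun x => ?_)
  · exact ((Real.continuous_rpow_const (by linarith : (0:ℝ) ≤ α)).measurable.comp
      (measurable_signed_ball μ r).abs).aestronglyMeasurable
  · set t := |μ (Metric.ball x r)| with ht
    have ht0 : 0 ≤ t := abs_nonneg _
    have htν : t ≤ (ν (Metric.ball x r)).toReal := abs_le_tv μ measurableSet_ball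
    have htM : t ≤ M + 1 := by
      refine htν.trans ?_
      have : (ν (Metric.ball x r)).toReal ≤ M :=
        ENNReal.toReal_mono (measure_ne_top _ _) (measure_mono (Set.subset_univ _))
      linarith
    have hnn : (0:ℝ) ≤ (ν (Metric.ball x r)).toReal := ENNReal.toReal_nonneg
    rw [Real.norm_eq_abs, abs_of_nonneg (Real.rpow_nonneg ht0 α)]
    rcases eq_or_lt_of_le ht0 with h0 | h0
    · rw [← h0, Real.zero_rpow (by linarith : α ≠ 0)]
      positivity
    · have hta : t ^ (α - 1) * t = t ^ α := by
        simpa [Real.rpow_one, sub_add_cancel] using (Real.rpow_add h0 (α - 1) 1).symm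
      rw [← hta]
      have h1 : t ^ (α - 1) ≤ (M + 1) ^ (α - 1) :=
        Real.rpow_le_rpow ht0 htM (by linarith)
      exact mul_le_mul h1 htν ht0 (Real.rpow_nonneg (by linarith) _)

end Statement5Aux

open Statement5Aux

/-- if `0 < β ≤ d`, every `μ ∈ M_{α,β}` is centered: `μ(ℝ^d) = 0`. -/
theorem statement5 (d : ℕ) (hd : 1 ≤ d) (α β : ℝ) (hα1 : 1 < α) (hα2 : α ≤ 2)
    (hβ1 : 0 < β) (hβ2 : β ≤ (d : ℝ))
    (μ : MeasureTheory.SignedMeasure (EuclideanSpace ℝ (Fin d))) (hμ : MemM d α β μ) :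
    μ Set.univ = 0 := by
  by_contra hm0
  set E := EuclideanSpace ℝ (Fin d)
  set m := μ Set.univ with hmdef
  have hm : 0 < |m| := abs_pos.mpr hm0
  obtain ⟨C, p, q, hp, hpβ, hβq, hbound⟩ := hμ
  set ν := μ.totalVariation with hνdef
  haveI : Nontrivial E := Module.nontrivial_of_finrank_pos
    (R := ℝ) (by rw [finrank_euclideanSpace_fin]; exact_mod_cast hd)
  -- choose R : ℕ with ν (ball 0 R)ᶜ small
  have htend : Tendsto (fun n : ℕ => ν (Metric.ball (0 : E) n)ᶜ) atTop (𝓝 0) := by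
    have hempty : ⋂ n : ℕ, (Metric.ball (0 : E) n)ᶜ = ∅ := by
      ext x
      simp only [Set.mem_iInter, Set.mem_compl_iff, Metric.mem_ball, not_lt,
        Set.mem_empty_iff_false, iff_false, not_forall, not_le]
      obtain ⟨n, hn⟩ := exists_nat_gt (dist x 0)
      exact ⟨n, hn⟩
    have := tendsto_measure_iInter_atTop (μ := ν)
      (s := fun n : ℕ => (Metric.ball (0 : E) n)ᶜ)
      (fun n => measurableSet_ball.compl.nullMeasurableSet)
      (fun a b hab => Set.compl_subset_compl.mpr (Metric.ball_subset_ball (by exact_mod_cast hab)))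
      ⟨0, measure_ne_top ν _⟩
    rw [hempty] at this
    simpa [Function.comp_def] using this
  obtain ⟨R, hR⟩ := (htend.eventually
    (gt_mem_nhds (ENNReal.ofReal_pos.mpr (by linarith : (0:ℝ) < |m| / 2)))).exists
  have hRtoReal : (ν (Metric.ball (0 : E) R)ᶜ).toReal ≤ |m| / 2 :=
    ENNReal.toReal_le_of_le_ofReal (by linarith) hR.le
  have hR0 : (0:ℝ) ≤ R := Nat.cast_nonneg R
  -- pointwise lower bound
  have hlow : ∀ r : ℝ, (R:ℝ) < r → ∀ x : E, x ∈ Metric.ball (0 : E) (r - R) →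
      |m| / 2 ≤ |μ (Metric.ball x r)| := by
    intro r hr x hx
    have hsub : Metric.ball (0 : E) R ⊆ Metric.ball x r := by
      intro y hy
      rw [Metric.mem_ball] at hy hx ⊢
      have h1 := dist_triangle y (0 : E) x
      rw [dist_comm (0 : E) x] at h1
      linarith
    have hsplit : μ (Metric.ball x r) = m - μ (Metric.ball x r)ᶜ := by
      have hu := μ.of_union (disjoint_compl_right)
        (measurableSet_ball (x := x) (ε := r)) measurableSet_ball.compl
      rw [Set.union_compl_self] at hu
      rw [hmdef, hu]; ring
    have habs : |μ (Metric.ball x r)ᶜ| ≤ |m| / 2 := by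
      refine (abs_le_tv μ measurableSet_ball.compl).trans ?_
      refine le_trans (ENNReal.toReal_mono (measure_ne_top ν _)
        (measure_mono (Set.compl_subset_compl.mpr hsub))) hRtoReal
    rw [hsplit]
    have := abs_sub_abs_le_abs_sub m (μ (Metric.ball x r)ᶜ)
    have h2 := abs_sub (m) (μ (Metric.ball x r)ᶜ)
    calc |m| / 2 = |m| - |m| / 2 := by ring
    _ ≤ |m| - |μ (Metric.ball x r)ᶜ| := by linarith
    _ ≤ |m - μ (Metric.ball x r)ᶜ| := abs_sub_abs_le_abs_sub _ _
  -- integral lower bound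
  set c := (volume (Metric.ball (0 : E) 1)).toReal with hcdef
  have hc : 0 < c := ENNReal.toReal_pos (Metric.measure_ball_pos _ _ one_pos).ne' measure_ball_lt_top.ne
  have hαnn : (0:ℝ) ≤ α := by linarith
  have hintlow : ∀ r : ℝ, (R:ℝ) + 1 ≤ r →
      (|m| / 2) ^ α * ((r - R) ^ d * c) ≤ ∫ x, |μ (Metric.ball x r)| ^ α := by
    intro r hr
    have hrR : (0:ℝ) ≤ r - R := by linarith
    have hint := integrable_aux μ r α hα1.le
    have h1 : ∫ _x in Metric.ball (0 : E) (r - R), (|m| / 2) ^ α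
        ≤ ∫ x in Metric.ball (0 : E) (r - R), |μ (Metric.ball x r)| ^ α := by
      refine setIntegral_mono_on (integrableOn_const (C := (|m| / 2) ^ α) measure_ball_lt_top.ne)
        hint.integrableOn measurableSet_ball ?_
      intro x hx
      exact Real.rpow_le_rpow (by positivity) (hlow r (by linarith) x hx) hαnn
    have h2 : ∫ x in Metric.ball (0 : E) (r - R), |μ (Metric.ball x r)| ^ α
        ≤ ∫ x, |μ (Metric.ball x r)| ^ α :=
      setIntegral_le_integral hint (ae_of_all _ fun x => Real.rpow_nonneg (abs_nonneg _) α)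
    rw [setIntegral_const, smul_eq_mul] at h1
    have hvol : (volume (Metric.ball (0 : E) (r - R))).toReal = (r - R) ^ d * c := by
      rw [Measure.addHaar_ball _ _ hrR, ENNReal.toReal_mul,
        ENNReal.toReal_ofReal (by positivity), finrank_euclideanSpace_fin]
    rw [Measure.real, hvol] at h1
    calc (|m| / 2) ^ α * ((r - R) ^ d * c) = (r - R) ^ d * c * (|m| / 2) ^ α := by ring
    _ ≤ _ := le_trans h1 h2
  -- combine with upper bound to get a uniform bound
  set c1 := (|m| / 2) ^ α * c / 2 ^ (d : ℝ) with hc1def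
  have hc1 : 0 < c1 := by
    have := Real.rpow_pos_of_pos (show (0:ℝ) < |m|/2 by linarith) α
    have h2 : (0:ℝ) < (2:ℝ) ^ (d:ℝ) := Real.rpow_pos_of_pos two_pos _
    positivity
  have hδ : (0:ℝ) < (d:ℝ) - p := by linarith
  have key : ∀ r : ℝ, max (2 * (R:ℝ) + 2) 1 ≤ r → c1 * r ^ ((d:ℝ) - p) ≤ C := by
    intro r hr
    have hr1 : (1:ℝ) ≤ r := le_trans (le_max_right _ _) hr
    have hr2 : 2 * (R:ℝ) + 2 ≤ r := le_trans (le_max_left _ _) hr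
    have hr0 : (0:ℝ) < r := by linarith
    have hhalf : r / 2 ≤ r - R := by linarith
    have hmin : min (r ^ p) (r ^ q) = r ^ p :=
      min_eq_left (Real.rpow_le_rpow_of_exponent_le hr1 (by linarith))
    have hub := hbound r hr0
    rw [hmin] at hub
    have hlb := hintlow r (by linarith)
    have hpow : (r / 2) ^ d ≤ (r - R) ^ d :=
      pow_le_pow_left₀ (by positivity) hhalf d
    have hchain : (|m| / 2) ^ α * ((r / 2) ^ d * c) ≤ C * r ^ p := by
      have : (|m| / 2) ^ α * ((r / 2) ^ d * c) ≤ (|m| / 2) ^ α * ((r - R) ^ d * c) := by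
        exact mul_le_mul_of_nonneg_left (mul_le_mul_of_nonneg_right hpow hc.le)
          (Real.rpow_nonneg (by linarith) α)
      linarith [le_trans this (le_trans hlb hub)]
    -- rewrite (r/2)^d in rpow form
    have hrw : (|m| / 2) ^ α * ((r / 2) ^ d * c) = c1 * r ^ ((d:ℝ) - p) * r ^ p := by
      rw [hc1def]
      have h1 : (r / 2 : ℝ) ^ d = (r / 2) ^ ((d:ℝ)) := (Real.rpow_natCast _ d).symm
      have h2 : (r / 2 : ℝ) ^ ((d:ℝ)) = r ^ ((d:ℝ)) / 2 ^ ((d:ℝ)) :=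
        Real.div_rpow hr0.le (by norm_num) _
      have h3 : r ^ ((d:ℝ)) = r ^ ((d:ℝ) - p) * r ^ p := by
        rw [← Real.rpow_add hr0]; ring_nf
      rw [h1, h2, h3]
      field_simp
    rw [hrw] at hchain
    have hrp : (0:ℝ) < r ^ p := Real.rpow_pos_of_pos hr0 p
    calc c1 * r ^ ((d:ℝ) - p) = c1 * r ^ ((d:ℝ) - p) * r ^ p / r ^ p := by field_simp
    _ ≤ C * r ^ p / r ^ p := by gcongr
    _ = C := by field_simp
  -- contradiction via tendsto
  have htop : Tendsto (fun r : ℝ => c1 * r ^ ((d:ℝ) - p)) atTop atTop :=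
    (tendsto_rpow_atTop hδ).const_mul_atTop hc1
  obtain ⟨r, hr1, hr2⟩ := ((htop.eventually_gt_atTop C).and
    (eventually_ge_atTop (max (2 * (R:ℝ) + 2) 1))).exists
  exact absurd (key r hr2) (not_le.mpr hr1)
end
end

section
/- Let d ≥ 1 be an integer, 1 < α ≤ 2 and d < β < αd. If φ ∈ L¹(ℝ^d) ∩ L^α(ℝ^d) and μ is the signed measure with density φ with respect to Lebesgue measure, i.e. μ(A) = ∫_A φ(x) dx, then μ ∈ M_{α,β}. More precisely, for every r > 0 one has ∫_{ℝ^d} |μ(B(x,r))|^α dx ≤ (c_d r^d)^α ∫_{ℝ^d} |φ(y)|^α dy and ∫_{ℝ^d} |μ(B(x,r))|^α dx ≤ c_d r^d (∫_{ℝ^d} |φ(y)| dy)^α. -/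
open MeasureTheory Filter Set
open scoped ENNReal Topology

set_option maxHeartbeats 1000000

noncomputable section

lemma ball_fubini {d : ℕ} {ψ : EuclideanSpace ℝ (Fin d) → ℝ} (hm : Measurable ψ)
    (hnn : ∀ y, 0 ≤ ψ y) (hint : Integrable ψ) (r : ℝ) :
    Integrable (fun x => ∫ y in Metric.ball x r, ψ y) ∧
    ∫ x, (∫ y in Metric.ball x r, ψ y) =
      (volume (Metric.ball (0 : EuclideanSpace ℝ (Fin d)) r)).toReal * ∫ y, ψ y := by
  set Ψ : EuclideanSpace ℝ (Fin d) → ℝ≥0∞ := fun y => ENNReal.ofReal (ψ y) with hΨ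
  have hΨm : Measurable Ψ := hm.ennreal_ofReal
  set F : EuclideanSpace ℝ (Fin d) × EuclideanSpace ℝ (Fin d) → ℝ≥0∞ :=
    fun p => {q : EuclideanSpace ℝ (Fin d) × EuclideanSpace ℝ (Fin d) |
      dist q.1 q.2 < r}.indicator (fun q => Ψ q.2) p with hF
  have hFm : Measurable F := by
    apply Measurable.indicator (hΨm.comp measurable_snd)
    exact (isOpen_lt (continuous_dist.comp (continuous_fst.prodMk continuous_snd))
      continuous_const).measurableSet
  set G : EuclideanSpace ℝ (Fin d) → ℝ≥0∞ := fun x => ∫⁻ y, F (x, y) with hG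
  have hGm : Measurable G := hFm.lintegral_prod_right'
  have hGball : ∀ x, G x = ∫⁻ y in Metric.ball x r, Ψ y := by
    intro x
    rw [← lintegral_indicator measurableSet_ball]
    refine lintegral_congr fun y => ?_
    simp only [hF, Set.indicator, Set.mem_setOf_eq, Metric.mem_ball, dist_comm y x]
  have hswap : ∫⁻ x, G x = ∫⁻ y, Ψ y * volume (Metric.ball (0 : EuclideanSpace ℝ (Fin d)) r) := by
    rw [hG, lintegral_lintegral_swap hFm.aemeasurable]
    refine lintegral_congr fun y => ?_
    have hxy : ∀ x : EuclideanSpace ℝ (Fin d),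
        F (x, y) = (Metric.ball y r).indicator (fun _ => Ψ y) x := by
      intro x
      simp only [hF, Set.indicator, Set.mem_setOf_eq, Metric.mem_ball, dist_comm x y]
    simp_rw [hxy]
    rw [lintegral_indicator measurableSet_ball, setLIntegral_const,
      Measure.addHaar_ball_center]
  have hψlint : ∫⁻ y, Ψ y = ENNReal.ofReal (∫ y, ψ y) := by
    rw [← ofReal_integral_eq_lintegral_ofReal hint (Filter.Eventually.of_forall hnn)]
  have hGlint : ∫⁻ x, G x
      = volume (Metric.ball (0 : EuclideanSpace ℝ (Fin d)) r) * ENNReal.ofReal (∫ y, ψ y) := by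
    rw [hswap, lintegral_mul_const _ hΨm, hψlint, mul_comm]
  have hGne : ∫⁻ x, G x ≠ ∞ := by
    rw [hGlint]
    exact ENNReal.mul_ne_top measure_ball_lt_top.ne ENNReal.ofReal_ne_top
  have hGr : ∀ x, ∫ y in Metric.ball x r, ψ y = (G x).toReal := by
    intro x
    rw [hGball x, integral_eq_lintegral_of_nonneg_ae (Filter.Eventually.of_forall hnn)
      hm.aestronglyMeasurable.restrict]
  constructor
  · simp_rw [hGr]
    exact integrable_toReal_of_lintegral_ne_top hGm.aemeasurable hGne
  · simp_rw [hGr]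
    rw [integral_toReal hGm.aemeasurable (ae_lt_top hGm hGne), hGlint, ENNReal.toReal_mul,
      ENNReal.toReal_ofReal (integral_nonneg hnn)]


/-- if `d < β < αd` and `φ ∈ L¹(ℝ^d) ∩ L^α(ℝ^d)`, the signed measure `μ`
with density `φ` belongs to `M_{α,β}`; more precisely, for every `r > 0`,
`∫ |μ(B(x,r))|^α dx ≤ (c_d r^d)^α ∫|φ|^α` and `∫ |μ(B(x,r))|^α dx ≤ c_d r^d (∫|φ|)^α`. -/
theorem statement6 (d : ℕ) (hd : 1 ≤ d) (α β : ℝ) (hα1 : 1 < α) (hα2 : α ≤ 2)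
    (hβ1 : (d : ℝ) < β) (hβ2 : β < α * d)
    (φ : EuclideanSpace ℝ (Fin d) → ℝ)
    (hφ1 : MeasureTheory.Integrable φ)
    (hφα : MeasureTheory.MemLp φ (ENNReal.ofReal α))
    (cd : ℝ) (hcd : cd = (volume (Metric.ball (0 : EuclideanSpace ℝ (Fin d)) 1)).toReal) :
    MemM d α β (volume.withDensityᵥ φ) ∧
    ∀ r : ℝ, 0 < r →
      (∫ x : EuclideanSpace ℝ (Fin d), |(volume.withDensityᵥ φ) (Metric.ball x r)| ^ α)
          ≤ (cd * r ^ d) ^ α * ∫ y : EuclideanSpace ℝ (Fin d), |φ y| ^ α ∧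
      (∫ x : EuclideanSpace ℝ (Fin d), |(volume.withDensityᵥ φ) (Metric.ball x r)| ^ α)
          ≤ cd * r ^ d * (∫ y : EuclideanSpace ℝ (Fin d), |φ y|) ^ α := by
  have hα0 : (0 : ℝ) < α := lt_trans one_pos hα1
  haveI : Nonempty (Fin d) := ⟨⟨0, hd⟩⟩
  haveI : Nontrivial (EuclideanSpace ℝ (Fin d)) :=
    Module.nontrivial_of_finrank_pos (R := ℝ) (by rw [finrank_euclideanSpace_fin]; omega)
  obtain ⟨φ', hφ'sm, hae⟩ := hφ1.aestronglyMeasurable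
  have hφ'm : Measurable φ' := hφ'sm.measurable
  have hφ'int : Integrable φ' := hφ1.congr hae
  have hφ'α : MemLp φ' (ENNReal.ofReal α) := hφα.ae_eq hae
  set ψ1 : EuclideanSpace ℝ (Fin d) → ℝ := fun y => |φ' y| ^ α with hψ1
  set ψ2 : EuclideanSpace ℝ (Fin d) → ℝ := fun y => |φ' y| with hψ2
  have hψ1m : Measurable ψ1 :=
    (Real.continuous_rpow_const hα0.le).measurable.comp hφ'm.abs
  have hψ2m : Measurable ψ2 := hφ'm.abs
  have hψ1nn : ∀ y, 0 ≤ ψ1 y := fun y => Real.rpow_nonneg (abs_nonneg _) α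
  have hψ2nn : ∀ y, 0 ≤ ψ2 y := fun y => abs_nonneg _
  have hψ1int : Integrable ψ1 := by
    have h := hφ'α.integrable_norm_rpow
      (by simp [ENNReal.ofReal_eq_zero, not_le, hα0]) ENNReal.ofReal_ne_top
    simpa [ENNReal.toReal_ofReal hα0.le, Real.norm_eq_abs] using h
  have hψ2int : Integrable ψ2 := hφ'int.abs
  have hcd0 : 0 < cd := by
    rw [hcd]
    exact ENNReal.toReal_pos (Metric.measure_ball_pos volume _ one_pos).ne' measure_ball_lt_top.ne
  have hvol : ∀ r : ℝ, 0 < r →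
      (volume (Metric.ball (0 : EuclideanSpace ℝ (Fin d)) r)).toReal = cd * r ^ d := by
    intro r hr
    rw [Measure.addHaar_ball volume (0 : EuclideanSpace ℝ (Fin d)) hr.le, finrank_euclideanSpace_fin, ENNReal.toReal_mul,
      ENNReal.toReal_ofReal (pow_nonneg hr.le _), hcd, mul_comm]
  -- ae-congruence for the φ-integrals appearing in the statement
  have hψ1ae : (fun y => |φ y| ^ α) =ᵐ[volume] ψ1 :=
    hae.mono fun y hy => by simp only [hψ1, hy]
  have hψ2ae : (fun y => |φ y|) =ᵐ[volume] ψ2 :=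
    hae.mono fun y hy => by simp only [hψ2, hy]
  have hint1 : ∫ y, |φ y| ^ α = ∫ y, ψ1 y := integral_congr_ae hψ1ae
  have hint2 : ∫ y, |φ y| = ∫ y, ψ2 y := integral_congr_ae hψ2ae
  set q : ℝ := Real.conjExponent α with hqdef
  have hpq : α.HolderConjugate q := Real.HolderConjugate.conjExponent hα1
  have key : ∀ r : ℝ, 0 < r →
      (∫ x : EuclideanSpace ℝ (Fin d), |(volume.withDensityᵥ φ) (Metric.ball x r)| ^ α)
          ≤ (cd * r ^ d) ^ α * ∫ y : EuclideanSpace ℝ (Fin d), |φ y| ^ α ∧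
      (∫ x : EuclideanSpace ℝ (Fin d), |(volume.withDensityᵥ φ) (Metric.ball x r)| ^ α)
          ≤ cd * r ^ d * (∫ y : EuclideanSpace ℝ (Fin d), |φ y|) ^ α := by
    intro r hr
    set vr : ℝ := cd * r ^ d with hvr
    have hvr0 : 0 < vr := mul_pos hcd0 (pow_pos hr d)
    set I : EuclideanSpace ℝ (Fin d) → ℝ := fun x => ∫ y in Metric.ball x r, ψ2 y with hI
    set J : EuclideanSpace ℝ (Fin d) → ℝ := fun x => ∫ y in Metric.ball x r, ψ1 y with hJ
    have hInn : ∀ x, 0 ≤ I x := fun x => integral_nonneg hψ2nn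
    have hJnn : ∀ x, 0 ≤ J x := fun x => integral_nonneg hψ1nn
    have habs : ∀ x, |(volume.withDensityᵥ φ) (Metric.ball x r)| ≤ I x := by
      intro x
      rw [withDensityᵥ_apply hφ1 measurableSet_ball]
      calc |∫ y in Metric.ball x r, φ y| ≤ ∫ y in Metric.ball x r, |φ y| := by
            simpa [Real.norm_eq_abs] using
              norm_integral_le_integral_norm (μ := volume.restrict (Metric.ball x r)) φ
        _ = I x := integral_congr_ae (ae_restrict_of_ae hψ2ae)
    -- Hölder inequality on each ball
    have hholder : ∀ x, I x ≤ (J x) ^ (1/α) * vr ^ (1/q) := by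
      intro x
      haveI : IsFiniteMeasure (volume.restrict (Metric.ball x r)) :=
        ⟨by rw [Measure.restrict_apply_univ]; exact measure_ball_lt_top⟩
      have hmem2 : MemLp ψ2 (ENNReal.ofReal α) (volume.restrict (Metric.ball x r)) := by
        have := (hφ'α.restrict (Metric.ball x r)).norm
        simpa [Real.norm_eq_abs] using this
      have hH := integral_mul_le_Lp_mul_Lq_of_nonneg (μ := volume.restrict (Metric.ball x r))
        hpq (f := ψ2) (g := fun _ => (1:ℝ))
        (Filter.Eventually.of_forall hψ2nn) (Filter.Eventually.of_forall fun _ => zero_le_one)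
        hmem2 (memLp_const 1)
      have hvolx : (volume (Metric.ball x r)).toReal = vr := by
        rw [Measure.addHaar_ball_center]; exact hvol r hr
      simp only [mul_one, Real.one_rpow, integral_const, smul_eq_mul,
        Measure.restrict_apply_univ, measureReal_restrict_apply_univ, Measure.real, hvolx] at hH
      calc I x = ∫ y in Metric.ball x r, ψ2 y := rfl
        _ ≤ (∫ y in Metric.ball x r, ψ2 y ^ α) ^ (1/α) * vr ^ (1/q) := hH
        _ = (J x) ^ (1/α) * vr ^ (1/q) := rfl
    have hpow : ∀ x, (I x) ^ α ≤ J x * vr ^ (α - 1) := by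
      intro x
      have h1 := Real.rpow_le_rpow (hInn x) (hholder x) hα0.le
      have h2 : ((J x) ^ (1/α) * vr ^ (1/q)) ^ α
          = J x * vr ^ (α - 1) := by
        rw [Real.mul_rpow (Real.rpow_nonneg (hJnn x) _) (Real.rpow_nonneg hvr0.le _),
          ← Real.rpow_mul (hJnn x), ← Real.rpow_mul hvr0.le]
        congr 1
        · rw [one_div, inv_mul_cancel₀ hα0.ne', Real.rpow_one]
        · congr 1
          rw [mul_comm, mul_one_div, hpq.div_conj_eq_sub_one]
      exact h2 ▸ h1
    -- the two integral bounds
    have hJfub := ball_fubini hψ1m hψ1nn hψ1int r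
    have hIfub := ball_fubini hψ2m hψ2nn hψ2int r
    have hvol0 : (volume (Metric.ball (0 : EuclideanSpace ℝ (Fin d)) r)).toReal = vr :=
      hvol r hr
    have hsplit : ∀ t : ℝ, 0 ≤ t → t ^ α = t ^ (α - 1) * t := by
      intro t ht
      have h := Real.rpow_add' ht (show (α - 1) + 1 ≠ 0 by
        rw [sub_add_cancel]; exact hα0.ne')
      rw [sub_add_cancel, Real.rpow_one] at h
      exact h
    constructor
    · -- first bound
      have hmono : (∫ x : EuclideanSpace ℝ (Fin d),
            |(volume.withDensityᵥ φ) (Metric.ball x r)| ^ α)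
          ≤ ∫ x, J x * vr ^ (α - 1) := by
        refine integral_mono_of_nonneg
          (Filter.Eventually.of_forall fun x => Real.rpow_nonneg (abs_nonneg _) α)
          (hJfub.1.mul_const _) (Filter.Eventually.of_forall fun x => ?_)
        calc |(volume.withDensityᵥ φ) (Metric.ball x r)| ^ α ≤ (I x) ^ α :=
              Real.rpow_le_rpow (abs_nonneg _) (habs x) hα0.le
          _ ≤ J x * vr ^ (α - 1) := hpow x
      have hcalc : ∫ x, J x * vr ^ (α - 1) = vr ^ α * ∫ y, ψ1 y := by
        rw [integral_mul_const]
        simp only [hJ]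
        rw [hJfub.2, hvol0, hsplit vr hvr0.le]
        ring
      rw [hint1]
      calc (∫ x : EuclideanSpace ℝ (Fin d),
            |(volume.withDensityᵥ φ) (Metric.ball x r)| ^ α)
          ≤ ∫ x, J x * vr ^ (α - 1) := hmono
        _ = vr ^ α * ∫ y, ψ1 y := hcalc
        _ = (cd * r ^ d) ^ α * ∫ y, ψ1 y := by rw [hvr]
    · -- second bound
      set M : ℝ := ∫ y, ψ2 y with hM
      have hM0 : 0 ≤ M := integral_nonneg hψ2nn
      have hIM : ∀ x, I x ≤ M := fun x =>
        setIntegral_le_integral hψ2int (Filter.Eventually.of_forall hψ2nn)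
      have hpow2 : ∀ x, (I x) ^ α ≤ M ^ (α - 1) * I x := by
        intro x
        rw [hsplit (I x) (hInn x)]
        exact mul_le_mul_of_nonneg_right
          (Real.rpow_le_rpow (hInn x) (hIM x) (by linarith)) (hInn x)
      have hmono : (∫ x : EuclideanSpace ℝ (Fin d),
            |(volume.withDensityᵥ φ) (Metric.ball x r)| ^ α)
          ≤ ∫ x, M ^ (α - 1) * I x := by
        refine integral_mono_of_nonneg
          (Filter.Eventually.of_forall fun x => Real.rpow_nonneg (abs_nonneg _) α)
          (hIfub.1.const_mul _) (Filter.Eventually.of_forall fun x => ?_)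
        calc |(volume.withDensityᵥ φ) (Metric.ball x r)| ^ α ≤ (I x) ^ α :=
              Real.rpow_le_rpow (abs_nonneg _) (habs x) hα0.le
          _ ≤ M ^ (α - 1) * I x := hpow2 x
      have hcalc : ∫ x, M ^ (α - 1) * I x = vr * M ^ α := by
        rw [integral_const_mul]
        simp only [hI]
        rw [hIfub.2, hvol0, hsplit M hM0]
        ring
      rw [hint2]
      calc (∫ x : EuclideanSpace ℝ (Fin d),
            |(volume.withDensityᵥ φ) (Metric.ball x r)| ^ α)
          ≤ ∫ x, M ^ (α - 1) * I x := hmono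
        _ = vr * M ^ α := hcalc
        _ = cd * r ^ d * M ^ α := by rw [hvr]
  refine ⟨?_, key⟩
  -- membership in M_{α,β}
  have hd0 : (0 : ℝ) < (d : ℝ) := by exact_mod_cast Nat.lt_of_lt_of_le Nat.zero_lt_one hd
  have hdα : (d : ℝ) ≤ α * d := by nlinarith
  refine ⟨max (cd ^ α * ∫ y, |φ y| ^ α) (cd * (∫ y, |φ y|) ^ α), (d : ℝ), α * d,
    hd0, hβ1, hβ2, ?_⟩
  intro r hr
  rcases le_total r 1 with h | h
  · have hmin : min (r ^ (d : ℝ)) (r ^ (α * d)) = r ^ (α * d) :=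
      min_eq_right (Real.rpow_le_rpow_of_exponent_ge hr h hdα)
    rw [hmin]
    have h1 := (key r hr).1
    have hre : (cd * r ^ d) ^ α * ∫ y, |φ y| ^ α
        = (cd ^ α * ∫ y, |φ y| ^ α) * r ^ (α * d) := by
      rw [Real.mul_rpow hcd0.le (pow_nonneg hr.le d), ← Real.rpow_natCast r d,
        ← Real.rpow_mul hr.le, mul_comm (d : ℝ) α]
      ring
    calc (∫ x : EuclideanSpace ℝ (Fin d),
          |(volume.withDensityᵥ φ) (Metric.ball x r)| ^ α)
        ≤ (cd * r ^ d) ^ α * ∫ y, |φ y| ^ α := h1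
      _ = (cd ^ α * ∫ y, |φ y| ^ α) * r ^ (α * d) := hre
      _ ≤ max (cd ^ α * ∫ y, |φ y| ^ α) (cd * (∫ y, |φ y|) ^ α) * r ^ (α * d) :=
          mul_le_mul_of_nonneg_right (le_max_left _ _) (Real.rpow_nonneg hr.le _)
  · have hmin : min (r ^ (d : ℝ)) (r ^ (α * d)) = r ^ (d : ℝ) :=
      min_eq_left (Real.rpow_le_rpow_of_exponent_le h hdα)
    rw [hmin]
    have h2 := (key r hr).2
    calc (∫ x : EuclideanSpace ℝ (Fin d),
          |(volume.withDensityᵥ φ) (Metric.ball x r)| ^ α)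
        ≤ cd * r ^ d * (∫ y, |φ y|) ^ α := h2
      _ = (cd * (∫ y, |φ y|) ^ α) * r ^ (d : ℝ) := by
          rw [Real.rpow_natCast]; ring
      _ ≤ max (cd ^ α * ∫ y, |φ y| ^ α) (cd * (∫ y, |φ y|) ^ α) * r ^ (d : ℝ) :=
          mul_le_mul_of_nonneg_right (le_max_right _ _) (Real.rpow_nonneg hr.le _)
end
end

section
/- Let d ≥ 1 be an integer, 1 < α ≤ 2 and d − 1 < β < d. If φ ∈ L¹(ℝ^d) satisfies ∫_{ℝ^d} φ(y) dy = 0 and ∫_{ℝ^d} ‖y‖ |φ(y)| dy < +∞, then the signed measure μ with density φ, i.e. μ(A) = ∫_A φ(x) dx, belongs to M_{α,β}. -/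
open MeasureTheory Filter Set
open scoped ENNReal Topology

noncomputable section

lemma pow_sub_pow_le_aux (n : ℕ) {a b : ℝ} (hb : 0 ≤ b) (hba : b ≤ a) :
    a ^ (n + 1) - b ^ (n + 1) ≤ ((n : ℝ) + 1) * (a - b) * a ^ n := by
  induction n with
  | zero => norm_num
  | succ n ih =>
    have ha : (0:ℝ) ≤ a := hb.trans hba
    have hbn : b ^ (n + 1) ≤ a ^ (n + 1) := pow_le_pow_left₀ hb hba _
    have h2 := mul_le_mul_of_nonneg_left ih ha
    have h3 : (a - b) * b ^ (n+1) ≤ (a - b) * a ^ (n+1) :=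
      mul_le_mul_of_nonneg_left hbn (sub_nonneg.2 hba)
    have e0 : a * (a ^ (n+1) - b ^ (n+1)) + (a - b) * b ^ (n+1)
        = a ^ (n+2) - b ^ (n+2) := by ring
    have e1 : a * (((n:ℝ) + 1) * (a - b) * a ^ n) = ((n:ℝ)+1) * ((a-b) * a^(n+1)) := by
      rw [pow_succ]; ring
    push_cast
    nlinarith [h2, h3, e0, e1]

lemma sd_vol (d : ℕ) (hd : 1 ≤ d) {r : ℝ} (hr : 0 < r) (y : EuclideanSpace ℝ (Fin d)) :
    volume (symmDiff (Metric.ball y r) (Metric.ball (0 : EuclideanSpace ℝ (Fin d)) r))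
      ≤ ENNReal.ofReal (((d : ℝ) * 2 ^ d + 2) * ‖y‖ * r ^ (d - 1))
        * volume (Metric.ball (0 : EuclideanSpace ℝ (Fin d)) 1) := by
  obtain ⟨n, rfl⟩ : ∃ n, d = n + 1 := ⟨d - 1, (Nat.succ_pred_eq_of_pos hd).symm⟩
  haveI : Nontrivial (EuclideanSpace ℝ (Fin (n+1))) :=
    Module.nontrivial_of_finrank_pos (R := ℝ) (by rw [finrank_euclideanSpace_fin]; omega)
  have hVtop : volume (Metric.ball (0 : EuclideanSpace ℝ (Fin (n+1))) 1) ≠ ⊤ :=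
    measure_ball_lt_top.ne
  have ht : (0:ℝ) ≤ ‖y‖ := norm_nonneg y
  have hfr : Module.finrank ℝ (EuclideanSpace ℝ (Fin (n+1))) = n + 1 :=
    finrank_euclideanSpace_fin
  have hrn : (0:ℝ) < r ^ n := pow_pos hr n
  have hsimp : (n + 1 : ℕ) - 1 = n := rfl
  rw [hsimp]
  by_cases hyr : r ≤ ‖y‖
  · calc volume (symmDiff (Metric.ball y r) (Metric.ball (0 : EuclideanSpace ℝ (Fin (n+1))) r))
        ≤ volume (Metric.ball y r ∪ Metric.ball (0 : EuclideanSpace ℝ (Fin (n+1))) r) :=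
          measure_mono symmDiff_subset_union
      _ ≤ volume (Metric.ball y r) + volume (Metric.ball (0 : EuclideanSpace ℝ (Fin (n+1))) r) :=
          measure_union_le _ _
      _ = (ENNReal.ofReal (r ^ (n+1)) + ENNReal.ofReal (r ^ (n+1)))
            * volume (Metric.ball (0 : EuclideanSpace ℝ (Fin (n+1))) 1) := by
          rw [Measure.addHaar_ball _ _ hr.le, Measure.addHaar_ball _ _ hr.le, hfr, add_mul]
      _ = ENNReal.ofReal (2 * r ^ (n+1))
            * volume (Metric.ball (0 : EuclideanSpace ℝ (Fin (n+1))) 1) := by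
          rw [← ENNReal.ofReal_add (by positivity) (by positivity)]; ring_nf
      _ ≤ ENNReal.ofReal ((((n+1 : ℕ) : ℝ) * 2 ^ (n+1) + 2) * ‖y‖ * r ^ n)
            * volume (Metric.ball (0 : EuclideanSpace ℝ (Fin (n+1))) 1) := by
          gcongr ENNReal.ofReal ?_ * _
          have e : r ^ (n+1) = r ^ n * r := pow_succ r n
          have h5 : (0:ℝ) ≤ (((n+1 : ℕ) : ℝ) * 2 ^ (n+1)) * (‖y‖ * r ^ n) := by positivity
          have h6 : r ^ n * r ≤ r ^ n * ‖y‖ := mul_le_mul_of_nonneg_left hyr hrn.le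
          push_cast at h5 ⊢
          nlinarith [h5, h6, e]
  · push_neg at hyr
    by_cases hy0 : y = 0
    · rw [hy0, symmDiff_self]
      simp
    have ht0 : (0:ℝ) < ‖y‖ := norm_pos_iff.2 hy0
    have hsub : symmDiff (Metric.ball y r) (Metric.ball (0 : EuclideanSpace ℝ (Fin (n+1))) r)
        ⊆ Metric.ball (0 : EuclideanSpace ℝ (Fin (n+1))) (r + ‖y‖)
          \ Metric.ball (0 : EuclideanSpace ℝ (Fin (n+1))) (r - ‖y‖) := by
      intro x hx
      rw [Set.mem_symmDiff] at hx
      have hxy : dist x y ≤ ‖x‖ + ‖y‖ := dist_le_norm_add_norm x y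
      have hxy2 : ‖x‖ ≤ dist x y + ‖y‖ := by
        calc ‖x‖ = dist x 0 := (dist_zero_right x).symm
        _ ≤ dist x y + dist y 0 := dist_triangle x y 0
        _ = dist x y + ‖y‖ := by rw [dist_zero_right]
      constructor
      · rw [Metric.mem_ball, dist_zero_right]
        rcases hx with ⟨h1, _⟩ | ⟨h1, _⟩
        · rw [Metric.mem_ball] at h1; linarith
        · rw [Metric.mem_ball, dist_zero_right] at h1; linarith
      · rw [Metric.mem_ball, dist_zero_right, not_lt]
        rcases hx with ⟨h1, h2⟩ | ⟨h1, h2⟩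
        · rw [Metric.mem_ball, dist_zero_right, not_lt] at h2; linarith
        · rw [Metric.mem_ball, not_lt] at h2; linarith
    calc volume (symmDiff (Metric.ball y r) (Metric.ball (0 : EuclideanSpace ℝ (Fin (n+1))) r))
        ≤ volume (Metric.ball (0 : EuclideanSpace ℝ (Fin (n+1))) (r + ‖y‖)
            \ Metric.ball (0 : EuclideanSpace ℝ (Fin (n+1))) (r - ‖y‖)) :=
          measure_mono hsub
      _ = volume (Metric.ball (0 : EuclideanSpace ℝ (Fin (n+1))) (r + ‖y‖))
            - volume (Metric.ball (0 : EuclideanSpace ℝ (Fin (n+1))) (r - ‖y‖)) := by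
          rw [measure_diff (Metric.ball_subset_ball (by linarith))
            measurableSet_ball.nullMeasurableSet measure_ball_lt_top.ne]
      _ = ENNReal.ofReal ((r + ‖y‖)^(n+1))
              * volume (Metric.ball (0 : EuclideanSpace ℝ (Fin (n+1))) 1)
            - ENNReal.ofReal ((r - ‖y‖)^(n+1))
              * volume (Metric.ball (0 : EuclideanSpace ℝ (Fin (n+1))) 1) := by
          rw [Measure.addHaar_ball _ _ (show (0:ℝ) ≤ r + ‖y‖ by linarith),
            Measure.addHaar_ball _ _ (show (0:ℝ) ≤ r - ‖y‖ by linarith), hfr]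
      _ ≤ (ENNReal.ofReal ((r + ‖y‖)^(n+1)) - ENNReal.ofReal ((r - ‖y‖)^(n+1)))
            * volume (Metric.ball (0 : EuclideanSpace ℝ (Fin (n+1))) 1) := by
          rw [tsub_le_iff_right, ← add_mul]
          exact mul_le_mul_of_nonneg_right le_tsub_add (zero_le)
      _ = ENNReal.ofReal ((r + ‖y‖)^(n+1) - (r - ‖y‖)^(n+1))
            * volume (Metric.ball (0 : EuclideanSpace ℝ (Fin (n+1))) 1) := by
          rw [ENNReal.ofReal_sub _ (pow_nonneg (by linarith) _)]
      _ ≤ ENNReal.ofReal ((((n+1 : ℕ) : ℝ) * 2 ^ (n+1) + 2) * ‖y‖ * r ^ n)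
            * volume (Metric.ball (0 : EuclideanSpace ℝ (Fin (n+1))) 1) := by
          gcongr ENNReal.ofReal ?_ * _
          have key := pow_sub_pow_le_aux n (b := r - ‖y‖) (a := r + ‖y‖) (by linarith) (by linarith)
          have h1 : (r + ‖y‖) ^ n ≤ (2*r) ^ n := pow_le_pow_left₀ (by linarith) (by linarith) n
          have h2 : (2*r) ^ n = 2 ^ n * r ^ n := mul_pow 2 r n
          have h3 : ((n:ℝ)+1) * ((r + ‖y‖) - (r - ‖y‖)) * (r + ‖y‖) ^ n
              ≤ ((n:ℝ)+1) * (2 * ‖y‖) * (2 ^ n * r ^ n) := by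
            have e3 : ((n:ℝ)+1) * ((r + ‖y‖) - (r - ‖y‖)) * (r + ‖y‖) ^ n
                = ((n:ℝ)+1) * (2 * ‖y‖) * (r + ‖y‖) ^ n := by ring
            rw [e3, ← h2]
            exact mul_le_mul_of_nonneg_left h1 (by positivity)
          have e2 : ((n:ℝ)+1) * (2 * ‖y‖) * (2 ^ n * r ^ n)
              = (((n:ℝ)+1) * 2 ^ (n+1)) * ‖y‖ * r ^ n := by
            rw [pow_succ]; ring
          have h4 : (0:ℝ) ≤ ‖y‖ * r ^ n := by positivity
          push_cast
          nlinarith [key, h3, e2, h4]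

/-- if `d - 1 < β < d`, `φ ∈ L¹(ℝ^d)` is centered (`∫ φ = 0`) and has a finite
first moment (`∫ ‖y‖ |φ(y)| dy < ∞`), then the signed measure with density `φ`
belongs to `M_{α,β}`. -/
theorem statement7 (d : ℕ) (hd : 1 ≤ d) (α β : ℝ) (hα1 : 1 < α) (hα2 : α ≤ 2)
    (hβ1 : (d : ℝ) - 1 < β) (hβ2 : β < d)
    (φ : EuclideanSpace ℝ (Fin d) → ℝ)
    (hφ1 : MeasureTheory.Integrable φ)
    (hφ0 : ∫ y : EuclideanSpace ℝ (Fin d), φ y = 0)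
    (hφmom : MeasureTheory.Integrable (fun y : EuclideanSpace ℝ (Fin d) => ‖y‖ * |φ y|)) :
    MemM d α β (volume.withDensityᵥ φ) := by
  classical
  have hd1 : (1:ℝ) ≤ (d:ℝ) := by exact_mod_cast hd
  haveI : Nontrivial (EuclideanSpace ℝ (Fin d)) :=
    Module.nontrivial_of_finrank_pos (R := ℝ) (by rw [finrank_euclideanSpace_fin]; omega)
  have hVtop : volume (Metric.ball (0 : EuclideanSpace ℝ (Fin d)) 1) ≠ ⊤ :=
    measure_ball_lt_top.ne
  set Vr : ℝ := (volume (Metric.ball (0 : EuclideanSpace ℝ (Fin d)) 1)).toReal with hVrdef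
  have hVr0 : 0 ≤ Vr := ENNReal.toReal_nonneg
  have hVeq : volume (Metric.ball (0 : EuclideanSpace ℝ (Fin d)) 1) = ENNReal.ofReal Vr :=
    (ENNReal.ofReal_toReal hVtop).symm
  set N1 : ℝ := ∫ y, |φ y| with hN1def
  set M1 : ℝ := ∫ y, ‖y‖ * |φ y| with hM1def
  have hN10 : 0 ≤ N1 := integral_nonneg fun y => abs_nonneg _
  have hM10 : 0 ≤ M1 := integral_nonneg fun y => mul_nonneg (norm_nonneg _) (abs_nonneg _)
  set cd : ℝ := (d : ℝ) * 2 ^ d + 2 with hcddef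
  have hcd0 : (0:ℝ) < cd := by rw [hcddef]; positivity
  refine ⟨N1 ^ (α - 1) * (N1 * Vr + cd * M1 * Vr), ((d:ℝ) - 1 + β) / 2, (d:ℝ),
    by linarith, by linarith, hβ2, ?_⟩
  intro r hr
  set g : EuclideanSpace ℝ (Fin d) → ℝ := fun x => ∫ y in Metric.ball x r, φ y with hgdef
  have hμb : ∀ x : EuclideanSpace ℝ (Fin d),
      (volume.withDensityᵥ φ) (Metric.ball x r) = g x :=
    fun x => withDensityᵥ_apply hφ1 measurableSet_ball
  -- measurable sets
  have hS1 : MeasurableSet {p : EuclideanSpace ℝ (Fin d) × EuclideanSpace ℝ (Fin d) |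
      dist p.2 p.1 < r} :=
    measurableSet_lt (measurable_snd.dist measurable_fst) measurable_const
  have hS2 : MeasurableSet {p : EuclideanSpace ℝ (Fin d) × EuclideanSpace ℝ (Fin d) |
      ‖p.1‖ < r} := measurableSet_lt measurable_fst.norm measurable_const
  set h : EuclideanSpace ℝ (Fin d) × EuclideanSpace ℝ (Fin d) → ℝ :=
    fun p => (if dist p.2 p.1 < r then (1:ℝ) else 0) - (if ‖p.1‖ < r then (1:ℝ) else 0)
    with hhdef
  have hh : Measurable h :=
    (Measurable.ite hS1 measurable_const measurable_const).sub
      (Measurable.ite hS2 measurable_const measurable_const)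
  have hind : ∀ x : EuclideanSpace ℝ (Fin d),
      (fun y => φ y * (if dist y x < r then (1:ℝ) else 0)) = (Metric.ball x r).indicator φ := by
    intro x; funext y
    by_cases hxy : dist y x < r
    · simp [Set.indicator_of_mem, Metric.mem_ball, hxy]
    · simp [Set.indicator_of_notMem, Metric.mem_ball, hxy]
  have hga : ∀ x, g x = ∫ y, φ y * (if dist y x < r then (1:ℝ) else 0) := by
    intro x
    rw [hind x, integral_indicator measurableSet_ball]
  have hgrep : ∀ x, g x = ∫ y, φ y * h (x, y) := by
    intro x
    have h1i : Integrable (fun y => φ y * (if dist y x < r then (1:ℝ) else 0)) := by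
      rw [hind x]; exact hφ1.indicator measurableSet_ball
    have h2i : Integrable (fun y : EuclideanSpace ℝ (Fin d) =>
        φ y * (if ‖x‖ < r then (1:ℝ) else 0)) := hφ1.mul_const _
    have e : (fun y => φ y * h (x, y))
        = fun y => φ y * (if dist y x < r then (1:ℝ) else 0)
            - φ y * (if ‖x‖ < r then (1:ℝ) else 0) := by
      funext y; simp only [hhdef]; ring
    rw [e, integral_sub h1i h2i, integral_mul_const, hφ0, zero_mul, sub_zero, ← hga x]
  have hgK : ∀ x, |g x| ≤ N1 := by
    intro x
    calc |g x| = ‖∫ y in Metric.ball x r, φ y‖ := (Real.norm_eq_abs _).symm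
      _ ≤ ∫ y in Metric.ball x r, ‖φ y‖ := norm_integral_le_integral_norm _
      _ = ∫ y in Metric.ball x r, |φ y| := by simp only [Real.norm_eq_abs]
      _ ≤ ∫ y, |φ y| :=
        setIntegral_le_integral hφ1.abs (ae_of_all _ fun y => abs_nonneg _)
  -- kernels
  set k1 : EuclideanSpace ℝ (Fin d) × EuclideanSpace ℝ (Fin d) → ℝ≥0∞ :=
    fun p => (‖if dist p.2 p.1 < r then (1:ℝ) else 0‖₊ : ℝ≥0∞) with hk1def
  set k2 : EuclideanSpace ℝ (Fin d) × EuclideanSpace ℝ (Fin d) → ℝ≥0∞ :=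
    fun p => (‖h p‖₊ : ℝ≥0∞) with hk2def
  have hk1m : Measurable k1 := (Measurable.ite hS1 measurable_const measurable_const).nnnorm.coe_nnreal_ennreal
  have hk2m : Measurable k2 := hh.enorm
  -- swap lemma
  have swapb : ∀ k : EuclideanSpace ℝ (Fin d) × EuclideanSpace ℝ (Fin d) → ℝ≥0∞,
      Measurable k →
      (∫⁻ x, ∫⁻ y, (‖φ y‖₊ : ℝ≥0∞) * k (x, y))
        = ∫⁻ y, (‖φ y‖₊ : ℝ≥0∞) * ∫⁻ x, k (x, y) := by
    intro k hk
    have h1 : AEMeasurable (fun p : EuclideanSpace ℝ (Fin d) × EuclideanSpace ℝ (Fin d) =>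
        (‖φ p.2‖₊ : ℝ≥0∞) * k p) (volume.prod volume) := by
      refine AEMeasurable.mul ?_ hk.aemeasurable
      exact (hφ1.aestronglyMeasurable.enorm).comp_quasiMeasurePreserving
        Measure.quasiMeasurePreserving_snd
    rw [lintegral_lintegral_swap h1]
    exact lintegral_congr fun y => lintegral_const_mul' _ _ ENNReal.coe_ne_top
  -- pointwise lintegral bounds
  have hpt1 : ∀ x, (‖g x‖₊ : ℝ≥0∞) ≤ ∫⁻ y, (‖φ y‖₊ : ℝ≥0∞) * k1 (x, y) := by
    intro x
    rw [hga x]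
    calc (‖∫ y, φ y * (if dist y x < r then (1:ℝ) else 0)‖₊ : ℝ≥0∞)
        ≤ ∫⁻ y, (‖φ y * (if dist y x < r then (1:ℝ) else 0)‖₊ : ℝ≥0∞) :=
          enorm_integral_le_lintegral_enorm _
      _ = ∫⁻ y, (‖φ y‖₊ : ℝ≥0∞) * k1 (x, y) :=
          lintegral_congr fun y => by rw [nnnorm_mul, ENNReal.coe_mul]
  have hpt2 : ∀ x, (‖g x‖₊ : ℝ≥0∞) ≤ ∫⁻ y, (‖φ y‖₊ : ℝ≥0∞) * k2 (x, y) := by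
    intro x
    rw [hgrep x]
    calc (‖∫ y, φ y * h (x, y)‖₊ : ℝ≥0∞)
        ≤ ∫⁻ y, (‖φ y * h (x, y)‖₊ : ℝ≥0∞) := enorm_integral_le_lintegral_enorm _
      _ = ∫⁻ y, (‖φ y‖₊ : ℝ≥0∞) * k2 (x, y) :=
          lintegral_congr fun y => by rw [nnnorm_mul, ENNReal.coe_mul]
  -- inner integrals
  have hin1 : ∀ y, (∫⁻ x, k1 (x, y)) = volume (Metric.ball y r) := by
    intro y
    have e : ∀ x, k1 (x, y) = (Metric.ball y r).indicator (fun _ => (1:ℝ≥0∞)) x := by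
      intro x
      by_cases hxy : dist y x < r
      · have hx : x ∈ Metric.ball y r := by rw [Metric.mem_ball, dist_comm]; exact hxy
        simp [hk1def, hxy, Set.indicator_of_mem hx]
      · have hx : x ∉ Metric.ball y r := by rw [Metric.mem_ball, dist_comm]; exact hxy
        simp [hk1def, hxy, Set.indicator_of_notMem hx]
    rw [lintegral_congr e]
    exact lintegral_indicator_one measurableSet_ball
  have hin2 : ∀ y, (∫⁻ x, k2 (x, y))
      ≤ volume (symmDiff (Metric.ball y r) (Metric.ball (0 : EuclideanSpace ℝ (Fin d)) r)) := by
    intro y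
    have e : ∀ x, k2 (x, y) ≤ (symmDiff (Metric.ball y r)
        (Metric.ball (0 : EuclideanSpace ℝ (Fin d)) r)).indicator (fun _ => (1:ℝ≥0∞)) x := by
      intro x
      have hA : x ∈ Metric.ball y r ↔ dist y x < r := by rw [Metric.mem_ball, dist_comm]
      have hB : x ∈ Metric.ball (0 : EuclideanSpace ℝ (Fin d)) r ↔ ‖x‖ < r :=
        mem_ball_zero_iff
      by_cases hx : x ∈ symmDiff (Metric.ball y r) (Metric.ball (0:EuclideanSpace ℝ (Fin d)) r)
      · rw [Set.indicator_of_mem hx]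
        by_cases h1 : dist y x < r <;> by_cases h2 : ‖x‖ < r <;>
          simp [hk2def, hhdef, h1, h2]
      · rw [Set.indicator_of_notMem hx]
        rw [Set.mem_symmDiff] at hx
        push_neg at hx
        have : h (x, y) = 0 := by
          by_cases h1 : dist y x < r <;> by_cases h2 : ‖x‖ < r <;>
            simp only [hhdef, h1, h2, if_true, if_false] <;> try ring
          · exact absurd (hx.1 (hA.mpr h1)) (by simpa [hB] using h2)
          · exact absurd (hx.2 (hB.mpr h2)) (by simpa [hA] using h1)
        simp [hk2def, this]
    calc (∫⁻ x, k2 (x, y)) ≤ ∫⁻ x, (symmDiff (Metric.ball y r)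
        (Metric.ball (0 : EuclideanSpace ℝ (Fin d)) r)).indicator (fun _ => (1:ℝ≥0∞)) x :=
        lintegral_mono e
      _ = _ := lintegral_indicator_one (measurableSet_ball.symmDiff measurableSet_ball)
  -- estimate (a)
  have hLa : (∫⁻ x, (‖g x‖₊ : ℝ≥0∞)) ≤ ENNReal.ofReal (N1 * Vr * r ^ d) := by
    calc (∫⁻ x, (‖g x‖₊ : ℝ≥0∞)) ≤ ∫⁻ x, ∫⁻ y, (‖φ y‖₊ : ℝ≥0∞) * k1 (x, y) :=
        lintegral_mono hpt1
      _ = ∫⁻ y, (‖φ y‖₊ : ℝ≥0∞) * ∫⁻ x, k1 (x, y) := swapb k1 hk1m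
      _ = ∫⁻ y, (‖φ y‖₊ : ℝ≥0∞) * (ENNReal.ofReal (r ^ d) * ENNReal.ofReal Vr) := by
          refine lintegral_congr fun y => ?_
          rw [hin1 y, Measure.addHaar_ball _ _ hr.le, finrank_euclideanSpace_fin, hVeq]
      _ = (ENNReal.ofReal (r ^ d) * ENNReal.ofReal Vr) * ∫⁻ y, (‖φ y‖₊ : ℝ≥0∞) := by
          rw [lintegral_mul_const' _ _ (ENNReal.mul_ne_top ENNReal.ofReal_ne_top
            ENNReal.ofReal_ne_top), mul_comm]
      _ = (ENNReal.ofReal (r ^ d) * ENNReal.ofReal Vr) * ENNReal.ofReal N1 := by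
          congr 1
          simp only [← enorm_eq_nnnorm]
          rw [← ofReal_integral_norm_eq_lintegral_enorm hφ1, hN1def]
          simp only [Real.norm_eq_abs]
      _ ≤ ENNReal.ofReal (N1 * Vr * r ^ d) := by
          rw [← ENNReal.ofReal_mul (by positivity), ← ENNReal.ofReal_mul (by positivity)]
          exact ENNReal.ofReal_le_ofReal (le_of_eq (by ring))
  -- estimate (b)
  have hLb : (∫⁻ x, (‖g x‖₊ : ℝ≥0∞)) ≤ ENNReal.ofReal (cd * M1 * Vr * r ^ (d - 1)) := by
    have hcdr : (0:ℝ) ≤ cd * r ^ (d-1) := mul_nonneg hcd0.le (pow_nonneg hr.le _)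
    calc (∫⁻ x, (‖g x‖₊ : ℝ≥0∞)) ≤ ∫⁻ x, ∫⁻ y, (‖φ y‖₊ : ℝ≥0∞) * k2 (x, y) :=
        lintegral_mono hpt2
      _ = ∫⁻ y, (‖φ y‖₊ : ℝ≥0∞) * ∫⁻ x, k2 (x, y) := swapb k2 hk2m
      _ ≤ ∫⁻ y, (‖φ y‖₊ : ℝ≥0∞) * (ENNReal.ofReal (cd * ‖y‖ * r ^ (d-1))
            * ENNReal.ofReal Vr) := by
          refine lintegral_mono fun y => mul_le_mul_of_nonneg_left ?_ (zero_le)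
          refine (hin2 y).trans ?_
          have := sd_vol d hd hr y
          rw [hVeq, ← hcddef] at this
          exact this
      _ = ∫⁻ y, (ENNReal.ofReal (cd * r ^ (d-1) * Vr))
            * (ENNReal.ofReal ‖y‖ * (‖φ y‖₊ : ℝ≥0∞)) := by
          refine lintegral_congr fun y => ?_
          have e1 : ENNReal.ofReal (cd * ‖y‖ * r ^ (d-1))
              = ENNReal.ofReal (cd * r ^ (d-1)) * ENNReal.ofReal ‖y‖ := by
            rw [← ENNReal.ofReal_mul hcdr]; ring_nf
          have e2 : ENNReal.ofReal (cd * r ^ (d-1) * Vr)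
              = ENNReal.ofReal (cd * r ^ (d-1)) * ENNReal.ofReal Vr :=
            ENNReal.ofReal_mul hcdr
          rw [e1, e2]; ring
      _ = (ENNReal.ofReal (cd * r ^ (d-1) * Vr))
            * ∫⁻ y, ENNReal.ofReal ‖y‖ * (‖φ y‖₊ : ℝ≥0∞) :=
          lintegral_const_mul' _ _ ENNReal.ofReal_ne_top
      _ = (ENNReal.ofReal (cd * r ^ (d-1) * Vr)) * ENNReal.ofReal M1 := by
          congr 1
          have e3 : ∀ y : EuclideanSpace ℝ (Fin d),
              ENNReal.ofReal ‖y‖ * (‖φ y‖₊ : ℝ≥0∞) = (‖‖y‖ * |φ y|‖₊ : ℝ≥0∞) := by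
            intro y
            rw [nnnorm_mul, ENNReal.coe_mul, ← enorm_eq_nnnorm ‖y‖, Real.enorm_eq_ofReal (norm_nonneg y)]
            congr 1
            simp
          rw [lintegral_congr e3]
          simp only [← enorm_eq_nnnorm]
          rw [← ofReal_integral_norm_eq_lintegral_enorm hφmom, hM1def]
          congr 1
          have e4 : (fun y : EuclideanSpace ℝ (Fin d) => ‖‖y‖ * |φ y|‖)
              = fun y => ‖y‖ * |φ y| :=
            funext fun y => Real.norm_of_nonneg (mul_nonneg (norm_nonneg _) (abs_nonneg _))
          rw [e4]
      _ ≤ ENNReal.ofReal (cd * M1 * Vr * r ^ (d-1)) := by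
          rw [← ENNReal.ofReal_mul (mul_nonneg hcdr hVr0)]
          exact ENNReal.ofReal_le_ofReal (le_of_eq (by ring))
  -- measurability and integrability of g
  have hgm : AEStronglyMeasurable g (volume : Measure (EuclideanSpace ℝ (Fin d))) := by
    have h1 : AEStronglyMeasurable
        (fun p : EuclideanSpace ℝ (Fin d) × EuclideanSpace ℝ (Fin d) =>
          φ p.2 * (if dist p.2 p.1 < r then (1:ℝ) else 0)) (volume.prod volume) := by
      refine AEStronglyMeasurable.mul ?_
        ((Measurable.ite hS1 measurable_const measurable_const).aestronglyMeasurable)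
      exact hφ1.aestronglyMeasurable.comp_quasiMeasurePreserving
        Measure.quasiMeasurePreserving_snd
    have h2 := h1.integral_prod_right'
    exact h2.congr (ae_of_all _ fun x => (hga x).symm)
  have hgi : Integrable g := ⟨hgm, lt_of_le_of_lt hLa ENNReal.ofReal_lt_top⟩
  have hFeq : (∫ x, |g x|) = (∫⁻ x, (‖g x‖₊ : ℝ≥0∞)).toReal := by
    simp only [← enorm_eq_nnnorm]
    rw [← integral_norm_eq_lintegral_enorm hgm]
    simp only [Real.norm_eq_abs]
  have hFa : (∫ x, |g x|) ≤ N1 * Vr * r ^ d := by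
    rw [hFeq]
    exact ENNReal.toReal_le_of_le_ofReal (by positivity) hLa
  have hFb : (∫ x, |g x|) ≤ cd * M1 * Vr * r ^ (d - 1) := by
    rw [hFeq]
    exact ENNReal.toReal_le_of_le_ofReal
      (mul_nonneg (mul_nonneg (mul_nonneg hcd0.le hM10) hVr0) (pow_nonneg hr.le _)) hLb
  -- main chain
  have hmain : (∫ x, |(volume.withDensityᵥ φ) (Metric.ball x r)| ^ α)
      ≤ N1 ^ (α - 1) * ∫ x, |g x| := by
    have hpw : ∀ x, |g x| ^ α ≤ N1 ^ (α - 1) * |g x| := by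
      intro x
      rcases eq_or_lt_of_le (abs_nonneg (g x)) with h0 | h0
      · rw [← h0, Real.zero_rpow (by linarith : α ≠ 0), mul_zero]
      · have e : |g x| ^ (α - 1) * |g x| = |g x| ^ α := by
          have e2 := Real.rpow_add h0 (α - 1) 1
          rw [Real.rpow_one] at e2
          rw [← e2]; norm_num
        rw [← e]
        exact mul_le_mul_of_nonneg_right
          (Real.rpow_le_rpow (abs_nonneg _) (hgK x) (by linarith)) (abs_nonneg _)
    calc (∫ x, |(volume.withDensityᵥ φ) (Metric.ball x r)| ^ α)
        = ∫ x, |g x| ^ α := by simp only [hμb]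
      _ ≤ ∫ x, N1 ^ (α - 1) * |g x| :=
        integral_mono_of_nonneg (ae_of_all _ fun x => Real.rpow_nonneg (abs_nonneg _) α)
          ((hgi.abs).const_mul _) (ae_of_all _ hpw)
      _ = N1 ^ (α - 1) * ∫ x, |g x| := integral_const_mul _ _
  have hrpow : (0:ℝ) ≤ N1 ^ (α - 1) := Real.rpow_nonneg hN10 _
  have hcM : (0:ℝ) ≤ cd * M1 * Vr := mul_nonneg (mul_nonneg hcd0.le hM10) hVr0
  have hNV : (0:ℝ) ≤ N1 * Vr := mul_nonneg hN10 hVr0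
  rcases le_total r 1 with h1 | h1
  · rw [min_eq_right (Real.rpow_le_rpow_of_exponent_ge hr h1 (by linarith)),
      Real.rpow_natCast]
    calc (∫ x, |(volume.withDensityᵥ φ) (Metric.ball x r)| ^ α)
        ≤ N1 ^ (α - 1) * ∫ x, |g x| := hmain
      _ ≤ N1 ^ (α - 1) * (N1 * Vr * r ^ d) := mul_le_mul_of_nonneg_left hFa hrpow
      _ ≤ N1 ^ (α - 1) * ((N1 * Vr + cd * M1 * Vr) * r ^ d) :=
          mul_le_mul_of_nonneg_left (mul_le_mul_of_nonneg_right
            (le_add_of_nonneg_right hcM) (pow_nonneg hr.le d)) hrpow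
      _ = N1 ^ (α - 1) * (N1 * Vr + cd * M1 * Vr) * r ^ d := by ring
  · have hple : ((d:ℝ) - 1 + β) / 2 ≤ (d:ℝ) := by linarith
    rw [min_eq_left (Real.rpow_le_rpow_of_exponent_le h1 hple)]
    have hd1' : ((d - 1 : ℕ) : ℝ) = (d:ℝ) - 1 := by
      rw [Nat.cast_sub hd, Nat.cast_one]
    have hrd1 : r ^ (d - 1) = r ^ ((d:ℝ) - 1) := by
      rw [← Real.rpow_natCast r (d-1), hd1']
    have hppow : r ^ ((d:ℝ) - 1) ≤ r ^ (((d:ℝ) - 1 + β) / 2) :=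
      Real.rpow_le_rpow_of_exponent_le h1 (by linarith)
    calc (∫ x, |(volume.withDensityᵥ φ) (Metric.ball x r)| ^ α)
        ≤ N1 ^ (α - 1) * ∫ x, |g x| := hmain
      _ ≤ N1 ^ (α - 1) * (cd * M1 * Vr * r ^ (d - 1)) := mul_le_mul_of_nonneg_left hFb hrpow
      _ = N1 ^ (α - 1) * (cd * M1 * Vr) * r ^ ((d:ℝ) - 1) := by rw [hrd1]; ring
      _ ≤ N1 ^ (α - 1) * (cd * M1 * Vr) * r ^ (((d:ℝ) - 1 + β) / 2) :=
          mul_le_mul_of_nonneg_left hppow (mul_nonneg hrpow hcM)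
      _ ≤ N1 ^ (α - 1) * (N1 * Vr + cd * M1 * Vr) * r ^ (((d:ℝ) - 1 + β) / 2) := by
          refine mul_le_mul_of_nonneg_right ?_ (Real.rpow_nonneg hr.le _)
          exact mul_le_mul_of_nonneg_left (le_add_of_nonneg_left hNV) hrpow
end
end

section
/- Let d ≥ 1 be an integer, 1 < α ≤ 2 and d − 1 < β < d. Every centered finite signed measure with finite support belongs to M_{α,β}: if μ = Σ_{i=1}^p w_i δ_{a_i} with distinct points a_1, …, a_p ∈ ℝ^d, weights w_1, …, w_p ∈ ℝ and Σ_{i=1}^p w_i = 0, then μ ∈ M_{α,β}. -/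
open MeasureTheory Filter Set
open scoped ENNReal Topology

noncomputable section

/-- `x^d - y^d ≤ d * x^(d-1) * (x - y)` for `0 ≤ y ≤ x`. -/
lemma aux_pow_diff (d : ℕ) (x y : ℝ) (hy : 0 ≤ y) (hxy : y ≤ x) :
    x ^ d - y ^ d ≤ (d : ℝ) * x ^ (d - 1) * (x - y) := by
  have hx : 0 ≤ x := hy.trans hxy
  have h := geom_sum₂_mul x y d
  rw [← h]
  have hsum : (∑ i ∈ Finset.range d, x ^ i * y ^ (d - 1 - i)) ≤ (d : ℝ) * x ^ (d - 1) := by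
    calc (∑ i ∈ Finset.range d, x ^ i * y ^ (d - 1 - i))
        ≤ ∑ _i ∈ Finset.range d, x ^ (d - 1) := by
          refine Finset.sum_le_sum fun i hi => ?_
          have hi' : i < d := Finset.mem_range.mp hi
          have h1 : y ^ (d - 1 - i) ≤ x ^ (d - 1 - i) := pow_le_pow_left₀ hy hxy _
          have h2 : x ^ i * y ^ (d - 1 - i) ≤ x ^ i * x ^ (d - 1 - i) :=
            mul_le_mul_of_nonneg_left h1 (pow_nonneg hx i)
          have h3 : x ^ i * x ^ (d - 1 - i) = x ^ (d - 1) := by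
            rw [← pow_add]; congr 1; omega
          linarith
      _ = (d : ℝ) * x ^ (d - 1) := by
          rw [Finset.sum_const, Finset.card_range, nsmul_eq_mul]
  have hxy' : 0 ≤ x - y := sub_nonneg.mpr hxy
  exact mul_le_mul_of_nonneg_right hsum hxy'

/-- `s^α ≤ M^(α-1) * s` for `0 ≤ s ≤ M` and `α ≥ 1`. -/
lemma aux_rpow_le (α M s : ℝ) (hα : 1 ≤ α) (hs : 0 ≤ s) (hsM : s ≤ M) :
    s ^ α ≤ M ^ (α - 1) * s := by
  rcases eq_or_lt_of_le hs with h0 | h0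
  · rw [← h0, Real.zero_rpow (by linarith), mul_zero]
  · have hM : 0 < M := lt_of_lt_of_le h0 hsM
    have h1 : s ^ α = s ^ (α - 1) * s := by
      rw [show α = (α - 1) + 1 by ring, Real.rpow_add h0, Real.rpow_one]
      ring_nf
    rw [h1]
    have h2 : s ^ (α - 1) ≤ M ^ (α - 1) :=
      Real.rpow_le_rpow hs hsM (by linarith)
    exact mul_le_mul_of_nonneg_right h2 hs

/-- If `x` is in the symmetric difference of `ball c r` and `ball 0 r`, it lies in the
annulus `ball 0 (r + ‖c‖) \ ball 0 (max (r - ‖c‖) 0)`. -/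
lemma aux_symdiff {E : Type*} [NormedAddCommGroup E] (r : ℝ) (c x : E)
    (h : ¬(x ∈ Metric.ball c r ↔ x ∈ Metric.ball (0 : E) r)) :
    x ∈ Metric.ball (0 : E) (r + ‖c‖) \ Metric.ball (0 : E) (max (r - ‖c‖) 0) := by
  rw [Metric.mem_ball, Metric.mem_ball, dist_eq_norm, dist_zero_right] at h
  simp only [Set.mem_diff, Metric.mem_ball, dist_zero_right, not_lt]
  have hc : 0 ≤ ‖c‖ := norm_nonneg c
  have hxc1 : ‖x‖ ≤ ‖x - c‖ + ‖c‖ := by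
    have h0 := norm_add_le (x - c) c
    rwa [sub_add_cancel] at h0
  have hxc2 : ‖x - c‖ ≤ ‖x‖ + ‖c‖ := norm_sub_le x c
  by_cases h1 : ‖x - c‖ < r
  · have h2 : r ≤ ‖x‖ := not_lt.mp fun hh => h ⟨fun _ => hh, fun _ => h1⟩
    exact ⟨by linarith, max_le (by linarith) (norm_nonneg x)⟩
  · have h2 : ‖x‖ < r := by
      by_contra hh
      exact h (iff_of_false h1 hh)
    push_neg at h1
    exact ⟨by linarith, max_le (by linarith) (norm_nonneg x)⟩

set_option maxHeartbeats 2000000 in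
/-- if `d - 1 < β < d`, every centered finite signed measure with finite
support, `μ = Σᵢ wᵢ δ_{aᵢ}` with `Σᵢ wᵢ = 0`, belongs to `M_{α,β}`. -/
theorem statement8 (d : ℕ) (hd : 1 ≤ d) (α β : ℝ) (hα1 : 1 < α) (hα2 : α ≤ 2)
    (hβ1 : (d : ℝ) - 1 < β) (hβ2 : β < d)
    (p : ℕ) (a : Fin p → EuclideanSpace ℝ (Fin d)) (ha : Function.Injective a)
    (w : Fin p → ℝ) (hw : ∑ i, w i = 0) :
    MemM d α β (∑ i, w i • (MeasureTheory.Measure.dirac (a i)).toSignedMeasure) := by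
  classical
  haveI : NeZero d := ⟨by omega⟩
  set μ : SignedMeasure (EuclideanSpace ℝ (Fin d)) := ∑ i, w i • (Measure.dirac (a i)).toSignedMeasure with hμ
  -- basic notation
  set M : ℝ := ∑ i, |w i| with hMdef
  have hM : 0 ≤ M := Finset.sum_nonneg fun i _ => abs_nonneg _
  set kinf : ℝ≥0∞ := volume (Metric.ball (0 : (EuclideanSpace ℝ (Fin d))) 1) with hkinf
  set κ : ℝ := kinf.toReal with hκ
  have hκfin : kinf ≠ ⊤ := measure_ball_lt_top.ne
  have hκ0 : 0 ≤ κ := ENNReal.toReal_nonneg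
  -- volume of balls
  have hvol : ∀ (c : (EuclideanSpace ℝ (Fin d))) (r : ℝ), 0 ≤ r →
      volume (Metric.ball c r) = ENNReal.ofReal (r ^ d) * kinf := by
    intro c r hr
    rw [Measure.addHaar_ball volume c hr, finrank_euclideanSpace_fin]
  -- application formula
  have happ : ∀ (x : (EuclideanSpace ℝ (Fin d))) (r : ℝ), μ (Metric.ball x r)
      = ∑ i, w i * (Metric.ball (a i) r).indicator (fun _ => (1 : ℝ)) x := by
    intro x r
    have h1 : ⇑μ = ∑ i, ⇑(w i • (Measure.dirac (a i)).toSignedMeasure) := by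
      rw [hμ]; exact map_sum (FunLike.coeAddMonoidHom (SignedMeasure (EuclideanSpace ℝ (Fin d))) (Set (EuclideanSpace ℝ (Fin d))) ℝ) _ Finset.univ
    rw [h1, Finset.sum_apply]
    refine Finset.sum_congr rfl fun i _ => ?_
    rw [VectorMeasure.smul_apply,
      Measure.toSignedMeasure_apply_measurable measurableSet_ball, measureReal_def,
      Measure.dirac_apply' _ measurableSet_ball]
    by_cases hmem : a i ∈ Metric.ball x r
    · have hmem' : x ∈ Metric.ball (a i) r := Metric.mem_ball_comm.mp hmem
      simp [Set.indicator_of_mem, hmem, hmem', smul_eq_mul]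
    · have hmem' : x ∉ Metric.ball (a i) r := fun h => hmem (Metric.mem_ball_comm.mp h)
      simp [Set.indicator_of_notMem, hmem, hmem', smul_eq_mul]
  -- global bound on |μ(B(x,r))|
  have habs : ∀ (x : (EuclideanSpace ℝ (Fin d))) (r : ℝ), |μ (Metric.ball x r)| ≤ M := by
    intro x r
    rw [happ]
    refine (Finset.abs_sum_le_sum_abs _ _).trans (Finset.sum_le_sum fun i _ => ?_)
    rw [abs_mul]
    have h1 : |(Metric.ball (a i) r).indicator (fun _ => (1:ℝ)) x| ≤ 1 := by
      rw [Set.indicator_apply]; split_ifs <;> norm_num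
    calc |w i| * |(Metric.ball (a i) r).indicator (fun _ => (1:ℝ)) x|
        ≤ |w i| * 1 := mul_le_mul_of_nonneg_left h1 (abs_nonneg _)
      _ = |w i| := mul_one _
  -- cancelled form
  have happ2 : ∀ (x : (EuclideanSpace ℝ (Fin d))) (r : ℝ), μ (Metric.ball x r)
      = ∑ i, w i * ((Metric.ball (a i) r).indicator (fun _ => (1 : ℝ)) x
          - (Metric.ball (0 : (EuclideanSpace ℝ (Fin d))) r).indicator (fun _ => (1 : ℝ)) x) := by
    intro x r
    rw [happ]
    have : ∑ i, w i * ((Metric.ball (a i) r).indicator (fun _ => (1 : ℝ)) x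
          - (Metric.ball (0 : (EuclideanSpace ℝ (Fin d))) r).indicator (fun _ => (1 : ℝ)) x)
        = ∑ i, w i * (Metric.ball (a i) r).indicator (fun _ => (1 : ℝ)) x
          - (∑ i, w i) * (Metric.ball (0 : (EuclideanSpace ℝ (Fin d))) r).indicator (fun _ => (1 : ℝ)) x := by
      rw [Finset.sum_mul, ← Finset.sum_sub_distrib]
      exact Finset.sum_congr rfl fun i _ => by ring
    rw [this, hw, zero_mul, sub_zero]
  -- exponents
  have hd1 : (0 : ℝ) ≤ (d : ℝ) - 1 := by
    have : (1 : ℝ) ≤ (d : ℝ) := by exact_mod_cast hd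
    linarith
  have hβ0 : 0 < β := lt_of_le_of_lt hd1 hβ1
  set pe : ℝ := ((d : ℝ) - 1 + β) / 2 with hpe
  have hpe0 : 0 < pe := by rw [hpe]; linarith
  have hpeβ : pe < β := by rw [hpe]; linarith
  have hpeg : (d : ℝ) - 1 ≤ pe := by rw [hpe]; linarith
  have hped : pe ≤ (d : ℝ) := by rw [hpe]; linarith
  -- constants
  set C₁ : ℝ := (p : ℝ) * κ * M ^ α with hC₁
  set C₂ : ℝ := ∑ i, (2 * (d : ℝ) * ‖a i‖ * (1 + ‖a i‖) ^ (d - 1) * κ)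
      * (M ^ (α - 1) * |w i|) with hC₂
  have hC₁0 : 0 ≤ C₁ := by
    have : (0:ℝ) ≤ M ^ α := Real.rpow_nonneg hM α
    positivity
  have hC₂0 : 0 ≤ C₂ := by
    refine Finset.sum_nonneg fun i _ => ?_
    have h1 : (0:ℝ) ≤ M ^ (α - 1) := Real.rpow_nonneg hM _
    have h2 : (0:ℝ) ≤ ‖a i‖ := norm_nonneg _
    have h3 : (0:ℝ) ≤ (1 + ‖a i‖) ^ (d-1) := by positivity
    positivity
  -- Bound A: valid for all r > 0
  have boundA : ∀ r : ℝ, 0 < r →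
      (∫ x : (EuclideanSpace ℝ (Fin d)), |μ (Metric.ball x r)| ^ α) ≤ C₁ * r ^ d := by
    intro r hr
    set g : (EuclideanSpace ℝ (Fin d)) → ℝ := fun x => ∑ i, (Metric.ball (a i) r).indicator (fun _ => M ^ α) x with hg
    have hgint : Integrable g := by
      refine integrable_finset_sum _ fun i _ => ?_
      rw [integrable_indicator_iff measurableSet_ball]
      exact integrableOn_const measure_ball_lt_top.ne
    have hfg : ∀ x : (EuclideanSpace ℝ (Fin d)), |μ (Metric.ball x r)| ^ α ≤ g x := by
      intro x
      have hgx : g x = ∑ i, (Metric.ball (a i) r).indicator (fun _ => M ^ α) x := rfl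
      by_cases hx : ∃ i, x ∈ Metric.ball (a i) r
      · obtain ⟨i₀, hi₀⟩ := hx
        have h1 : |μ (Metric.ball x r)| ^ α ≤ M ^ α :=
          Real.rpow_le_rpow (abs_nonneg _) (habs x r) (by linarith)
        have h3 := Finset.single_le_sum
          (f := fun i => (Metric.ball (a i) r).indicator (fun _ => M ^ α) x)
          (fun i _ => Set.indicator_nonneg (fun _ _ => Real.rpow_nonneg hM α) x)
          (Finset.mem_univ i₀)
        simp only [Set.indicator_of_mem hi₀] at h3
        linarith
      · push_neg at hx
        have h0 : μ (Metric.ball x r) = 0 := by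
          rw [happ]
          exact Finset.sum_eq_zero fun i _ => by
            rw [Set.indicator_of_notMem (hx i), mul_zero]
        rw [h0, abs_zero, Real.zero_rpow (by linarith : α ≠ 0), hgx]
        exact Finset.sum_nonneg fun i _ =>
          Set.indicator_nonneg (fun _ _ => Real.rpow_nonneg hM α) x
    calc (∫ x : (EuclideanSpace ℝ (Fin d)), |μ (Metric.ball x r)| ^ α) ≤ ∫ x, g x :=
          integral_mono_of_nonneg
            (ae_of_all _ fun x => Real.rpow_nonneg (abs_nonneg _) α)
            hgint (ae_of_all _ hfg)
      _ = ∑ i, (volume (Metric.ball (a i) r)).toReal * M ^ α := by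
          simp only [hg]
          rw [integral_finset_sum _ (fun i _ => by
            rw [integrable_indicator_iff measurableSet_ball]
            exact integrableOn_const measure_ball_lt_top.ne)]
          exact Finset.sum_congr rfl fun i _ => by
            rw [integral_indicator_const _ measurableSet_ball, smul_eq_mul, measureReal_def]
      _ = C₁ * r ^ d := by
          have hvr : ∀ i : Fin p, (volume (Metric.ball (a i) r)).toReal = r ^ d * κ := by
            intro i
            rw [hvol (a i) r hr.le, ENNReal.toReal_mul,
              ENNReal.toReal_ofReal (pow_nonneg hr.le d)]
          simp only [hvr]
          rw [Finset.sum_const, Finset.card_univ, Fintype.card_fin, nsmul_eq_mul, hC₁]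
          ring
  -- Bound B: valid for r ≥ 1
  have boundB : ∀ r : ℝ, 1 ≤ r →
      (∫ x : (EuclideanSpace ℝ (Fin d)), |μ (Metric.ball x r)| ^ α) ≤ C₂ * r ^ (d - 1) := by
    intro r hr1
    have hr : 0 < r := lt_of_lt_of_le one_pos hr1
    set A : Fin p → Set (EuclideanSpace ℝ (Fin d)) := fun i =>
      Metric.ball (0 : (EuclideanSpace ℝ (Fin d))) (r + ‖a i‖) \ Metric.ball (0 : (EuclideanSpace ℝ (Fin d))) (max (r - ‖a i‖) 0) with hA
    have hAmeas : ∀ i, MeasurableSet (A i) := fun i =>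
      measurableSet_ball.diff measurableSet_ball
    have hAvolfin : ∀ i, volume (A i) < ⊤ := fun i =>
      lt_of_le_of_lt (measure_mono Set.diff_subset) measure_ball_lt_top
    -- pointwise bound via symmetric differences
    have habsA : ∀ x : (EuclideanSpace ℝ (Fin d)), |μ (Metric.ball x r)|
        ≤ ∑ i, |w i| * (A i).indicator (fun _ => (1:ℝ)) x := by
      intro x
      rw [happ2]
      refine (Finset.abs_sum_le_sum_abs _ _).trans (Finset.sum_le_sum fun i _ => ?_)
      rw [abs_mul]
      refine mul_le_mul_of_nonneg_left ?_ (abs_nonneg _)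
      by_cases hxA : x ∈ A i
      · rw [Set.indicator_of_mem hxA]
        rw [Set.indicator_apply, Set.indicator_apply]
        split_ifs <;> norm_num
      · rw [Set.indicator_of_notMem hxA]
        have hiff : x ∈ Metric.ball (a i) r ↔ x ∈ Metric.ball (0 : (EuclideanSpace ℝ (Fin d))) r := by
          by_contra hne
          exact hxA (aux_symdiff r (a i) x hne)
        rw [Set.indicator_apply, Set.indicator_apply]
        by_cases hx1 : x ∈ Metric.ball (a i) r
        · rw [if_pos hx1, if_pos (hiff.mp hx1)]; norm_num
        · rw [if_neg hx1, if_neg (fun h => hx1 (hiff.mpr h))]; norm_num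
    set g : (EuclideanSpace ℝ (Fin d)) → ℝ := fun x => ∑ i, (A i).indicator (fun _ => M ^ (α - 1) * |w i|) x with hg
    have hgint : Integrable g := by
      refine integrable_finset_sum _ fun i _ => ?_
      rw [integrable_indicator_iff (hAmeas i)]
      exact integrableOn_const (hAvolfin i).ne
    have hfg : ∀ x : (EuclideanSpace ℝ (Fin d)), |μ (Metric.ball x r)| ^ α ≤ g x := by
      intro x
      have h1 : |μ (Metric.ball x r)| ^ α ≤ M ^ (α - 1) * |μ (Metric.ball x r)| :=
        aux_rpow_le α M _ hα1.le (abs_nonneg _) (habs x r)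
      have h2 : M ^ (α - 1) * |μ (Metric.ball x r)|
          ≤ M ^ (α - 1) * ∑ i, |w i| * (A i).indicator (fun _ => (1:ℝ)) x :=
        mul_le_mul_of_nonneg_left (habsA x) (Real.rpow_nonneg hM _)
      have hgx : g x = ∑ i, (A i).indicator (fun _ => M ^ (α - 1) * |w i|) x := rfl
      have h3 : M ^ (α - 1) * (∑ i, |w i| * (A i).indicator (fun _ => (1:ℝ)) x)
          = ∑ i, (A i).indicator (fun _ => M ^ (α - 1) * |w i|) x := by
        rw [Finset.mul_sum]
        refine Finset.sum_congr rfl fun i _ => ?_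
        rw [Set.indicator_apply, Set.indicator_apply]
        split_ifs <;> ring
      linarith [hgx, h3]
    -- volume of the annuli
    have hAvol : ∀ i, (volume (A i)).toReal
        ≤ 2 * (d : ℝ) * ‖a i‖ * (1 + ‖a i‖) ^ (d - 1) * r ^ (d - 1) * κ := by
      intro i
      set D : ℝ := ‖a i‖ with hD
      have hD0 : 0 ≤ D := norm_nonneg _
      set b : ℝ := max (r - D) 0 with hb
      have hb0 : 0 ≤ b := le_max_right _ _
      have hbR : b ≤ r + D := max_le (by linarith) (by linarith)
      have hvolA : volume (A i)
          = ENNReal.ofReal ((r + D) ^ d) * kinf - ENNReal.ofReal (b ^ d) * kinf := by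
        rw [hA]
        rw [measure_diff (Metric.ball_subset_ball hbR)
          measurableSet_ball.nullMeasurableSet measure_ball_lt_top.ne]
        rw [hvol _ _ (by linarith), hvol _ _ hb0]
      have hle : ENNReal.ofReal (b ^ d) * kinf ≤ ENNReal.ofReal ((r + D) ^ d) * kinf := by
        refine mul_le_mul_left (ENNReal.ofReal_le_ofReal ?_) _
        exact pow_le_pow_left₀ hb0 hbR d
      have hne : ENNReal.ofReal ((r + D) ^ d) * kinf ≠ ⊤ :=
        ENNReal.mul_ne_top ENNReal.ofReal_ne_top hκfin
      have htoReal : (volume (A i)).toReal = ((r + D) ^ d - b ^ d) * κ := by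
        rw [hvolA, ENNReal.toReal_sub_of_le hle hne, ENNReal.toReal_mul,
          ENNReal.toReal_mul, ENNReal.toReal_ofReal (by positivity),
          ENNReal.toReal_ofReal (pow_nonneg hb0 d)]
        ring
      rw [htoReal]
      refine mul_le_mul_of_nonneg_right ?_ hκ0
      have key : (r + D) ^ d - b ^ d ≤ (d : ℝ) * (r + D) ^ (d - 1) * ((r + D) - b) :=
        aux_pow_diff d (r + D) b hb0 hbR
      have h2D : (r + D) - b ≤ 2 * D := by
        have : r - D ≤ b := le_max_left _ _
        linarith
      have hRd : (r + D) ^ (d - 1) ≤ (1 + D) ^ (d - 1) * r ^ (d - 1) := by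
        have h1 : r + D ≤ (1 + D) * r := by nlinarith
        calc (r + D) ^ (d - 1) ≤ ((1 + D) * r) ^ (d - 1) :=
              pow_le_pow_left₀ (by linarith) h1 _
          _ = (1 + D) ^ (d - 1) * r ^ (d - 1) := mul_pow _ _ _
      have hrd0 : (0:ℝ) ≤ r ^ (d - 1) := pow_nonneg hr.le _
      have h1D0 : (0:ℝ) ≤ (1 + D) ^ (d - 1) := by positivity
      have hRD0 : (0:ℝ) ≤ (r + D) ^ (d - 1) := by positivity
      have hsub0 : 0 ≤ (r + D) - b := by linarith
      calc (r + D) ^ d - b ^ d ≤ (d : ℝ) * (r + D) ^ (d - 1) * ((r + D) - b) := key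
        _ ≤ (d : ℝ) * ((1 + D) ^ (d - 1) * r ^ (d - 1)) * (2 * D) := by
            refine mul_le_mul (mul_le_mul_of_nonneg_left hRd (by positivity)) h2D hsub0 ?_
            positivity
        _ = 2 * (d : ℝ) * D * (1 + D) ^ (d - 1) * r ^ (d - 1) := by ring
    calc (∫ x : (EuclideanSpace ℝ (Fin d)), |μ (Metric.ball x r)| ^ α) ≤ ∫ x, g x :=
          integral_mono_of_nonneg
            (ae_of_all _ fun x => Real.rpow_nonneg (abs_nonneg _) α)
            hgint (ae_of_all _ hfg)
      _ = ∑ i, (volume (A i)).toReal * (M ^ (α - 1) * |w i|) := by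
          simp only [hg]
          rw [integral_finset_sum _ (fun i _ => by
            rw [integrable_indicator_iff (hAmeas i)]
            exact integrableOn_const (hAvolfin i).ne)]
          exact Finset.sum_congr rfl fun i _ => by
            rw [integral_indicator_const _ (hAmeas i), smul_eq_mul, measureReal_def]
      _ ≤ ∑ i, (2 * (d : ℝ) * ‖a i‖ * (1 + ‖a i‖) ^ (d - 1) * r ^ (d - 1) * κ)
            * (M ^ (α - 1) * |w i|) := by
          refine Finset.sum_le_sum fun i _ => ?_
          refine mul_le_mul_of_nonneg_right (hAvol i) ?_
          exact mul_nonneg (Real.rpow_nonneg hM _) (abs_nonneg _)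
      _ = C₂ * r ^ (d - 1) := by
          rw [hC₂, Finset.sum_mul]
          exact Finset.sum_congr rfl fun i _ => by ring
  -- assemble
  refine ⟨C₁ + C₂, pe, (d : ℝ), hpe0, hpeβ, hβ2, ?_⟩
  intro r hr
  show (∫ x : (EuclideanSpace ℝ (Fin d)), |μ (Metric.ball x r)| ^ α) ≤ (C₁ + C₂) * min (r ^ pe) (r ^ (d : ℝ))
  by_cases hr1 : r ≤ 1
  · have hmin : min (r ^ pe) (r ^ (d : ℝ)) = r ^ (d : ℝ) :=
      min_eq_right (Real.rpow_le_rpow_of_exponent_ge hr hr1 hped)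
    rw [hmin]
    have h1 := boundA r hr
    have h2 : r ^ d = r ^ (d : ℝ) := (Real.rpow_natCast r d).symm
    have h3 : (0:ℝ) ≤ r ^ (d : ℝ) := Real.rpow_nonneg hr.le _
    calc (∫ x : (EuclideanSpace ℝ (Fin d)), |μ (Metric.ball x r)| ^ α) ≤ C₁ * r ^ (d : ℝ) := by rw [← h2]; exact h1
      _ ≤ (C₁ + C₂) * r ^ (d : ℝ) :=
          mul_le_mul_of_nonneg_right (by linarith) h3
  · push_neg at hr1
    have hr1' : 1 ≤ r := hr1.le
    have hmin : min (r ^ pe) (r ^ (d : ℝ)) = r ^ pe :=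
      min_eq_left (Real.rpow_le_rpow_of_exponent_le hr1' hped)
    rw [hmin]
    have h1 := boundB r hr1'
    have hcast : ((d - 1 : ℕ) : ℝ) = (d : ℝ) - 1 := by
      rw [Nat.cast_sub hd]; norm_num
    have h2 : r ^ (d - 1) = r ^ ((d : ℝ) - 1) := by
      rw [← Real.rpow_natCast r (d - 1), hcast]
    have h3 : r ^ ((d : ℝ) - 1) ≤ r ^ pe :=
      Real.rpow_le_rpow_of_exponent_le hr1' hpeg
    have h4 : (0:ℝ) ≤ r ^ pe := Real.rpow_nonneg hr.le _
    calc (∫ x : (EuclideanSpace ℝ (Fin d)), |μ (Metric.ball x r)| ^ α) ≤ C₂ * r ^ ((d : ℝ) - 1) := by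
          rw [← h2]; exact h1
      _ ≤ C₂ * r ^ pe := mul_le_mul_of_nonneg_left h3 hC₂0
      _ ≤ (C₁ + C₂) * r ^ pe := mul_le_mul_of_nonneg_right (by linarith) h4
end
end

section
/- Let β > 0, C_β > 0 and ε ∈ {+1, −1}. Let f : (0,∞) → [0,∞) be locally integrable with f(r) ∼ C_β r^{−1−β} as r → 0 if ε = +1 (resp. as r → +∞ if ε = −1). Let 0 < p < β < q, let C < ∞, and assume ∫_0^∞ (r^p ∧ r^q) f(r) dr < +∞. Let g : (0,∞) → ℂ be continuous with |g(r)| ≤ C (r^p ∧ r^q) for all r > 0, and for each ρ > 0 let g_ρ : (0,∞) → ℂ be continuous with |g(r) − g_ρ(r)| ≤ C (r^p ∧ r^q) for all r > 0 and g_ρ(r) → g(r) pointwise as ρ → ρ₀, where ρ₀ = +∞ if ε = +1 and ρ₀ = 0⁺ if ε = −1. Then lim_{ρ→ρ₀} ρ^{−β} ∫_0^∞ g_ρ(r) f(r/ρ) ρ^{−1} dr = C_β ∫_0^∞ g(r) r^{−1−β} dr. -/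
open MeasureTheory Filter Set
open scoped ENNReal Topology

noncomputable section


lemma map_div_restrict_Ioi {ρ : ℝ} (hρ : 0 < ρ) :
    Measure.map (fun r : ℝ => r / ρ) (volume.restrict (Ioi 0)) =
      ENNReal.ofReal ρ • volume.restrict (Ioi 0) := by
  have h1 : (fun r : ℝ => r / ρ) = (fun r : ℝ => ρ⁻¹ * r) := by
    funext r; rw [div_eq_inv_mul]
  have hne : ρ⁻¹ ≠ 0 := inv_ne_zero hρ.ne'
  have hpre : (fun r : ℝ => ρ⁻¹ * r) ⁻¹' (Ioi 0) = Ioi 0 := by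
    ext x
    simp only [mem_preimage, mem_Ioi]
    constructor
    · intro h; nlinarith [inv_pos.2 hρ]
    · intro h; positivity
  rw [h1, ← hpre, ← Measure.restrict_map (measurable_const_mul _) measurableSet_Ioi,
    Real.map_volume_mul_left hne, inv_inv, abs_of_pos hρ, Measure.restrict_smul, hpre]

lemma integrableOn_min_rpow {a b : ℝ} (ha : a < -1) (hb : -1 < b) :
    IntegrableOn (fun r : ℝ => min (r ^ a) (r ^ b)) (Ioi 0) := by
  have hmeas : AEStronglyMeasurable (fun r : ℝ => min (r ^ a) (r ^ b))
      (volume.restrict (Ioi (0:ℝ))) := by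
    have hc : ∀ c : ℝ, ContinuousOn (fun r : ℝ => r ^ c) (Ioi 0) := fun c =>
      ContinuousOn.rpow_const continuousOn_id (fun x hx => Or.inl (ne_of_gt hx))
    exact ContinuousOn.aestronglyMeasurable (fun x hx => ((hc a) x hx).min ((hc b) x hx))
      measurableSet_Ioi
  have h1 : IntegrableOn (fun r : ℝ => r ^ b) (Ioc (0:ℝ) 1) := by
    have := intervalIntegral.intervalIntegrable_rpow' (r := b) (a := 0) (b := 1) hb
    rwa [intervalIntegrable_iff_integrableOn_Ioc_of_le zero_le_one] at this
  have h2 : IntegrableOn (fun r : ℝ => r ^ a) (Ioi (1:ℝ)) :=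
    integrableOn_Ioi_rpow_of_lt ha one_pos
  have m1 : IntegrableOn (fun r : ℝ => min (r ^ a) (r ^ b)) (Ioc (0:ℝ) 1) := by
    refine Integrable.mono h1 (hmeas.mono_set Ioc_subset_Ioi_self) ?_
    filter_upwards [ae_restrict_mem measurableSet_Ioc] with r hr
    have h0 : (0:ℝ) < r := hr.1
    rw [Real.norm_eq_abs, Real.norm_eq_abs, abs_of_nonneg (Real.rpow_nonneg h0.le _),
      abs_of_nonneg (le_min (Real.rpow_nonneg h0.le _) (Real.rpow_nonneg h0.le _))]
    exact min_le_right _ _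
  have m2 : IntegrableOn (fun r : ℝ => min (r ^ a) (r ^ b)) (Ioi (1:ℝ)) := by
    refine Integrable.mono h2 (hmeas.mono_set (Ioi_subset_Ioi zero_le_one)) ?_
    filter_upwards [ae_restrict_mem measurableSet_Ioi] with r hr
    have h0 : (0:ℝ) < r := lt_trans one_pos hr
    rw [Real.norm_eq_abs, Real.norm_eq_abs, abs_of_nonneg (Real.rpow_nonneg h0.le _),
      abs_of_nonneg (le_min (Real.rpow_nonneg h0.le _) (Real.rpow_nonneg h0.le _))]
    exact min_le_left _ _
  have : Ioc (0:ℝ) 1 ∪ Ioi 1 = Ioi 0 := Ioc_union_Ioi_eq_Ioi zero_le_one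
  rw [← this]
  exact m1.union m2

lemma statement10_master (β Cβ C p q : ℝ) (hβ : 0 < β) (hCβ : 0 < Cβ)
    (hp : 0 < p) (hpβ : p < β) (hβq : β < q)
    (L Lf : Filter ℝ) [L.IsCountablyGenerated]
    (hLpos : ∀ᶠ ρ in L, 0 < ρ)
    (f : ℝ → ℝ) (hf_nonneg : ∀ r, 0 ≤ f r)
    (hf_meas : AEStronglyMeasurable f (volume.restrict (Ioi 0)))
    (hmom : ∫⁻ r in Ioi (0:ℝ), ENNReal.ofReal (min (r ^ p) (r ^ q) * f r) < ⊤)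
    (hscale : ∀ r : ℝ, 0 < r → Tendsto (fun ρ => r / ρ) L Lf)
    (hf_asym : Tendsto (fun r => f r / (Cβ * r ^ (-1 - β))) Lf (𝓝 1))
    (T : Set ℝ) (hT_meas : MeasurableSet T) (hT_mem : T ∈ Lf) (hT_sub : T ⊆ Ioi 0)
    (hT_f : ∀ s ∈ T, f s ≤ 2 * Cβ * s ^ (-1 - β))
    (γ K : ℝ) (hK : 0 ≤ K) (hγ0 : Tendsto (fun ρ : ℝ => ρ ^ γ) L (𝓝 0))
    (hrem : ∀ᶠ ρ in L, ∀ s : ℝ, 0 < s → s ∉ T →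
      ρ ^ (-β) * min ((ρ * s) ^ p) ((ρ * s) ^ q) ≤ ρ ^ γ * (K * min (s ^ p) (s ^ q)))
    (g : ℝ → ℂ)
    (hg_bd : ∀ r : ℝ, 0 < r → ‖g r‖ ≤ C * min (r ^ p) (r ^ q))
    (gof : ℝ → ℝ → ℂ) (hgof_cont : ∀ ρ : ℝ, 0 < ρ → ContinuousOn (gof ρ) (Set.Ioi 0))
    (hgof_bd : ∀ ρ : ℝ, 0 < ρ → ∀ r : ℝ, 0 < r →
      ‖g r - gof ρ r‖ ≤ C * min (r ^ p) (r ^ q))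
    (hgof_lim : ∀ r : ℝ, 0 < r → Filter.Tendsto (fun ρ => gof ρ r) L (𝓝 (g r))) :
    Filter.Tendsto
      (fun ρ : ℝ => (ρ ^ (-β)) • ∫ r in Set.Ioi (0 : ℝ), (f (r / ρ) / ρ) • gof ρ r)
      L (𝓝 (Cβ • ∫ r in Set.Ioi (0 : ℝ), (r ^ (-1 - β)) • g r)) := by
  have hC : 0 ≤ C := by
    have h := hg_bd 1 one_pos
    simp only [Real.one_rpow, min_self, mul_one] at h
    exact le_trans (norm_nonneg _) h
  set μ : Measure ℝ := volume.restrict (Ioi 0) with hμ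
  set φ : ℝ → ℝ → ℂ := fun ρ r => (ρ ^ (-1 - β) * f (r / ρ)) • gof ρ r with hφ
  set ψ : ℝ → ℂ := fun r => (Cβ * r ^ (-1 - β)) • g r with hψ
  set S : ℝ → Set ℝ := fun ρ => (fun r : ℝ => r / ρ) ⁻¹' T with hS
  set Fm : ℝ → ℝ → ℂ := fun ρ => (S ρ).indicator (φ ρ) with hFm
  set Fr : ℝ → ℝ → ℂ := fun ρ => ((S ρ)ᶜ).indicator (φ ρ) with hFr
  set bound : ℝ → ℝ := fun r => (2 * Cβ * r ^ (-1 - β)) * (2 * C * min (r ^ p) (r ^ q))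
    with hbound
  set m : ℝ → ℝ := fun s => min (s ^ p) (s ^ q) * f s with hm
  set M : ℝ≥0∞ := ∫⁻ r in Ioi (0:ℝ), ENNReal.ofReal (m r) with hM
  have hM_ne : M ≠ ⊤ := hmom.ne
  have hSmeas : ∀ ρ : ℝ, MeasurableSet (S ρ) := fun ρ =>
    hT_meas.preimage (measurable_id.div_const ρ)
  -- measurability of φ
  have hqmp : ∀ ρ : ℝ, 0 < ρ →
      Measure.QuasiMeasurePreserving (fun r : ℝ => r / ρ) μ μ := by
    intro ρ hρ
    refine ⟨measurable_id.div_const ρ, ?_⟩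
    rw [hμ, map_div_restrict_Ioi hρ]
    exact Measure.smul_absolutelyContinuous
  have hφ_meas : ∀ ρ : ℝ, 0 < ρ → AEStronglyMeasurable (φ ρ) μ := by
    intro ρ hρ
    exact (aestronglyMeasurable_const.mul
        (hf_meas.comp_quasiMeasurePreserving (hqmp ρ hρ))).smul
      ((hgof_cont ρ hρ).aestronglyMeasurable measurableSet_Ioi)
  -- norm bound on gof
  have hgof_norm : ∀ ρ : ℝ, 0 < ρ → ∀ r : ℝ, 0 < r →
      ‖gof ρ r‖ ≤ 2 * C * min (r ^ p) (r ^ q) := by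
    intro ρ hρ r hr
    have h1 := hg_bd r hr
    have h2 := hgof_bd ρ hρ r hr
    calc ‖gof ρ r‖ = ‖g r - (g r - gof ρ r)‖ := by ring_nf
      _ ≤ ‖g r‖ + ‖g r - gof ρ r‖ := norm_sub_le _ _
      _ ≤ C * min (r ^ p) (r ^ q) + C * min (r ^ p) (r ^ q) := add_le_add h1 h2
      _ = 2 * C * min (r ^ p) (r ^ q) := by ring
  have hmin_nonneg : ∀ r : ℝ, 0 < r → 0 ≤ min (r ^ p) (r ^ q) := fun r hr =>
    le_min (Real.rpow_nonneg hr.le _) (Real.rpow_nonneg hr.le _)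
  have hbound_nonneg : ∀ r : ℝ, 0 < r → 0 ≤ bound r := by
    intro r hr
    have := hmin_nonneg r hr
    have : (0:ℝ) ≤ r ^ (-1 - β) := Real.rpow_nonneg hr.le _
    positivity
  -- pointwise bound on the main part
  have hφ_bd : ∀ ρ : ℝ, 0 < ρ → ∀ r : ℝ, 0 < r → r / ρ ∈ T → ‖φ ρ r‖ ≤ bound r := by
    intro ρ hρ r hr hrT
    have hs : 0 < r / ρ := div_pos hr hρ
    have hρβ : (0:ℝ) ≤ ρ ^ (-1 - β) := Real.rpow_nonneg hρ.le _
    have key : (r / ρ) ^ (-1 - β) * ρ ^ (-1 - β) = r ^ (-1 - β) := by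
      rw [← Real.mul_rpow hs.le hρ.le, div_mul_cancel₀ _ hρ.ne']
    have hfb : ρ ^ (-1 - β) * f (r / ρ) ≤ 2 * Cβ * r ^ (-1 - β) := by
      calc ρ ^ (-1 - β) * f (r / ρ) ≤ ρ ^ (-1 - β) * (2 * Cβ * (r / ρ) ^ (-1 - β)) :=
            mul_le_mul_of_nonneg_left (hT_f _ hrT) hρβ
        _ = 2 * Cβ * ((r / ρ) ^ (-1 - β) * ρ ^ (-1 - β)) := by ring
        _ = 2 * Cβ * r ^ (-1 - β) := by rw [key]
    rw [hφ, norm_smul, Real.norm_eq_abs,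
      abs_of_nonneg (mul_nonneg hρβ (hf_nonneg _))]
    calc (ρ ^ (-1 - β) * f (r / ρ)) * ‖gof ρ r‖
        ≤ (2 * Cβ * r ^ (-1 - β)) * (2 * C * min (r ^ p) (r ^ q)) := by
          apply mul_le_mul hfb (hgof_norm ρ hρ r hr) (norm_nonneg _)
          positivity
      _ = bound r := rfl
  -- integrability of the bound
  have hbound_int : IntegrableOn bound (Ioi 0) := by
    have key := (integrableOn_min_rpow (a := p - 1 - β) (b := q - 1 - β)
      (by linarith) (by linarith)).const_mul (4 * Cβ * C)
    refine key.congr ?_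
    filter_upwards [ae_restrict_mem measurableSet_Ioi] with r hr
    have hr0 : (0:ℝ) < r := hr
    have e1 : r ^ (p - 1 - β) = r ^ p * r ^ (-1 - β) := by
      rw [← Real.rpow_add hr0]; ring_nf
    have e2 : r ^ (q - 1 - β) = r ^ q * r ^ (-1 - β) := by
      rw [← Real.rpow_add hr0]; ring_nf
    have hc : (0:ℝ) ≤ r ^ (-1 - β) := Real.rpow_nonneg hr0.le _
    rw [hbound]
    simp only []
    rw [e1, e2, ← min_mul_of_nonneg _ _ hc]
    ring
  -- main part: dominated convergence
  have hmain : Tendsto (fun ρ => ∫ r in Ioi (0:ℝ), Fm ρ r) L (𝓝 (∫ r in Ioi (0:ℝ), ψ r)) := by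
    apply tendsto_integral_filter_of_dominated_convergence bound
    · filter_upwards [hLpos] with ρ hρ
      exact (hφ_meas ρ hρ).indicator (hSmeas ρ)
    · filter_upwards [hLpos] with ρ hρ
      filter_upwards [ae_restrict_mem measurableSet_Ioi] with r hr
      by_cases hmem : r ∈ S ρ
      · rw [hFm]; simp only [indicator_of_mem hmem]
        exact hφ_bd ρ hρ r hr hmem
      · rw [hFm]; simp only [indicator_of_notMem hmem, norm_zero]
        exact hbound_nonneg r hr
    · exact hbound_int
    · filter_upwards [ae_restrict_mem measurableSet_Ioi] with r hr
      have hr0 : (0:ℝ) < r := hr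
      have hev : ∀ᶠ ρ in L, r / ρ ∈ T := (hscale r hr0).eventually_mem hT_mem
      have h1 : ∀ᶠ ρ in L, Fm ρ r = φ ρ r := by
        filter_upwards [hev] with ρ hρT
        have hmem : r ∈ S ρ := hρT
        exact Set.indicator_of_mem hmem (φ ρ)
      have hQ : Tendsto (fun ρ => f (r / ρ) / (Cβ * (r / ρ) ^ (-1 - β))) L (𝓝 1) :=
        hf_asym.comp (hscale r hr0)
      have heq : ∀ᶠ ρ in L, ρ ^ (-1 - β) * f (r / ρ) =
          (f (r / ρ) / (Cβ * (r / ρ) ^ (-1 - β))) * (Cβ * r ^ (-1 - β)) := by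
        filter_upwards [hLpos] with ρ hρ
        have hs : 0 < r / ρ := div_pos hr0 hρ
        have key : (r / ρ) ^ (-1 - β) * ρ ^ (-1 - β) = r ^ (-1 - β) := by
          rw [← Real.mul_rpow hs.le hρ.le, div_mul_cancel₀ _ hρ.ne']
        have hd : (r / ρ) ^ (-1 - β) ≠ 0 := (Real.rpow_pos_of_pos hs _).ne'
        rw [← key]
        field_simp
      have hscal : Tendsto (fun ρ => ρ ^ (-1 - β) * f (r / ρ)) L (𝓝 (Cβ * r ^ (-1 - β))) := by
        have h2 := hQ.mul_const (Cβ * r ^ (-1 - β))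
        rw [one_mul] at h2
        exact Tendsto.congr' (heq.mono fun ρ h => h.symm) h2
      exact Tendsto.congr' (h1.mono fun ρ h => h.symm) (hscal.smul (hgof_lim r hr0))
  -- key lintegral bound for the remainder part
  have hkey : ∀ ρ : ℝ, 0 < ρ →
      (∀ s : ℝ, 0 < s → s ∉ T →
        ρ ^ (-β) * min ((ρ * s) ^ p) ((ρ * s) ^ q) ≤ ρ ^ γ * (K * min (s ^ p) (s ^ q))) →
      ∫⁻ r, ENNReal.ofReal ‖Fr ρ r‖ ∂μ ≤ ENNReal.ofReal (2 * C * K * ρ ^ γ) * M := by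
    intro ρ hρ hb
    have hγρ : (0:ℝ) ≤ ρ ^ γ := Real.rpow_nonneg hρ.le _
    have hc0 : (0:ℝ) ≤ 2 * C * K * ρ ^ γ * ρ⁻¹ := by positivity
    have hpt : ∀ r : ℝ, 0 < r → ‖Fr ρ r‖ ≤ (2 * C * K * ρ ^ γ * ρ⁻¹) * m (r / ρ) := by
      intro r hr
      have hs : 0 < r / ρ := div_pos hr hρ
      have hms : 0 ≤ m (r / ρ) := mul_nonneg (hmin_nonneg _ hs) (hf_nonneg _)
      by_cases hmem : r ∈ S ρ
      · have h0 : Fr ρ r = 0 := Set.indicator_of_notMem (by simpa using hmem) (φ ρ)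
        rw [h0, norm_zero]; positivity
      · have hFr_eq : Fr ρ r = φ ρ r := Set.indicator_of_mem (by simpa using hmem) (φ ρ)
        have hsT : r / ρ ∉ T := hmem
        have hρβ : (0:ℝ) ≤ ρ ^ (-1 - β) := Real.rpow_nonneg hρ.le _
        have e3 : ρ ^ (-1 - β) * min (r ^ p) (r ^ q) ≤
            ρ⁻¹ * (ρ ^ γ * (K * min ((r / ρ) ^ p) ((r / ρ) ^ q))) := by
          have hρr : ρ * (r / ρ) = r := by field_simp
          have h4 := hb (r / ρ) hs hsT
          rw [hρr] at h4
          have e5 : ρ ^ (-1 - β) = ρ⁻¹ * ρ ^ (-β) := by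
            rw [show (-1 - β) = (-1) + (-β) by ring, Real.rpow_add hρ, Real.rpow_neg_one]
          rw [e5, mul_assoc]
          exact mul_le_mul_of_nonneg_left h4 (by positivity)
        rw [hFr_eq, show φ ρ r = (ρ ^ (-1 - β) * f (r / ρ)) • gof ρ r from rfl, norm_smul,
          Real.norm_eq_abs, abs_of_nonneg (mul_nonneg hρβ (hf_nonneg _))]
        calc (ρ ^ (-1 - β) * f (r / ρ)) * ‖gof ρ r‖
            ≤ (ρ ^ (-1 - β) * f (r / ρ)) * (2 * C * min (r ^ p) (r ^ q)) :=
              mul_le_mul_of_nonneg_left (hgof_norm ρ hρ r hr)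
                (mul_nonneg hρβ (hf_nonneg _))
          _ = (2 * C * f (r / ρ)) * (ρ ^ (-1 - β) * min (r ^ p) (r ^ q)) := by ring
          _ ≤ (2 * C * f (r / ρ)) * (ρ⁻¹ * (ρ ^ γ * (K * min ((r / ρ) ^ p) ((r / ρ) ^ q)))) :=
              mul_le_mul_of_nonneg_left e3 (mul_nonneg (by positivity) (hf_nonneg _))
          _ = (2 * C * K * ρ ^ γ * ρ⁻¹) * m (r / ρ) := by simp only [hm]; ring
    calc ∫⁻ r, ENNReal.ofReal ‖Fr ρ r‖ ∂μ
        ≤ ∫⁻ r, ENNReal.ofReal ((2 * C * K * ρ ^ γ * ρ⁻¹) * m (r / ρ)) ∂μ := by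
          refine lintegral_mono_ae ?_
          rw [hμ]
          filter_upwards [ae_restrict_mem measurableSet_Ioi] with r hr
          exact ENNReal.ofReal_le_ofReal (hpt r hr)
      _ = ENNReal.ofReal (2 * C * K * ρ ^ γ * ρ⁻¹) *
            ∫⁻ r, ENNReal.ofReal (m (r / ρ)) ∂μ := by
          simp_rw [ENNReal.ofReal_mul hc0]
          exact lintegral_const_mul' _ _ ENNReal.ofReal_ne_top
      _ = ENNReal.ofReal (2 * C * K * ρ ^ γ * ρ⁻¹) * (ENNReal.ofReal ρ * M) := by
          congr 1
          have hmn : AEMeasurable (fun s : ℝ => min (s ^ p) (s ^ q)) μ := by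
            have hc : ∀ c : ℝ, ContinuousOn (fun r : ℝ => r ^ c) (Ioi (0:ℝ)) := fun c =>
              ContinuousOn.rpow_const continuousOn_id (fun x hx => Or.inl (ne_of_gt hx))
            rw [hμ]
            exact (ContinuousOn.aestronglyMeasurable
              (fun x hx => ((hc p) x hx).min ((hc q) x hx)) measurableSet_Ioi).aemeasurable
          have hm_meas : AEMeasurable (fun s => ENNReal.ofReal (m s)) μ :=
            (hmn.mul hf_meas.aemeasurable).ennreal_ofReal
          have hmap : AEMeasurable (fun s => ENNReal.ofReal (m s))
              (Measure.map (fun r : ℝ => r / ρ) μ) := by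
            rw [hμ, map_div_restrict_Ioi hρ]
            rw [hμ] at hm_meas
            exact hm_meas.mono_ac Measure.smul_absolutelyContinuous
          rw [← lintegral_map' hmap (measurable_id.div_const ρ).aemeasurable,
            hμ, map_div_restrict_Ioi hρ, lintegral_smul_measure]
          rfl
      _ = ENNReal.ofReal (2 * C * K * ρ ^ γ) * M := by
          rw [← mul_assoc, ← ENNReal.ofReal_mul hc0]
          congr 2
          field_simp
  -- remainder tends to zero
  have hFr_norm : ∀ᶠ ρ in L, ‖∫ r in Ioi (0:ℝ), Fr ρ r‖ ≤ (2 * C * K * M.toReal) * ρ ^ γ := by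
    filter_upwards [hLpos, hrem] with ρ hρ hb
    have hγρ : (0:ℝ) ≤ ρ ^ γ := Real.rpow_nonneg hρ.le _
    calc ‖∫ r in Ioi (0:ℝ), Fr ρ r‖
        ≤ (∫⁻ r, ENNReal.ofReal ‖Fr ρ r‖ ∂μ).toReal := norm_integral_le_lintegral_norm _
      _ ≤ (ENNReal.ofReal (2 * C * K * ρ ^ γ) * M).toReal :=
          ENNReal.toReal_mono (ENNReal.mul_ne_top ENNReal.ofReal_ne_top hM_ne) (hkey ρ hρ hb)
      _ = (2 * C * K * M.toReal) * ρ ^ γ := by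
          rw [ENNReal.toReal_mul, ENNReal.toReal_ofReal (by positivity)]
          ring
  have hFr_tendsto : Tendsto (fun ρ => ∫ r in Ioi (0:ℝ), Fr ρ r) L (𝓝 0) := by
    rw [tendsto_zero_iff_norm_tendsto_zero]
    refine squeeze_zero' (Eventually.of_forall fun ρ => norm_nonneg _) hFr_norm ?_
    have h5 := hγ0.const_mul (2 * C * K * M.toReal)
    simpa using h5
  -- integrability of the two parts
  have hFm_int : ∀ ρ : ℝ, 0 < ρ → IntegrableOn (Fm ρ) (Ioi 0) := by
    intro ρ hρ
    refine Integrable.mono hbound_int ((hφ_meas ρ hρ).indicator (hSmeas ρ)) ?_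
    filter_upwards [ae_restrict_mem measurableSet_Ioi] with r hr
    rw [Real.norm_eq_abs, abs_of_nonneg (hbound_nonneg r hr)]
    by_cases hmem : r ∈ S ρ
    · rw [show Fm ρ r = φ ρ r from Set.indicator_of_mem hmem (φ ρ)]
      exact hφ_bd ρ hρ r hr hmem
    · rw [show Fm ρ r = 0 from Set.indicator_of_notMem hmem (φ ρ), norm_zero]
      exact hbound_nonneg r hr
  have hFr_int : ∀ ρ : ℝ, 0 < ρ →
      (∀ s : ℝ, 0 < s → s ∉ T →
        ρ ^ (-β) * min ((ρ * s) ^ p) ((ρ * s) ^ q) ≤ ρ ^ γ * (K * min (s ^ p) (s ^ q))) →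
      IntegrableOn (Fr ρ) (Ioi 0) := by
    intro ρ hρ hb
    refine ⟨(hφ_meas ρ hρ).indicator (hSmeas ρ).compl, ?_⟩
    rw [hasFiniteIntegral_iff_norm]
    exact lt_of_le_of_lt (hkey ρ hρ hb)
      (ENNReal.mul_lt_top ENNReal.ofReal_lt_top hmom)
  -- split the integral
  have hsplit : ∀ᶠ ρ in L, (ρ ^ (-β)) • (∫ r in Ioi (0:ℝ), (f (r / ρ) / ρ) • gof ρ r) =
      (∫ r in Ioi (0:ℝ), Fm ρ r) + ∫ r in Ioi (0:ℝ), Fr ρ r := by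
    filter_upwards [hLpos, hrem] with ρ hρ hb
    have h0 : (fun r => (ρ ^ (-β)) • ((f (r / ρ) / ρ) • gof ρ r)) = φ ρ := by
      funext r
      rw [hφ, smul_smul]
      congr 1
      rw [show (-1 - β) = (-β) + (-1) by ring, Real.rpow_add hρ, Real.rpow_neg_one]
      ring
    rw [← integral_smul, h0,
      show φ ρ = fun r => Fm ρ r + Fr ρ r from by
        funext r
        exact (Set.indicator_self_add_compl_apply (S ρ) (φ ρ) r).symm]
    exact integral_add (hFm_int ρ hρ) (hFr_int ρ hρ hb)
  -- conclude
  have hfinal : Tendsto (fun ρ => (∫ r in Ioi (0:ℝ), Fm ρ r) + ∫ r in Ioi (0:ℝ), Fr ρ r)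
      L (𝓝 (∫ r in Ioi (0:ℝ), ψ r)) := by
    have h6 := hmain.add hFr_tendsto
    simpa using h6
  have hgoal_rhs : Cβ • ∫ r in Ioi (0:ℝ), (r ^ (-1 - β)) • g r = ∫ r in Ioi (0:ℝ), ψ r := by
    rw [← integral_smul]
    congr 1
    funext r
    rw [hψ, smul_smul]
  rw [hgoal_rhs]
  exact Tendsto.congr' (hsplit.mono fun ρ h => h.symm) hfinal

/-- Lemma on the rescaled radius measure: with the zoom filter `L`
(`atTop` if `ε = +1`, `0⁺` if `ε = -1`) and the tail filter `Lf` (`0⁺` if `ε = +1`,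
`atTop` if `ε = -1`), if `f(r) ∼ C_β r^{-1-β}` along `Lf`, `∫ (r^p ∧ r^q) f(r) dr < ∞`,
`|g(r)| ≤ C (r^p ∧ r^q)`, `|g(r) - g_ρ(r)| ≤ C (r^p ∧ r^q)` and `g_ρ(r) → g(r)` along `L`,
then `ρ^{-β} ∫₀^∞ g_ρ(r) f(r/ρ) ρ^{-1} dr → C_β ∫₀^∞ g(r) r^{-1-β} dr` along `L`. -/
theorem statement10 (β Cβ C p q : ℝ) (hβ : 0 < β) (hCβ : 0 < Cβ)
    (hp : 0 < p) (hpβ : p < β) (hβq : β < q)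
    (L Lf : Filter ℝ)
    (hfilters : (L = Filter.atTop ∧ Lf = 𝓝[>] (0 : ℝ)) ∨
                (L = 𝓝[>] (0 : ℝ) ∧ Lf = Filter.atTop))
    (f : ℝ → ℝ) (hf_nonneg : ∀ r, 0 ≤ f r)
    (hf_loc : MeasureTheory.LocallyIntegrableOn f (Set.Ioi 0))
    (hf_asym : Filter.Tendsto (fun r => f r / (Cβ * r ^ (-1 - β))) Lf (𝓝 1))
    (hmom : ∫⁻ r in Set.Ioi (0 : ℝ), ENNReal.ofReal (min (r ^ p) (r ^ q) * f r) < ⊤)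
    (g : ℝ → ℂ) (hg_cont : ContinuousOn g (Set.Ioi 0))
    (hg_bd : ∀ r : ℝ, 0 < r → ‖g r‖ ≤ C * min (r ^ p) (r ^ q))
    (gof : ℝ → ℝ → ℂ) (hgof_cont : ∀ ρ : ℝ, 0 < ρ → ContinuousOn (gof ρ) (Set.Ioi 0))
    (hgof_bd : ∀ ρ : ℝ, 0 < ρ → ∀ r : ℝ, 0 < r →
      ‖g r - gof ρ r‖ ≤ C * min (r ^ p) (r ^ q))
    (hgof_lim : ∀ r : ℝ, 0 < r → Filter.Tendsto (fun ρ => gof ρ r) L (𝓝 (g r))) :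
    Filter.Tendsto
      (fun ρ : ℝ => (ρ ^ (-β)) • ∫ r in Set.Ioi (0 : ℝ), (f (r / ρ) / ρ) • gof ρ r)
      L (𝓝 (Cβ • ∫ r in Set.Ioi (0 : ℝ), (r ^ (-1 - β)) • g r)) := by
  have hpq : p < q := lt_trans hpβ hβq
  have hf_meas : AEStronglyMeasurable f (volume.restrict (Ioi 0)) :=
    hf_loc.aestronglyMeasurable
  have h2 : ∀ᶠ s in Lf, f s / (Cβ * s ^ (-1 - β)) < 2 :=
    hf_asym.eventually_lt_const one_lt_two
  have hT_f_of : ∀ s : ℝ, 0 < s → f s / (Cβ * s ^ (-1 - β)) < 2 →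
      f s ≤ 2 * Cβ * s ^ (-1 - β) := by
    intro s hs h
    have hd : 0 < Cβ * s ^ (-1 - β) := by
      have := Real.rpow_pos_of_pos hs (-1 - β)
      positivity
    have h3 := (div_lt_iff₀ hd).1 h
    nlinarith
  rcases hfilters with ⟨hL, hLf⟩ | ⟨hL, hLf⟩
  · -- L = atTop, Lf = 𝓝[>] 0
    subst hL; subst hLf
    obtain ⟨δ, hδ, hsub⟩ := mem_nhdsGT_iff_exists_Ioo_subset.1 h2
    have hδ0 : (0:ℝ) < δ := hδ
    refine statement10_master β Cβ C p q hβ hCβ hp hpβ hβq atTop (𝓝[>] (0:ℝ))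
      (eventually_gt_atTop 0) f hf_nonneg hf_meas hmom ?_ hf_asym
      (Ioo 0 δ) measurableSet_Ioo (Ioo_mem_nhdsGT_of_mem ⟨le_refl 0, hδ0⟩)
      (fun s hs => hs.1) (fun s hs => hT_f_of s hs.1 (hsub hs))
      (p - β) (max 1 (δ ^ (p - q))) (le_trans zero_le_one (le_max_left _ _)) ?_ ?_
      g hg_bd gof hgof_cont hgof_bd hgof_lim
    · -- hscale
      intro r hr
      rw [tendsto_nhdsWithin_iff]
      constructor
      · have h0 := tendsto_inv_atTop_zero.const_mul r
        simp only [mul_zero] at h0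
        exact h0.congr fun ρ => (div_eq_mul_inv r ρ).symm
      · filter_upwards [eventually_gt_atTop 0] with ρ hρ
        exact div_pos hr hρ
    · -- hγ0
      rw [show p - β = -(β - p) by ring]
      exact tendsto_rpow_neg_atTop (by linarith)
    · -- hrem
      filter_upwards [eventually_ge_atTop (max 1 δ⁻¹)] with ρ hρ s hs hsT
      have hρ1 : (1:ℝ) ≤ ρ := le_trans (le_max_left _ _) hρ
      have hρδ : δ⁻¹ ≤ ρ := le_trans (le_max_right _ _) hρ
      have hρ0 : (0:ℝ) < ρ := lt_of_lt_of_le one_pos hρ1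
      have hsδ : δ ≤ s := by
        by_contra h
        push_neg at h
        exact hsT ⟨hs, h⟩
      have h1s : (1:ℝ) ≤ ρ * s := by
        calc (1:ℝ) = δ⁻¹ * δ := (inv_mul_cancel₀ hδ0.ne').symm
          _ ≤ ρ * s := mul_le_mul hρδ hsδ hδ0.le hρ0.le
      have hmin : min ((ρ * s) ^ p) ((ρ * s) ^ q) = (ρ * s) ^ p :=
        min_eq_left (Real.rpow_le_rpow_of_exponent_le h1s hpq.le)
      have hLHS : ρ ^ (-β) * min ((ρ * s) ^ p) ((ρ * s) ^ q) = ρ ^ (p - β) * s ^ p := by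
        rw [hmin, Real.mul_rpow hρ0.le hs.le, ← mul_assoc, ← Real.rpow_add hρ0]
        ring_nf
      rw [hLHS]
      have hsp : s ^ p ≤ max 1 (δ ^ (p - q)) * min (s ^ p) (s ^ q) := by
        by_cases h1 : 1 ≤ s
        · rw [min_eq_left (Real.rpow_le_rpow_of_exponent_le h1 hpq.le)]
          exact le_mul_of_one_le_left (Real.rpow_nonneg hs.le _) (le_max_left _ _)
        · push_neg at h1
          rw [min_eq_right (Real.rpow_le_rpow_of_exponent_ge hs h1.le hpq.le)]
          calc s ^ p = s ^ (p - q) * s ^ q := by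
                rw [← Real.rpow_add hs]; ring_nf
            _ ≤ δ ^ (p - q) * s ^ q := by
                apply mul_le_mul_of_nonneg_right _ (Real.rpow_nonneg hs.le _)
                exact Real.rpow_le_rpow_of_nonpos hδ0 hsδ (by linarith)
            _ ≤ max 1 (δ ^ (p - q)) * s ^ q := by
                apply mul_le_mul_of_nonneg_right (le_max_right _ _)
                  (Real.rpow_nonneg hs.le _)
      exact mul_le_mul_of_nonneg_left hsp (Real.rpow_nonneg hρ0.le _)
  · -- L = 𝓝[>] 0, Lf = atTop
    subst hL; subst hLf
    obtain ⟨M₁, hM₁⟩ := eventually_atTop.1 h2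
    set M' : ℝ := max M₁ 1 with hM'
    have hM'1 : (1:ℝ) ≤ M' := le_max_right _ _
    have hM'0 : (0:ℝ) < M' := lt_of_lt_of_le one_pos hM'1
    refine statement10_master β Cβ C p q hβ hCβ hp hpβ hβq (𝓝[>] (0:ℝ)) atTop
      eventually_mem_nhdsWithin f hf_nonneg hf_meas hmom ?_ hf_asym
      (Ioi M') measurableSet_Ioi (Ioi_mem_atTop M')
      (fun s hs => lt_trans hM'0 hs)
      (fun s hs => hT_f_of s (lt_trans hM'0 hs)
        (hM₁ s (le_trans (le_max_left _ _) (le_of_lt hs))))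
      (q - β) (max 1 (M' ^ (q - p))) (le_trans zero_le_one (le_max_left _ _)) ?_ ?_
      g hg_bd gof hgof_cont hgof_bd hgof_lim
    · -- hscale
      intro r hr
      have h0 := tendsto_inv_nhdsGT_zero.const_mul_atTop hr
      exact h0.congr fun ρ => (div_eq_mul_inv r ρ).symm
    · -- hγ0
      have h0 : Tendsto (fun ρ : ℝ => ρ ^ (q - β)) (𝓝[>] (0:ℝ)) (𝓝 ((0:ℝ) ^ (q - β))) :=
        ((Real.continuousAt_rpow_const 0 (q - β)
          (Or.inr (by linarith : (0:ℝ) ≤ q - β))).tendsto).mono_left nhdsWithin_le_nhds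
      rwa [Real.zero_rpow (by linarith : q - β ≠ 0)] at h0
    · -- hrem
      filter_upwards [Ioo_mem_nhdsGT_of_mem
        (Set.mem_Ico.2 ⟨le_refl (0:ℝ), inv_pos.2 hM'0⟩)] with ρ hρ s hs hsT
      have hρ0 : (0:ℝ) < ρ := hρ.1
      have hsM' : s ≤ M' := by
        by_contra h
        push_neg at h
        exact hsT h
      have hρs1 : ρ * s ≤ 1 := by
        calc ρ * s ≤ ρ * M' := mul_le_mul_of_nonneg_left hsM' hρ0.le
          _ ≤ M'⁻¹ * M' := mul_le_mul_of_nonneg_right hρ.2.le hM'0.le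
          _ = 1 := inv_mul_cancel₀ hM'0.ne'
      have hmin : min ((ρ * s) ^ p) ((ρ * s) ^ q) = (ρ * s) ^ q :=
        min_eq_right (Real.rpow_le_rpow_of_exponent_ge (mul_pos hρ0 hs) hρs1 hpq.le)
      have hLHS : ρ ^ (-β) * min ((ρ * s) ^ p) ((ρ * s) ^ q) = ρ ^ (q - β) * s ^ q := by
        rw [hmin, Real.mul_rpow hρ0.le hs.le, ← mul_assoc, ← Real.rpow_add hρ0]
        ring_nf
      rw [hLHS]
      have hsq : s ^ q ≤ max 1 (M' ^ (q - p)) * min (s ^ p) (s ^ q) := by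
        by_cases h1 : s ≤ 1
        · rw [min_eq_right (Real.rpow_le_rpow_of_exponent_ge hs h1 hpq.le)]
          exact le_mul_of_one_le_left (Real.rpow_nonneg hs.le _) (le_max_left _ _)
        · push_neg at h1
          rw [min_eq_left (Real.rpow_le_rpow_of_exponent_le h1.le hpq.le)]
          calc s ^ q = s ^ (q - p) * s ^ p := by
                rw [← Real.rpow_add hs]; ring_nf
            _ ≤ M' ^ (q - p) * s ^ p := by
                apply mul_le_mul_of_nonneg_right _ (Real.rpow_nonneg hs.le _)
                exact Real.rpow_le_rpow hs.le hsM' (by linarith)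
            _ ≤ max 1 (M' ^ (q - p)) * s ^ p := by
                apply mul_le_mul_of_nonneg_right (le_max_right _ _)
                  (Real.rpow_nonneg hs.le _)
      exact mul_le_mul_of_nonneg_left hsq (Real.rpow_nonneg hρ0.le _)
end
end

section
/- Let d ≥ 1 be an integer, 1 < α ≤ 2 and β > 0. Let G be a probability measure on ℝ for which there exist finite constants C₁, C₂ such that ∫_{{|m| ≥ x}} |m| G(dm) ≤ C₁ x^{1−α} and ∫_{[−x,x]} m² G(dm) ≤ C₂ x^{2−α} for all x > 0. Then for every μ ∈ M_{α,β} one has ∫_{ℝ^d × (0,∞) × ℝ} ( |m μ(B(x,r))| ∧ (m μ(B(x,r)))² ) r^{−β−1} dx dr G(dm) < +∞. -/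
open MeasureTheory Filter Set
open scoped ENNReal Topology

noncomputable section

namespace Stmt13Aux

variable {d : ℕ}

lemma measurable_measure_ball (ν : Measure (EuclideanSpace ℝ (Fin d))) [SFinite ν] :
    Measurable fun pr : EuclideanSpace ℝ (Fin d) × ℝ => ν (Metric.ball pr.1 pr.2) := by
  have hS : MeasurableSet {q : (EuclideanSpace ℝ (Fin d) × ℝ) × EuclideanSpace ℝ (Fin d) |
      dist q.2 q.1.1 < q.1.2} :=
    (isOpen_lt (by fun_prop) (by fun_prop)).measurableSet
  have h := measurable_measure_prodMk_left (ν := ν) hS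
  convert h using 2 with p; rfl

lemma signed_apply (μ : SignedMeasure (EuclideanSpace ℝ (Fin d)))
    {s : Set (EuclideanSpace ℝ (Fin d))} (hs : MeasurableSet s) :
    μ s = (μ.toJordanDecomposition.posPart s).toReal -
      (μ.toJordanDecomposition.negPart s).toReal := by
  conv_lhs => rw [← μ.toSignedMeasure_toJordanDecomposition]
  rw [JordanDecomposition.toSignedMeasure, VectorMeasure.sub_apply,
    Measure.toSignedMeasure_apply_measurable hs, Measure.toSignedMeasure_apply_measurable hs]
  rfl

lemma measurable_signed_ball (μ : SignedMeasure (EuclideanSpace ℝ (Fin d))) :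
    Measurable fun pr : EuclideanSpace ℝ (Fin d) × ℝ => μ (Metric.ball pr.1 pr.2) := by
  have h1 := measurable_measure_ball μ.toJordanDecomposition.posPart
  have h2 := measurable_measure_ball μ.toJordanDecomposition.negPart
  have he : (fun pr : EuclideanSpace ℝ (Fin d) × ℝ => μ (Metric.ball pr.1 pr.2)) = fun pr =>
      (μ.toJordanDecomposition.posPart (Metric.ball pr.1 pr.2)).toReal -
      (μ.toJordanDecomposition.negPart (Metric.ball pr.1 pr.2)).toReal := by
    ext pr
    exact signed_apply μ Metric.isOpen_ball.measurableSet
  rw [he]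
  exact h1.ennreal_toReal.sub h2.ennreal_toReal

lemma lintegral_ball_lt_top (ν : Measure (EuclideanSpace ℝ (Fin d))) [IsFiniteMeasure ν] (r : ℝ) :
    ∫⁻ x, ν (Metric.ball x r) < ⊤ := by
  set S : Set (EuclideanSpace ℝ (Fin d) × EuclideanSpace ℝ (Fin d)) :=
    {q | dist q.2 q.1 < r} with hSdef
  have hS : MeasurableSet S := (isOpen_lt (by fun_prop) (by fun_prop)).measurableSet
  have hf : Measurable (S.indicator (1 : EuclideanSpace ℝ (Fin d) × EuclideanSpace ℝ (Fin d) → ℝ≥0∞)) := measurable_one.indicator hS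
  have h1 : ∀ x, (∫⁻ y, S.indicator (1 : EuclideanSpace ℝ (Fin d) × EuclideanSpace ℝ (Fin d) → ℝ≥0∞) (x, y) ∂ν) = ν (Metric.ball x r) := by
    intro x
    have he : (fun y => S.indicator (1 : EuclideanSpace ℝ (Fin d) × EuclideanSpace ℝ (Fin d) → ℝ≥0∞) (x, y)) =
        (Metric.ball x r).indicator (1 : EuclideanSpace ℝ (Fin d) → ℝ≥0∞) := by
      ext y
      by_cases h : dist y x < r <;>
        simp [hSdef, Set.indicator, Metric.mem_ball, h]
    rw [he, lintegral_indicator_one Metric.isOpen_ball.measurableSet]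
  have h2 : ∀ y, (∫⁻ x, S.indicator (1 : EuclideanSpace ℝ (Fin d) × EuclideanSpace ℝ (Fin d) → ℝ≥0∞) (x, y)) = volume (Metric.ball y r) := by
    intro y
    have he : (fun x => S.indicator (1 : EuclideanSpace ℝ (Fin d) × EuclideanSpace ℝ (Fin d) → ℝ≥0∞) (x, y)) =
        (Metric.ball y r).indicator (1 : EuclideanSpace ℝ (Fin d) → ℝ≥0∞) := by
      ext x
      by_cases h : dist x y < r
      · simp [hSdef, Set.indicator, Metric.mem_ball, dist_comm, h]
      · simp [hSdef, Set.indicator, Metric.mem_ball, dist_comm, h]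
    rw [he, lintegral_indicator_one Metric.isOpen_ball.measurableSet]
  have hswap : (∫⁻ x, ∫⁻ y, S.indicator (1 : EuclideanSpace ℝ (Fin d) × EuclideanSpace ℝ (Fin d) → ℝ≥0∞) (x, y) ∂ν) =
      ∫⁻ y, (∫⁻ x, S.indicator (1 : EuclideanSpace ℝ (Fin d) × EuclideanSpace ℝ (Fin d) → ℝ≥0∞) (x, y)) ∂ν := by
    exact lintegral_lintegral_swap hf.aemeasurable
  calc ∫⁻ x, ν (Metric.ball x r)
      = ∫⁻ x, ∫⁻ y, S.indicator (1 : EuclideanSpace ℝ (Fin d) × EuclideanSpace ℝ (Fin d) → ℝ≥0∞) (x, y) ∂ν := by simp_rw [h1]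
    _ = ∫⁻ y, (∫⁻ x, S.indicator (1 : EuclideanSpace ℝ (Fin d) × EuclideanSpace ℝ (Fin d) → ℝ≥0∞) (x, y)) ∂ν := hswap
    _ = ∫⁻ _, volume (Metric.ball (0 : EuclideanSpace ℝ (Fin d)) r) ∂ν := by
        refine lintegral_congr fun y => ?_
        rw [h2 y, Measure.addHaar_ball_center]
    _ = volume (Metric.ball (0 : EuclideanSpace ℝ (Fin d)) r) * ν Set.univ := by
        rw [lintegral_const]
    _ < ⊤ := ENNReal.mul_lt_top measure_ball_lt_top (measure_lt_top ν _)

lemma inner_bound {α : ℝ} (hα1 : 1 < α) {G : Measure ℝ} {C₁ C₂ : ℝ}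
    (hG1 : ∀ x : ℝ, 0 < x →
      ∫⁻ m in {m : ℝ | x ≤ |m|}, ENNReal.ofReal |m| ∂G ≤ ENNReal.ofReal (C₁ * x ^ (1 - α)))
    (hG2 : ∀ x : ℝ, 0 < x →
      ∫⁻ m in Set.Icc (-x) x, ENNReal.ofReal (m ^ 2) ∂G ≤ ENNReal.ofReal (C₂ * x ^ (2 - α)))
    (a : ℝ) :
    ∫⁻ m, ENNReal.ofReal (min |m * a| ((m * a) ^ 2)) ∂G ≤
      ENNReal.ofReal ((max C₁ 0 + max C₂ 0) * |a| ^ α) := by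
  rcases eq_or_ne a 0 with rfl | ha
  · simp
  have habs : 0 < |a| := abs_pos.mpr ha
  set t : ℝ := |a|⁻¹ with htdef
  have ht : 0 < t := inv_pos.mpr habs
  have h1 : t ^ (1 - α) = |a| ^ (α - 1) := by
    rw [htdef, Real.inv_rpow (abs_nonneg a), ← Real.rpow_neg (abs_nonneg a)]
    congr 1; ring
  have h2 : |a| ^ (α - 1) * |a| = |a| ^ α := by
    nth_rewrite 2 [← Real.rpow_one |a|]
    rw [← Real.rpow_add habs, sub_add_cancel]
  have ha2 : a ^ 2 = |a| ^ (2 : ℝ) := by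
    rw [Real.rpow_two, sq_abs]
  have ht2 : t ^ (2 - α) = |a| ^ (α - 2) := by
    rw [htdef, Real.inv_rpow (abs_nonneg a), ← Real.rpow_neg (abs_nonneg a)]
    congr 1; ring
  have h3 : t ^ (2 - α) * a ^ 2 = |a| ^ α := by
    rw [ha2, ht2, ← Real.rpow_add habs, show α - 2 + 2 = α by ring]
  set S : Set ℝ := {m : ℝ | t ≤ |m|} with hSdef
  have hS : MeasurableSet S := measurableSet_le measurable_const continuous_abs.measurable
  have part1 : ∫⁻ m in S, ENNReal.ofReal (min |m * a| ((m * a) ^ 2)) ∂G ≤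
      ENNReal.ofReal (max C₁ 0 * |a| ^ α) := by
    have step : ∫⁻ m in S, ENNReal.ofReal (min |m * a| ((m * a) ^ 2)) ∂G ≤
        ∫⁻ m in S, ENNReal.ofReal |m| * ENNReal.ofReal |a| ∂G := by
      refine lintegral_mono fun m => ?_
      rw [← ENNReal.ofReal_mul (abs_nonneg m), ← abs_mul]
      exact ENNReal.ofReal_le_ofReal (min_le_left _ _)
    refine step.trans ?_
    rw [lintegral_mul_const' _ _ ENNReal.ofReal_ne_top]
    calc (∫⁻ m in S, ENNReal.ofReal |m| ∂G) * ENNReal.ofReal |a|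
        ≤ ENNReal.ofReal (C₁ * t ^ (1 - α)) * ENNReal.ofReal |a| :=
          mul_le_mul_left (hG1 t ht) _
      _ ≤ ENNReal.ofReal (max C₁ 0 * t ^ (1 - α)) * ENNReal.ofReal |a| :=
          mul_le_mul_left (ENNReal.ofReal_le_ofReal
            (mul_le_mul_of_nonneg_right (le_max_left _ _) (Real.rpow_nonneg ht.le _))) _
      _ = ENNReal.ofReal (max C₁ 0 * t ^ (1 - α) * |a|) := by
          rw [← ENNReal.ofReal_mul (by positivity)]
      _ = ENNReal.ofReal (max C₁ 0 * |a| ^ α) := by rw [mul_assoc, h1, h2]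
  have part2 : ∫⁻ m in Sᶜ, ENNReal.ofReal (min |m * a| ((m * a) ^ 2)) ∂G ≤
      ENNReal.ofReal (max C₂ 0 * |a| ^ α) := by
    have hsub : Sᶜ ⊆ Set.Icc (-t) t := by
      intro m hm
      simp only [hSdef, Set.mem_compl_iff, Set.mem_setOf_eq, not_le] at hm
      obtain ⟨hm1, hm2⟩ := abs_lt.mp hm
      exact ⟨hm1.le, hm2.le⟩
    have step : ∫⁻ m in Sᶜ, ENNReal.ofReal (min |m * a| ((m * a) ^ 2)) ∂G ≤
        ∫⁻ m in Set.Icc (-t) t, ENNReal.ofReal (m ^ 2) * ENNReal.ofReal (a ^ 2) ∂G := by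
      refine (lintegral_mono fun m => ?_).trans (lintegral_mono_set hsub)
      rw [← ENNReal.ofReal_mul (sq_nonneg m), ← mul_pow]
      exact ENNReal.ofReal_le_ofReal (min_le_right _ _)
    refine step.trans ?_
    rw [lintegral_mul_const' _ _ ENNReal.ofReal_ne_top]
    calc (∫⁻ m in Set.Icc (-t) t, ENNReal.ofReal (m ^ 2) ∂G) * ENNReal.ofReal (a ^ 2)
        ≤ ENNReal.ofReal (C₂ * t ^ (2 - α)) * ENNReal.ofReal (a ^ 2) :=
          mul_le_mul_left (hG2 t ht) _
      _ ≤ ENNReal.ofReal (max C₂ 0 * t ^ (2 - α)) * ENNReal.ofReal (a ^ 2) :=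
          mul_le_mul_left (ENNReal.ofReal_le_ofReal
            (mul_le_mul_of_nonneg_right (le_max_left _ _) (Real.rpow_nonneg ht.le _))) _
      _ = ENNReal.ofReal (max C₂ 0 * t ^ (2 - α) * a ^ 2) := by
          rw [← ENNReal.ofReal_mul (by positivity)]
      _ = ENNReal.ofReal (max C₂ 0 * |a| ^ α) := by rw [mul_assoc, h3]
  calc ∫⁻ m, ENNReal.ofReal (min |m * a| ((m * a) ^ 2)) ∂G
      = (∫⁻ m in S, ENNReal.ofReal (min |m * a| ((m * a) ^ 2)) ∂G) +
        ∫⁻ m in Sᶜ, ENNReal.ofReal (min |m * a| ((m * a) ^ 2)) ∂G :=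
        (lintegral_add_compl _ hS).symm
    _ ≤ ENNReal.ofReal (max C₁ 0 * |a| ^ α) + ENNReal.ofReal (max C₂ 0 * |a| ^ α) :=
        add_le_add part1 part2
    _ = ENNReal.ofReal ((max C₁ 0 + max C₂ 0) * |a| ^ α) := by
        rw [← ENNReal.ofReal_add (by positivity) (by positivity)]
        congr 1; ring

lemma measurable_measure_ball' (ν : Measure (EuclideanSpace ℝ (Fin d))) [SFinite ν] (r : ℝ) :
    Measurable fun x : EuclideanSpace ℝ (Fin d) => ν (Metric.ball x r) := by
  have hS : MeasurableSet {q : EuclideanSpace ℝ (Fin d) × EuclideanSpace ℝ (Fin d) |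
      dist q.2 q.1 < r} :=
    (isOpen_lt (by fun_prop) (by fun_prop)).measurableSet
  have h := measurable_measure_prodMk_left (ν := ν) hS
  convert h using 2 with x; rfl

lemma measurable_signed_ball' (μ : SignedMeasure (EuclideanSpace ℝ (Fin d))) (r : ℝ) :
    Measurable fun x : EuclideanSpace ℝ (Fin d) => μ (Metric.ball x r) := by
  have h1 := measurable_measure_ball' μ.toJordanDecomposition.posPart r
  have h2 := measurable_measure_ball' μ.toJordanDecomposition.negPart r
  have he : (fun x : EuclideanSpace ℝ (Fin d) => μ (Metric.ball x r)) = fun x =>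
      (μ.toJordanDecomposition.posPart (Metric.ball x r)).toReal -
      (μ.toJordanDecomposition.negPart (Metric.ball x r)).toReal := by
    ext x
    exact signed_apply μ Metric.isOpen_ball.measurableSet
  rw [he]
  exact h1.ennreal_toReal.sub h2.ennreal_toReal

lemma lintegral_rpow_le (μ : SignedMeasure (EuclideanSpace ℝ (Fin d))) {α : ℝ}
    (hα : 1 ≤ α) {r B : ℝ} (hr : 0 < r)
    (hB : (∫ x, |μ (Metric.ball x r)| ^ α) ≤ B) :
    ∫⁻ x, ENNReal.ofReal (|μ (Metric.ball x r)| ^ α) ≤ ENNReal.ofReal B := by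
  set ν₁ := μ.toJordanDecomposition.posPart with hν₁
  set ν₂ := μ.toJordanDecomposition.negPart with hν₂
  haveI i1 : IsFiniteMeasure ν₁ := μ.toJordanDecomposition.posPart_finite
  haveI i2 : IsFiniteMeasure ν₂ := μ.toJordanDecomposition.negPart_finite
  set M : ℝ := (ν₁ Set.univ).toReal + (ν₂ Set.univ).toReal with hMdef
  have hM0 : 0 ≤ M := by positivity
  have habs : ∀ s : Set (EuclideanSpace ℝ (Fin d)), MeasurableSet s →
      |μ s| ≤ (ν₁ s).toReal + (ν₂ s).toReal := by
    intro s hs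
    rw [signed_apply μ hs]
    have hp : (0:ℝ) ≤ (ν₁ s).toReal := ENNReal.toReal_nonneg
    have hn : (0:ℝ) ≤ (ν₂ s).toReal := ENNReal.toReal_nonneg
    rw [abs_sub_le_iff]
    constructor <;> linarith
  have hmono : ∀ s : Set (EuclideanSpace ℝ (Fin d)), MeasurableSet s → |μ s| ≤ M := by
    intro s hs
    refine (habs s hs).trans (add_le_add ?_ ?_) <;>
      exact ENNReal.toReal_mono (measure_ne_top _ _) (measure_mono (Set.subset_univ s))
  have hf_meas : Measurable fun x : EuclideanSpace ℝ (Fin d) => |μ (Metric.ball x r)| ^ α :=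
    ((measurable_signed_ball' μ r).abs).pow measurable_const
  have hnn : ∀ x : EuclideanSpace ℝ (Fin d), 0 ≤ |μ (Metric.ball x r)| ^ α := fun x =>
    Real.rpow_nonneg (abs_nonneg _) _
  have hfin : ∫⁻ x, ENNReal.ofReal (|μ (Metric.ball x r)| ^ α) < ⊤ := by
    have hb : ∀ x : EuclideanSpace ℝ (Fin d), ENNReal.ofReal (|μ (Metric.ball x r)| ^ α) ≤
        ENNReal.ofReal (M ^ (α - 1)) * (ν₁ (Metric.ball x r) + ν₂ (Metric.ball x r)) := by
      intro x
      set A : ℝ := |μ (Metric.ball x r)| with hAdef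
      have hA0 : 0 ≤ A := abs_nonneg _
      have hax : A ≤ (ν₁ (Metric.ball x r)).toReal + (ν₂ (Metric.ball x r)).toReal :=
        habs _ Metric.isOpen_ball.measurableSet
      have h1 : A ^ α ≤ M ^ (α - 1) *
          ((ν₁ (Metric.ball x r)).toReal + (ν₂ (Metric.ball x r)).toReal) := by
        rcases eq_or_lt_of_le hA0 with h0 | h0
        · rw [← h0, Real.zero_rpow (by linarith)]
          positivity
        · have e : A ^ α = A ^ (α - 1) * A := by
            rw [← Real.rpow_add_one h0.ne' (α - 1)]
            congr 1; ring
          rw [e]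
          have hAM : A ≤ M := hmono _ Metric.isOpen_ball.measurableSet
          have h2 : A ^ (α - 1) ≤ M ^ (α - 1) :=
            Real.rpow_le_rpow hA0 hAM (by linarith)
          exact mul_le_mul h2 hax hA0 (Real.rpow_nonneg hM0 _)
      calc ENNReal.ofReal (A ^ α)
          ≤ ENNReal.ofReal (M ^ (α - 1) *
            ((ν₁ (Metric.ball x r)).toReal + (ν₂ (Metric.ball x r)).toReal)) :=
            ENNReal.ofReal_le_ofReal h1
        _ = ENNReal.ofReal (M ^ (α - 1)) *
            ENNReal.ofReal ((ν₁ (Metric.ball x r)).toReal + (ν₂ (Metric.ball x r)).toReal) :=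
            ENNReal.ofReal_mul (Real.rpow_nonneg hM0 _)
        _ ≤ ENNReal.ofReal (M ^ (α - 1)) * (ν₁ (Metric.ball x r) + ν₂ (Metric.ball x r)) := by
            rw [ENNReal.ofReal_add ENNReal.toReal_nonneg ENNReal.toReal_nonneg]
            exact mul_le_mul_right
              (add_le_add ENNReal.ofReal_toReal_le ENNReal.ofReal_toReal_le) _
    have hmb1 : Measurable fun x : EuclideanSpace ℝ (Fin d) => ν₁ (Metric.ball x r) :=
      measurable_measure_ball' ν₁ r
    calc ∫⁻ x, ENNReal.ofReal (|μ (Metric.ball x r)| ^ α)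
        ≤ ∫⁻ x, ENNReal.ofReal (M ^ (α - 1)) * (ν₁ (Metric.ball x r) + ν₂ (Metric.ball x r)) :=
          lintegral_mono hb
      _ = ENNReal.ofReal (M ^ (α - 1)) *
          ∫⁻ x, (ν₁ (Metric.ball x r) + ν₂ (Metric.ball x r)) :=
          lintegral_const_mul' _ _ ENNReal.ofReal_ne_top
      _ = ENNReal.ofReal (M ^ (α - 1)) *
          ((∫⁻ x, ν₁ (Metric.ball x r)) + ∫⁻ x, ν₂ (Metric.ball x r)) := by
          rw [lintegral_add_left hmb1]
      _ < ⊤ := ENNReal.mul_lt_top ENNReal.ofReal_lt_top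
          (ENNReal.add_lt_top.mpr ⟨lintegral_ball_lt_top ν₁ r, lintegral_ball_lt_top ν₂ r⟩)
  have hint : Integrable (fun x : EuclideanSpace ℝ (Fin d) => |μ (Metric.ball x r)| ^ α) := by
    refine ⟨hf_meas.aestronglyMeasurable, ?_⟩
    rw [hasFiniteIntegral_iff_ofReal (ae_of_all _ hnn)]
    exact hfin
  rw [← ofReal_integral_eq_lintegral_ofReal hint (ae_of_all _ hnn)]
  exact ENNReal.ofReal_le_ofReal hB

lemma r_integral_lt_top {p q β : ℝ} (hp : 0 < p) (hpβ : p < β) (hβq : β < q) (C : ℝ) :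
    ∫⁻ r in Ioi (0:ℝ), ENNReal.ofReal (C * min (r ^ p) (r ^ q) * r ^ (-β - 1)) < ⊤ := by
  set K := max C 0 with hKdef
  rw [show Ioi (0:ℝ) = Ioc (0:ℝ) 1 ∪ Ioi 1 from (Ioc_union_Ioi_eq_Ioi zero_le_one).symm,
    lintegral_union measurableSet_Ioi (Ioc_disjoint_Ioi le_rfl)]
  have h1 : ∫⁻ r in Ioc (0:ℝ) 1, ENNReal.ofReal (C * min (r ^ p) (r ^ q) * r ^ (-β - 1)) < ⊤ := by
    have hb : ∀ r ∈ Ioc (0:ℝ) 1, ENNReal.ofReal (C * min (r ^ p) (r ^ q) * r ^ (-β - 1)) ≤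
        ENNReal.ofReal (K * r ^ (q - β - 1)) := by
      intro r hr
      apply ENNReal.ofReal_le_ofReal
      have hr0 : (0:ℝ) < r := hr.1
      have e : r ^ q * r ^ (-β - 1) = r ^ (q - β - 1) := by
        rw [← Real.rpow_add hr0]; congr 1; ring
      have h2' : min (r ^ p) (r ^ q) ≤ r ^ q := min_le_right _ _
      have h3' : (0:ℝ) ≤ r ^ (-β - 1) := Real.rpow_nonneg hr0.le _
      have h4' : (0:ℝ) ≤ min (r ^ p) (r ^ q) :=
        le_min (Real.rpow_nonneg hr0.le _) (Real.rpow_nonneg hr0.le _)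
      calc C * min (r ^ p) (r ^ q) * r ^ (-β - 1)
          ≤ K * min (r ^ p) (r ^ q) * r ^ (-β - 1) :=
            mul_le_mul_of_nonneg_right
              (mul_le_mul_of_nonneg_right (le_max_left _ _) h4') h3'
        _ ≤ K * r ^ q * r ^ (-β - 1) :=
            mul_le_mul_of_nonneg_right
              (mul_le_mul_of_nonneg_left h2' (le_max_right _ _)) h3'
        _ = K * r ^ (q - β - 1) := by rw [mul_assoc, e]
    calc ∫⁻ r in Ioc (0:ℝ) 1, ENNReal.ofReal (C * min (r ^ p) (r ^ q) * r ^ (-β - 1))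
        ≤ ∫⁻ r in Ioc (0:ℝ) 1, ENNReal.ofReal (K * r ^ (q - β - 1)) :=
          setLIntegral_mono' measurableSet_Ioc hb
      _ < ⊤ := by
          rw [← Measure.restrict_congr_set Ioo_ae_eq_Ioc]
          have hint : IntegrableOn (fun r : ℝ => K * r ^ (q - β - 1)) (Ioo (0:ℝ) 1) :=
            ((intervalIntegral.integrableOn_Ioo_rpow_iff one_pos).mpr (by linarith)).const_mul K
          exact hint.lintegral_lt_top
  have h2 : ∫⁻ r in Ioi (1:ℝ), ENNReal.ofReal (C * min (r ^ p) (r ^ q) * r ^ (-β - 1)) < ⊤ := by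
    have hb : ∀ r ∈ Ioi (1:ℝ), ENNReal.ofReal (C * min (r ^ p) (r ^ q) * r ^ (-β - 1)) ≤
        ENNReal.ofReal (K * r ^ (p - β - 1)) := by
      intro r hr
      apply ENNReal.ofReal_le_ofReal
      have hr0 : (0:ℝ) < r := lt_trans one_pos hr
      have e : r ^ p * r ^ (-β - 1) = r ^ (p - β - 1) := by
        rw [← Real.rpow_add hr0]; congr 1; ring
      have h2' : min (r ^ p) (r ^ q) ≤ r ^ p := min_le_left _ _
      have h3' : (0:ℝ) ≤ r ^ (-β - 1) := Real.rpow_nonneg hr0.le _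
      have h4' : (0:ℝ) ≤ min (r ^ p) (r ^ q) :=
        le_min (Real.rpow_nonneg hr0.le _) (Real.rpow_nonneg hr0.le _)
      calc C * min (r ^ p) (r ^ q) * r ^ (-β - 1)
          ≤ K * min (r ^ p) (r ^ q) * r ^ (-β - 1) :=
            mul_le_mul_of_nonneg_right
              (mul_le_mul_of_nonneg_right (le_max_left _ _) h4') h3'
        _ ≤ K * r ^ p * r ^ (-β - 1) :=
            mul_le_mul_of_nonneg_right
              (mul_le_mul_of_nonneg_left h2' (le_max_right _ _)) h3'
        _ = K * r ^ (p - β - 1) := by rw [mul_assoc, e]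
    calc ∫⁻ r in Ioi (1:ℝ), ENNReal.ofReal (C * min (r ^ p) (r ^ q) * r ^ (-β - 1))
        ≤ ∫⁻ r in Ioi (1:ℝ), ENNReal.ofReal (K * r ^ (p - β - 1)) :=
          setLIntegral_mono' measurableSet_Ioi hb
      _ < ⊤ := by
          have hint : IntegrableOn (fun r : ℝ => K * r ^ (p - β - 1)) (Ioi (1:ℝ)) :=
            ((integrableOn_Ioi_rpow_iff one_pos).mpr (by linarith)).const_mul K
          exact hint.lintegral_lt_top
  exact ENNReal.add_lt_top.mpr ⟨h1, h2⟩

end Stmt13Aux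

/-- if the probability measure `G` satisfies the tail first-moment bound
`∫_{|m| ≥ x} |m| dG ≤ C₁ x^{1-α}` and the truncated second-moment bound
`∫_{[-x,x]} m² dG ≤ C₂ x^{2-α}` for all `x > 0`, then for every `μ ∈ M_{α,β}`,
`∫ (|m μ(B(x,r))| ∧ (m μ(B(x,r)))²) r^{-β-1} dx dr G(dm) < ∞` (existence condition for the
compensated Poisson integral `J(μ)`). -/
theorem statement13 (d : ℕ) (hd : 1 ≤ d) (α β : ℝ) (hα1 : 1 < α) (hα2 : α ≤ 2) (hβ : 0 < β)
    (G : MeasureTheory.Measure ℝ) [MeasureTheory.IsProbabilityMeasure G] (C₁ C₂ : ℝ)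
    (hG1 : ∀ x : ℝ, 0 < x →
      ∫⁻ m in {m : ℝ | x ≤ |m|}, ENNReal.ofReal |m| ∂G ≤ ENNReal.ofReal (C₁ * x ^ (1 - α)))
    (hG2 : ∀ x : ℝ, 0 < x →
      ∫⁻ m in Set.Icc (-x) x, ENNReal.ofReal (m ^ 2) ∂G ≤ ENNReal.ofReal (C₂ * x ^ (2 - α)))
    (μ : MeasureTheory.SignedMeasure (EuclideanSpace ℝ (Fin d))) (hμ : MemM d α β μ) :
    ∫⁻ x : EuclideanSpace ℝ (Fin d), ∫⁻ r in Set.Ioi (0 : ℝ), ∫⁻ m : ℝ,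
      ENNReal.ofReal
        (min |m * μ (Metric.ball x r)| ((m * μ (Metric.ball x r)) ^ 2) * r ^ (-β - 1))
      ∂G < ⊤ := by
  classical
  obtain ⟨C, p, q, hp0, hpβ, hβq, hC⟩ := hμ
  set K : ℝ := max C₁ 0 + max C₂ 0 with hKdef
  have hK0 : (0:ℝ) ≤ K := by positivity
  set g : EuclideanSpace ℝ (Fin d) → ℝ → ℝ≥0∞ := fun x r =>
    ENNReal.ofReal (K * |μ (Metric.ball x r)| ^ α) * ENNReal.ofReal (r ^ (-β - 1)) with hgdef
  have hgm : Measurable fun pr : EuclideanSpace ℝ (Fin d) × ℝ => g pr.1 pr.2 := by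
    apply Measurable.mul (f := fun pr : EuclideanSpace ℝ (Fin d) × ℝ =>
      ENNReal.ofReal (K * |μ (Metric.ball pr.1 pr.2)| ^ α))
      (g := fun pr : EuclideanSpace ℝ (Fin d) × ℝ => ENNReal.ofReal (pr.2 ^ (-β - 1)))
    · exact (measurable_const.mul
        ((Stmt13Aux.measurable_signed_ball μ).abs.pow measurable_const)).ennreal_ofReal
    · exact (measurable_snd.pow measurable_const).ennreal_ofReal
  have step1 : (∫⁻ x : EuclideanSpace ℝ (Fin d), ∫⁻ r in Set.Ioi (0 : ℝ), ∫⁻ m : ℝ,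
      ENNReal.ofReal
        (min |m * μ (Metric.ball x r)| ((m * μ (Metric.ball x r)) ^ 2) * r ^ (-β - 1))
      ∂G) ≤ ∫⁻ x, ∫⁻ r in Set.Ioi (0:ℝ), g x r := by
    refine lintegral_mono fun x => ?_
    refine lintegral_mono_ae ?_
    rw [ae_restrict_iff' measurableSet_Ioi]
    filter_upwards with r hr
    have hrn : (0:ℝ) ≤ r ^ (-β - 1) := Real.rpow_nonneg (le_of_lt hr) _
    calc ∫⁻ m, ENNReal.ofReal
          (min |m * μ (Metric.ball x r)| ((m * μ (Metric.ball x r)) ^ 2) * r ^ (-β - 1)) ∂G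
        = (∫⁻ m, ENNReal.ofReal
            (min |m * μ (Metric.ball x r)| ((m * μ (Metric.ball x r)) ^ 2)) ∂G) *
            ENNReal.ofReal (r ^ (-β - 1)) := by
          simp_rw [ENNReal.ofReal_mul' hrn]
          rw [lintegral_mul_const' _ _ ENNReal.ofReal_ne_top]
      _ ≤ ENNReal.ofReal (K * |μ (Metric.ball x r)| ^ α) * ENNReal.ofReal (r ^ (-β - 1)) :=
          mul_le_mul_left (Stmt13Aux.inner_bound hα1 hG1 hG2 _) _
  have step2 : (∫⁻ x, ∫⁻ r in Set.Ioi (0:ℝ), g x r) =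
      ∫⁻ r in Set.Ioi (0:ℝ), (∫⁻ x, g x r) := by
    exact lintegral_lintegral_swap hgm.aemeasurable
  have step3 : (∫⁻ r in Set.Ioi (0:ℝ), (∫⁻ x, g x r)) ≤
      ∫⁻ r in Set.Ioi (0:ℝ),
        ENNReal.ofReal K * ENNReal.ofReal (C * min (r ^ p) (r ^ q) * r ^ (-β - 1)) := by
    refine lintegral_mono_ae ?_
    rw [ae_restrict_iff' measurableSet_Ioi]
    filter_upwards with r hr
    have hrpos : (0:ℝ) < r := hr
    have hx : (∫⁻ x, ENNReal.ofReal (|μ (Metric.ball x r)| ^ α)) ≤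
        ENNReal.ofReal (C * min (r ^ p) (r ^ q)) :=
      Stmt13Aux.lintegral_rpow_le μ hα1.le hrpos (hC r hrpos)
    calc ∫⁻ x, g x r
        = ENNReal.ofReal K * (∫⁻ x, ENNReal.ofReal (|μ (Metric.ball x r)| ^ α)) *
            ENNReal.ofReal (r ^ (-β - 1)) := by
          simp_rw [hgdef, ENNReal.ofReal_mul hK0]
          rw [lintegral_mul_const' _ _ ENNReal.ofReal_ne_top,
            lintegral_const_mul' _ _ ENNReal.ofReal_ne_top]
      _ ≤ ENNReal.ofReal K * ENNReal.ofReal (C * min (r ^ p) (r ^ q)) *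
            ENNReal.ofReal (r ^ (-β - 1)) :=
          mul_le_mul_left (mul_le_mul_right hx _) _
      _ = ENNReal.ofReal K * ENNReal.ofReal (C * min (r ^ p) (r ^ q) * r ^ (-β - 1)) := by
          rw [mul_assoc, ← ENNReal.ofReal_mul' (Real.rpow_nonneg hrpos.le _)]
  have step4 : (∫⁻ r in Set.Ioi (0:ℝ),
      ENNReal.ofReal K * ENNReal.ofReal (C * min (r ^ p) (r ^ q) * r ^ (-β - 1))) < ⊤ := by
    rw [lintegral_const_mul' _ _ ENNReal.ofReal_ne_top]
    exact ENNReal.mul_lt_top ENNReal.ofReal_lt_top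
      (Stmt13Aux.r_integral_lt_top hp0 hpβ hβq C)
  exact lt_of_le_of_lt (step1.trans (step2.le.trans step3)) step4
end
end

section
/- (Self-similarity of the limit stable field Z_α, expressed on its characteristic exponent.) Let d ≥ 1 be an integer, 1 < α ≤ 2, β > 0 and b ∈ [−1,1]. For θ ∈ ℝ and μ ∈ M_{α,β} define I_θ(μ) = ∫_{ℝ^d × (0,∞)} |θ μ(B(x,r))|^α (1 − i b sgn(θ μ(B(x,r))) tan(πα/2)) r^{−1−β} dr dx, a well-defined element of ℂ. Then for every μ ∈ M_{α,β}, every a > 0 and every θ ∈ ℝ, one has I_θ(μ_a) = a^{d−β} I_θ(μ), where μ_a(A) = μ(a^{−1}A). Equivalently, I_θ(μ_a) = I_{a^{(d−β)/α}θ}(μ). -/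
open MeasureTheory Filter Set
open scoped ENNReal Topology

noncomputable section

/-- The characteristic exponent `I_θ(μ) = ∫∫ |θ μ(B(x,r))|^α
(1 - i b sgn(θ μ(B(x,r))) tan(πα/2)) r^{-1-β} dr dx` of the stable field `Z_α`. -/
def Iexp (d : ℕ) (α β b θ : ℝ)
    (μ : MeasureTheory.SignedMeasure (EuclideanSpace ℝ (Fin d))) : ℂ :=
  ∫ x : EuclideanSpace ℝ (Fin d), ∫ r in Set.Ioi (0 : ℝ),
    (|θ * μ (Metric.ball x r)| ^ α * r ^ (-1 - β)) •
      (1 - Complex.I * Complex.ofReal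
        (b * Real.sign (θ * μ (Metric.ball x r)) * Real.tan (Real.pi * α / 2)))

lemma sign_mul_pos' {c : ℝ} (hc : 0 < c) (x : ℝ) : Real.sign (c * x) = Real.sign x := by
  rcases lt_trichotomy x 0 with h | rfl | h
  · rw [Real.sign_of_neg h, Real.sign_of_neg (mul_neg_of_pos_of_neg hc h)]
  · simp
  · rw [Real.sign_of_pos h, Real.sign_of_pos (mul_pos hc h)]

lemma ball_preimage' {d : ℕ} {a : ℝ} (ha : 0 < a) (x : EuclideanSpace ℝ (Fin d)) (r : ℝ) :
    (fun y : EuclideanSpace ℝ (Fin d) => a • y) ⁻¹' Metric.ball x r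
      = Metric.ball (a⁻¹ • x) (r / a) := by
  ext y
  simp only [Set.mem_preimage, Metric.mem_ball, dist_eq_norm]
  have h : a • y - x = a • (y - a⁻¹ • x) := by
    rw [smul_sub, smul_inv_smul₀ ha.ne']
  rw [h, norm_smul, Real.norm_eq_abs, abs_of_pos ha, lt_div_iff₀ ha, mul_comm]

/-- self-similarity of `Z_α` with index `(d-β)/α`, on its characteristic
exponent: for every `μ ∈ M_{α,β}`, `a > 0` and `θ ∈ ℝ`, with `μ_a = μ.map (a • ·)` (so
that `μ_a(A) = μ(a⁻¹A)`), one has `I_θ(μ_a) = a^{d-β} I_θ(μ)`; equivalently,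
`I_θ(μ_a) = I_{a^{(d-β)/α} θ}(μ)`. -/
theorem statement19 (d : ℕ) (hd : 1 ≤ d) (α β b : ℝ)
    (hα1 : 1 < α) (hα2 : α ≤ 2) (hβ : 0 < β) (hb : b ∈ Set.Icc (-1 : ℝ) 1)
    (μ : MeasureTheory.SignedMeasure (EuclideanSpace ℝ (Fin d))) (hμ : MemM d α β μ)
    (a : ℝ) (ha : 0 < a) (θ : ℝ) :
    Iexp d α β b θ (μ.map (fun x => a • x)) = (a ^ ((d : ℝ) - β)) • Iexp d α β b θ μ ∧
    Iexp d α β b θ (μ.map (fun x => a • x)) = Iexp d α β b (a ^ (((d : ℝ) - β) / α) * θ) μ := by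
  have hα0 : (0:ℝ) < α := lt_trans one_pos hα1
  set c : ℝ := a ^ (((d : ℝ) - β) / α) with hcdef
  have hcpos : 0 < c := Real.rpow_pos_of_pos ha _
  have hcα : c ^ α = a ^ ((d:ℝ) - β) := by
    rw [hcdef, ← Real.rpow_mul ha.le, div_mul_cancel₀ _ hα0.ne']
  -- second homogeneity identity
  have h2 : Iexp d α β b (c * θ) μ = (a ^ ((d : ℝ) - β)) • Iexp d α β b θ μ := by
    rw [Iexp, Iexp, ← integral_smul]
    congr 1
    funext x
    rw [← integral_smul]
    congr 1
    funext r
    rw [mul_assoc c θ _, abs_mul, abs_of_pos hcpos, Real.mul_rpow hcpos.le (abs_nonneg _),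
      sign_mul_pos' hcpos, ← hcα, smul_smul]
    congr 1
    ring
  -- main substitution
  have hmap : ∀ (x : EuclideanSpace ℝ (Fin d)) (r : ℝ),
      (μ.map (fun y => a • y)) (Metric.ball x r) = μ (Metric.ball (a⁻¹ • x) (r / a)) := by
    intro x r
    rw [VectorMeasure.map_apply _ (measurable_const_smul a) measurableSet_ball,
      ball_preimage' ha]
  have h1 : Iexp d α β b θ (μ.map (fun x => a • x)) = (a ^ ((d : ℝ) - β)) • Iexp d α β b θ μ := by
    rw [Iexp]
    simp only [hmap]
    have hinner : ∀ x : EuclideanSpace ℝ (Fin d),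
        (∫ r in Set.Ioi (0:ℝ),
          (|θ * μ (Metric.ball (a⁻¹ • x) (r / a))| ^ α * r ^ (-1 - β)) •
            (1 - Complex.I * Complex.ofReal
              (b * Real.sign (θ * μ (Metric.ball (a⁻¹ • x) (r / a))) * Real.tan (Real.pi * α / 2))))
        = (a * a ^ (-1 - β)) • ∫ s in Set.Ioi (0:ℝ),
          (|θ * μ (Metric.ball (a⁻¹ • x) s)| ^ α * s ^ (-1 - β)) •
            (1 - Complex.I * Complex.ofReal
              (b * Real.sign (θ * μ (Metric.ball (a⁻¹ • x) s)) * Real.tan (Real.pi * α / 2))) := by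
      intro x
      have key := integral_comp_mul_left_Ioi
        (fun r : ℝ => (|θ * μ (Metric.ball (a⁻¹ • x) (r / a))| ^ α * r ^ (-1 - β)) •
            (1 - Complex.I * Complex.ofReal
              (b * Real.sign (θ * μ (Metric.ball (a⁻¹ • x) (r / a))) * Real.tan (Real.pi * α / 2))))
        0 ha
      rw [mul_zero] at key
      have hL : (∫ r in Set.Ioi (0:ℝ),
          (|θ * μ (Metric.ball (a⁻¹ • x) (r / a))| ^ α * r ^ (-1 - β)) •
            (1 - Complex.I * Complex.ofReal
              (b * Real.sign (θ * μ (Metric.ball (a⁻¹ • x) (r / a))) * Real.tan (Real.pi * α / 2))))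
          = a • ∫ s in Set.Ioi (0:ℝ),
          (|θ * μ (Metric.ball (a⁻¹ • x) ((a * s) / a))| ^ α * (a * s) ^ (-1 - β)) •
            (1 - Complex.I * Complex.ofReal
              (b * Real.sign (θ * μ (Metric.ball (a⁻¹ • x) ((a * s) / a))) * Real.tan (Real.pi * α / 2))) := by
        rw [key, smul_smul, mul_inv_cancel₀ ha.ne', one_smul]
      rw [hL, ← integral_smul, ← integral_smul]
      refine setIntegral_congr_fun measurableSet_Ioi (fun s hs => ?_)
      have hs' : (0:ℝ) < s := hs
      simp only [mul_div_cancel_left₀ _ ha.ne']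
      rw [Real.mul_rpow ha.le hs'.le, smul_smul, smul_smul]
      congr 1
      ring
    simp only [hinner]
    rw [integral_smul]
    have houter := Measure.integral_comp_smul (μ := (volume : Measure (EuclideanSpace ℝ (Fin d))))
      (fun y : EuclideanSpace ℝ (Fin d) => ∫ s in Set.Ioi (0:ℝ),
          (|θ * μ (Metric.ball y s)| ^ α * s ^ (-1 - β)) •
            (1 - Complex.I * Complex.ofReal
              (b * Real.sign (θ * μ (Metric.ball y s)) * Real.tan (Real.pi * α / 2)))) a⁻¹
    rw [houter, Iexp, smul_smul]
    congr 1
    rw [finrank_euclideanSpace_fin, ← inv_pow, inv_inv, abs_of_pos (pow_pos ha d),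
      ← Real.rpow_natCast a d]
    nth_rewrite 1 [← Real.rpow_one a]
    rw [← Real.rpow_add ha, ← Real.rpow_add ha]
    congr 1
    ring
  exact ⟨h1, h1.trans h2.symm⟩
end
end
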